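/- arXiv:math/0612443 — 11 statements merged into one kernel-verified Lean document; each statement's English description precedes it below -/
import Mathlib

section
/- Let f be a square matrix with integer entries, p a prime, and k ≥ 1. Then Tr(f^(p^k)) ≡ Tr(f^(p^(k−1))) (mod p^k). -/
open Finset
namespace GaussTrace
variable {r : ℕ} (A : Matrix (Fin r) (Fin r) ℤ)

def pw (A : Matrix (Fin r) (Fin r) ℤ) (i : Fin r) : List (Fin r) → Fin r → ℤ
  | [], j => A i j
  | a :: l, j => A i a * pw A a l j

def cw (A : Matrix (Fin r) (Fin r) ℤ) (N : ℕ) [NeZero N] (h : ZMod N → Fin r) : ℤ :=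
  ∏ t : ZMod N, A (h t) (h (t + 1))

lemma pw_ofFn : ∀ (n : ℕ) (v : Fin (n + 1) → Fin r) (j : Fin r),
    pw A (v 0) (List.ofFn fun t : Fin n => v t.succ) j
      = (∏ t : Fin n, A (v t.castSucc) (v t.succ)) * A (v (Fin.last n)) j := by
  intro n
  induction n with
  | zero => intro v j; simp [pw, Fin.last]
  | succ n ih =>
      intro v j
      have h2 := ih (fun s => v s.succ) j
      simp only [List.ofFn_succ, pw, Fin.succ_zero_eq_one] at h2 ⊢
      rw [h2, Fin.prod_univ_succ, Fin.castSucc_zero, Fin.succ_zero_eq_one, Fin.succ_last,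
        mul_assoc]
      congr 2

lemma zmod_prod (n : ℕ) (F : ZMod (n + 1) → ℤ) :
    ∏ s : ZMod (n + 1), F s = ∏ t : Fin (n + 1), F ((t.val : ℕ) : ZMod (n + 1)) := by
  refine (Fintype.prod_bijective (fun t : Fin (n+1) => ((t.val : ℕ) : ZMod (n + 1)))
    ?_ _ _ (fun t => rfl)).symm
  constructor
  · intro a b hab
    have h := congrArg ZMod.val hab
    rw [ZMod.val_natCast_of_lt a.isLt, ZMod.val_natCast_of_lt b.isLt] at h
    exact Fin.ext h
  · intro s
    exact ⟨⟨s.val, ZMod.val_lt s⟩, ZMod.natCast_rightInverse s⟩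

lemma cw_eq (n : ℕ) (h : ZMod (n + 1) → Fin r) :
    cw A (n + 1) h =
      (∏ t : Fin n, A (h ((t.val : ℕ) : ZMod (n+1))) (h ((t.val + 1 : ℕ) : ZMod (n+1))))
        * A (h ((n : ℕ) : ZMod (n+1))) (h 0) := by
  rw [cw, zmod_prod n (fun s => A (h s) (h (s + 1))), Fin.prod_univ_castSucc]
  have e1 : ∀ t : Fin n,
      A (h (((t.castSucc : Fin (n+1)).val : ℕ) : ZMod (n+1)))
        (h ((((t.castSucc : Fin (n+1)).val : ℕ) : ZMod (n+1)) + 1))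
      = A (h ((t.val : ℕ) : ZMod (n+1))) (h ((t.val + 1 : ℕ) : ZMod (n+1))) := by
    intro t
    rw [Fin.coe_castSucc]
    have : ((t.val : ℕ) : ZMod (n+1)) + 1 = ((t.val + 1 : ℕ) : ZMod (n+1)) := by
      push_cast; ring
    rw [this]
  have e2 : A (h (((Fin.last n).val : ℕ) : ZMod (n+1)))
      (h ((((Fin.last n).val : ℕ) : ZMod (n+1)) + 1))
      = A (h ((n : ℕ) : ZMod (n+1))) (h 0) := by
    rw [Fin.val_last]
    have : ((n : ℕ) : ZMod (n+1)) + 1 = ((n + 1 : ℕ) : ZMod (n+1)) := by push_cast; ring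
    rw [this, ZMod.natCast_self]
  rw [e2, Finset.prod_congr rfl (fun t _ => e1 t)]

lemma pw_cw (n : ℕ) (h : ZMod (n + 1) → Fin r) :
    pw A (h 0) (List.ofFn fun t : Fin n => h ((t.val + 1 : ℕ) : ZMod (n + 1))) (h 0)
      = cw A (n + 1) h := by
  have key := pw_ofFn A n (fun t : Fin (n + 1) => h ((t.val : ℕ) : ZMod (n+1))) (h 0)
  simp only [Fin.val_zero, Nat.cast_zero, Fin.val_succ, Fin.coe_castSucc, Fin.val_last] at key
  rw [cw_eq]
  exact key


lemma ent (n : ℕ) (i j : Fin r) :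
    (A ^ (n + 1)) i j = ∑ g : Fin n → Fin r, pw A i (List.ofFn g) j := by
  induction n generalizing i with
  | zero =>
      rw [pow_one, Fintype.sum_unique]
      simp [pw]
  | succ n ih =>
      rw [pow_succ', Matrix.mul_apply]
      simp_rw [ih]
      rw [← Equiv.sum_comp (Fin.consEquiv (fun _ : Fin (n + 1) => Fin r))
        (fun g => pw A i (List.ofFn g) j)]
      rw [Fintype.sum_prod_type]
      refine Finset.sum_congr rfl fun a _ => ?_
      rw [Finset.mul_sum]
      refine Finset.sum_congr rfl fun g _ => ?_
      simp [Fin.consEquiv, List.ofFn_succ, pw]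

lemma trace_pow_succ (n : ℕ) :
    (A ^ (n + 1)).trace = ∑ h : ZMod (n + 1) → Fin r, cw A (n + 1) h := by
  rw [Matrix.trace]
  simp only [Matrix.diag]
  simp_rw [ent]
  have hq : ∑ x : Fin r, ∑ g : Fin n → Fin r, pw A x (List.ofFn g) x
      = ∑ q : Fin r × (Fin n → Fin r), pw A q.1 (List.ofFn q.2) q.1 :=
    (Fintype.sum_prod_type
      (f := fun q : Fin r × (Fin n → Fin r) => pw A q.1 (List.ofFn q.2) q.1)).symm
  rw [hq]
  refine Finset.sum_nbij'
    (i := fun x : Fin r × (Fin n → Fin r) => fun s : ZMod (n+1) =>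
      if hs : s.val = 0 then x.1 else x.2 ⟨s.val - 1, by have := ZMod.val_lt s; omega⟩)
    (j := fun h : ZMod (n+1) → Fin r => (h 0, fun t : Fin n => h ((t.val + 1 : ℕ))))
    ?_ ?_ ?_ ?_ ?_
  · intro x _; exact Finset.mem_univ _
  · intro h _; exact Finset.mem_univ _
  · -- left inverse
    intro x _
    have hv0 : (0 : ZMod (n+1)).val = 0 := ZMod.val_zero
    ext1
    · simp [hv0]
    · funext t
      have hvt : ((t.val + 1 : ℕ) : ZMod (n+1)).val = t.val + 1 :=
        ZMod.val_natCast_of_lt (by omega)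
      simp only [hvt]
      rw [dif_neg (by omega)]
      exact congrArg x.2 (Fin.ext (by simp))
  · -- right inverse
    intro h _
    funext s
    beta_reduce
    by_cases hs : s.val = 0
    · rw [dif_pos hs]
      have : s = 0 := (ZMod.val_eq_zero s).mp hs
      rw [this]
    · rw [dif_neg hs]
      have h1 : ((((⟨s.val - 1, by have := ZMod.val_lt s; omega⟩ : Fin n)).val + 1 : ℕ)
          : ZMod (n+1)) = s := by
        have : (s.val - 1) + 1 = s.val := by omega
        rw [show ((⟨s.val - 1, by have := ZMod.val_lt s; omega⟩ : Fin n)).val = s.val - 1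
          from rfl, this]
        exact ZMod.natCast_rightInverse s
      exact congrArg h h1
  · -- values
    intro x _
    beta_reduce
    set h : ZMod (n+1) → Fin r := fun s =>
      if hs : s.val = 0 then x.1 else x.2 ⟨s.val - 1, by have := ZMod.val_lt s; omega⟩ with hh
    have h0 : h 0 = x.1 := by simp [hh, ZMod.val_zero]
    have hsucc : (fun t : Fin n => h ((t.val + 1 : ℕ) : ZMod (n+1))) = x.2 := by
      funext t
      have hvt : ((t.val + 1 : ℕ) : ZMod (n+1)).val = t.val + 1 :=
        ZMod.val_natCast_of_lt (by omega)
      simp only [hh, hvt]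
      rw [dif_neg (by omega)]
      exact congrArg x.2 (Fin.ext (by simp))
    have := pw_cw A n h
    rw [h0, hsucc] at this
    exact this


section FreeSum

lemma free_sum {α : Type*} [DecidableEq α] (N : ℕ) [NeZero N] (T : ZMod N → α → α)
    (hT0 : ∀ h, T 0 h = h) (hTadd : ∀ a b h, T a (T b h) = T (a + b) h)
    (x : α → ℤ) (hx : ∀ a h, x (T a h) = x h) (D : ℤ) :
    ∀ S : Finset α, (∀ h ∈ S, ∀ a, T a h ∈ S) → (∀ h ∈ S, ∀ a, T a h = h → a = 0) →
      (∀ h ∈ S, D ∣ x h) → ((N : ℤ) * D) ∣ ∑ h ∈ S, x h := by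
  intro S
  induction S using Finset.strongInduction with
  | _ S ih =>
    intro hS hfree hD
    rcases S.eq_empty_or_nonempty with rfl | ⟨h0, hh0⟩
    · simp
    · set O : Finset α := Finset.image (fun a => T a h0) Finset.univ with hO
      have hOS : O ⊆ S := by
        intro y hy
        rw [hO, Finset.mem_image] at hy
        obtain ⟨a, _, rfl⟩ := hy
        exact hS h0 hh0 a
      have hinj : ∀ a ∈ (Finset.univ : Finset (ZMod N)), ∀ b ∈ Finset.univ,
          T a h0 = T b h0 → a = b := by
        intro a _ b _ hab
        have h1 : T (-b + a) h0 = h0 := by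
          rw [← hTadd, hab, hTadd, neg_add_cancel, hT0]
        have h2 := hfree h0 hh0 _ h1
        exact (neg_add_eq_zero.mp h2).symm
      have hsumO : ∑ h ∈ O, x h = (N : ℤ) * x h0 := by
        rw [hO, Finset.sum_image hinj]
        have : ∀ a : ZMod N, x (T a h0) = x h0 := fun a => hx a h0
        rw [Finset.sum_congr rfl (fun a _ => this a), Finset.sum_const, Finset.card_univ,
          ZMod.card, nsmul_eq_mul]
      have hmem0 : h0 ∈ O := by
        rw [hO, Finset.mem_image]
        exact ⟨0, Finset.mem_univ _, hT0 h0⟩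
      have hss : S \ O ⊂ S := by
        refine Finset.ssubset_iff_of_subset (Finset.sdiff_subset) |>.mpr ?_
        exact ⟨h0, hh0, by simp [hmem0]⟩
      have hkey := ih (S \ O) hss ?_ ?_ ?_
      · have hsplit : ∑ h ∈ S \ O, x h + ∑ h ∈ O, x h = ∑ h ∈ S, x h :=
          Finset.sum_sdiff hOS
        rw [← hsplit]
        refine dvd_add hkey ?_
        rw [hsumO]
        exact mul_dvd_mul_left _ (hD h0 hh0)
      · intro h hh a
        rw [Finset.mem_sdiff] at hh
        rw [Finset.mem_sdiff]
        refine ⟨hS h hh.1 a, ?_⟩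
        intro hmem
        rw [hO, Finset.mem_image] at hmem
        obtain ⟨b, _, hb⟩ := hmem
        refine hh.2 ?_
        rw [hO, Finset.mem_image]
        refine ⟨-a + b, Finset.mem_univ _, ?_⟩
        have h3 : T (-a) (T a h) = T (-a) (T b h0) := by rw [hb]
        rw [hTadd, hTadd, neg_add_cancel, hT0] at h3
        exact h3.symm
      · intro h hh a ha
        exact hfree h (Finset.mem_sdiff.mp hh).1 a ha
      · intro h hh
        exact hD h (Finset.mem_sdiff.mp hh).1

end FreeSum

section Rot

variable {N : ℕ}

/-- Rotation action on cyclic words. -/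
def rot (a : ZMod N) (h : ZMod N → Fin r) : ZMod N → Fin r := fun t => h (t + a)

lemma rot_zero (h : ZMod N → Fin r) : rot 0 h = h := by
  funext t; simp [rot]

lemma rot_rot (a b : ZMod N) (h : ZMod N → Fin r) : rot a (rot b h) = rot (a + b) h := by
  funext t; simp [rot, add_assoc]

lemma cw_rot [NeZero N] (a : ZMod N) (h : ZMod N → Fin r) :
    cw A N (rot a h) = cw A N h := by
  unfold cw rot
  rw [← Equiv.prod_comp (Equiv.addRight a) (fun t => A (h t) (h (t + 1)))]
  refine Finset.prod_congr rfl fun t _ => ?_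
  simp only [Equiv.coe_addRight]
  congr 2
  ring

lemma rot_nat_mul (a : ZMod N) (h : ZMod N → Fin r) (hfix : rot a h = h) :
    ∀ n : ℕ, rot ((n : ZMod N) * a) h = h := by
  intro n
  induction n with
  | zero => simpa using rot_zero h
  | succ n ih =>
      have : ((n + 1 : ℕ) : ZMod N) * a = a + (n : ZMod N) * a := by push_cast; ring
      rw [this, ← rot_rot, ih, hfix]

end Rot

section PGroup

variable {p : ℕ}

lemma exists_mul_eq (hp : p.Prime) (m : ℕ) (a : ZMod (p ^ (m + 1))) (ha : a ≠ 0) :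
    ∃ u : ZMod (p ^ (m + 1)),
      (u.val : ZMod (p ^ (m + 1))) * a = ((p ^ m : ℕ) : ZMod (p ^ (m + 1))) := by
  haveI : NeZero p := ⟨hp.ne_zero⟩
  have hdN : Nat.gcd a.val (p ^ (m + 1)) ∣ p ^ (m + 1) := Nat.gcd_dvd_right _ _
  obtain ⟨j, hj, hdj⟩ := (Nat.dvd_prime_pow hp).mp hdN
  have hjm : j ≤ m := by
    by_contra hc
    have hjeq : j = m + 1 := by omega
    have hNdvd : p ^ (m + 1) ∣ a.val := by
      have h5 : Nat.gcd a.val (p ^ (m + 1)) = p ^ (m + 1) := by rw [hdj, hjeq]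
      have h7 := Nat.gcd_dvd_left a.val (p ^ (m + 1))
      rwa [h5] at h7
    have hlt := ZMod.val_lt a
    have hval0 : a.val = 0 := Nat.eq_zero_of_dvd_of_lt hNdvd hlt
    exact ha ((ZMod.val_eq_zero a).mp hval0)
  have hbz := Nat.gcd_eq_gcd_ab a.val (p ^ (m + 1))
  have hcast : ((Nat.gcd a.val (p ^ (m + 1)) : ℕ) : ZMod (p ^ (m + 1)))
      = ((Nat.gcdA a.val (p ^ (m + 1)) : ℤ) : ZMod (p ^ (m + 1))) * a := by
    have h1 := congrArg (fun z : ℤ => ((z : ℤ) : ZMod (p ^ (m + 1)))) hbz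
    push_cast at h1
    rw [show ((p : ZMod (p ^ (m + 1))) ^ (m + 1)) = 0 by
      rw [← Nat.cast_pow, ZMod.natCast_self], zero_mul, add_zero] at h1
    rw [show ((a.val : ℕ) : ZMod (p ^ (m + 1))) = a from ZMod.natCast_rightInverse a] at h1
    rw [h1]; ring
  refine ⟨((Nat.gcdA a.val (p ^ (m + 1)) : ℤ) : ZMod (p ^ (m + 1)))
    * ((p ^ (m - j) : ℕ) : ZMod (p ^ (m + 1))), ?_⟩
  rw [show ∀ u : ZMod (p ^ (m + 1)), ((u.val : ℕ) : ZMod (p ^ (m + 1))) = u from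
    fun u => ZMod.natCast_rightInverse u]
  have h6 : ((p ^ m : ℕ) : ZMod (p ^ (m + 1)))
      = ((p ^ (m - j) : ℕ) : ZMod (p ^ (m + 1)))
        * ((Nat.gcd a.val (p ^ (m + 1)) : ℕ) : ZMod (p ^ (m + 1))) := by
    rw [hdj, ← Nat.cast_mul, ← pow_add]
    congr 2
    omega
  rw [h6, hcast]
  ring

end PGroup

section Fixed

variable {p : ℕ} [NeZero p]

/-- The reduction map `ZMod (p^(m+1)) → ZMod (p^m)`. -/
noncomputable def cmap (p m : ℕ) : ZMod (p ^ (m + 1)) →+* ZMod (p ^ m) :=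
  ZMod.castHom (pow_dvd_pow p (Nat.le_succ m)) (ZMod (p ^ m))

lemma prod_comp_cast (m : ℕ) (F : ZMod (p ^ m) → ℤ) :
    ∏ t : ZMod (p ^ (m + 1)), F (cmap p m t) = (∏ a : ZMod (p ^ m), F a) ^ p := by
  set e : ZMod (p ^ m) × Fin p → ZMod (p ^ (m + 1)) :=
    fun x => ((x.1.val + x.2.val * p ^ m : ℕ) : ZMod (p ^ (m + 1))) with he
  have hval : ∀ x : ZMod (p ^ m) × Fin p,
      (e x).val = x.1.val + x.2.val * p ^ m := by
    intro x
    refine ZMod.val_natCast_of_lt ?_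
    have h1 : x.1.val < p ^ m := ZMod.val_lt x.1
    have h2 : x.2.val < p := x.2.isLt
    calc x.1.val + x.2.val * p ^ m < p ^ m + x.2.val * p ^ m := by omega
      _ = (x.2.val + 1) * p ^ m := by ring
      _ ≤ p * p ^ m := Nat.mul_le_mul_right _ (by omega)
      _ = p ^ (m + 1) := by rw [pow_succ]; ring
  have hinj : Function.Injective e := by
    intro x y hxy
    have hv := congrArg ZMod.val hxy
    rw [hval x, hval y] at hv
    have h1 : x.1.val = y.1.val := by
      have := congrArg (· % p ^ m) hv
      simpa [Nat.add_mul_mod_self_right, Nat.mod_eq_of_lt (ZMod.val_lt x.1),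
        Nat.mod_eq_of_lt (ZMod.val_lt y.1)] using this
    have h2 : x.2.val = y.2.val := by
      have hMpos : 0 < p ^ m := Nat.pow_pos (Nat.pos_of_ne_zero (NeZero.ne p))
      have : x.2.val * p ^ m = y.2.val * p ^ m := by omega
      exact Nat.eq_of_mul_eq_mul_right hMpos this
    have : x.1 = y.1 := by
      have := congrArg (fun v : ℕ => ((v : ℕ) : ZMod (p ^ m))) h1
      simpa [ZMod.natCast_rightInverse x.1, ZMod.natCast_rightInverse y.1] using this
    exact Prod.ext this (Fin.ext h2)
  have hbij : Function.Bijective e := by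
    rw [Fintype.bijective_iff_injective_and_card]
    refine ⟨hinj, ?_⟩
    rw [Fintype.card_prod, ZMod.card, ZMod.card, Fintype.card_fin, pow_succ]
  have hce : ∀ x : ZMod (p ^ m) × Fin p, cmap p m (e x) = x.1 := by
    intro x
    rw [he]
    simp only [map_natCast]
    rw [Nat.cast_add, Nat.cast_mul, ZMod.natCast_self, mul_zero, add_zero]
    exact ZMod.natCast_rightInverse x.1
  rw [← Fintype.prod_bijective e hbij (fun x => F (cmap p m (e x)))
    (fun t => F (cmap p m t)) (fun x => rfl)]
  have : ∀ x : ZMod (p ^ m) × Fin p, F (cmap p m (e x)) = F x.1 :=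
    fun x => congrArg F (hce x)
  rw [Fintype.prod_congr _ _ this, Fintype.prod_prod_type]
  simp only [Finset.prod_const, Finset.card_univ, Fintype.card_fin]
  rw [Finset.prod_pow]

lemma cw_lift (m : ℕ) (g : ZMod (p ^ m) → Fin r) :
    cw A (p ^ (m + 1)) (fun t => g (cmap p m t)) = (cw A (p ^ m) g) ^ p := by
  unfold cw
  rw [← prod_comp_cast m (fun a => A (g a) (g (a + 1)))]
  refine Finset.prod_congr rfl fun t _ => ?_
  beta_reduce
  have h9 : cmap p m (t + 1) = cmap p m t + 1 := by rw [map_add, map_one]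
  rw [h9]

lemma fixed_iter (m : ℕ)
    (h : ZMod (p ^ (m + 1)) → Fin r)
    (hfix : rot ((p ^ m : ℕ) : ZMod (p ^ (m + 1))) h = h) (t : ZMod (p ^ (m + 1))) :
    h t = h ((t.val % p ^ m : ℕ)) := by
  have key : ∀ q : ℕ, rot ((q * p ^ m : ℕ) : ZMod (p ^ (m + 1))) h = h := by
    intro q
    have h1 := rot_nat_mul _ h hfix q
    have h2 : ((q * p ^ m : ℕ) : ZMod (p ^ (m + 1)))
        = (q : ZMod (p ^ (m + 1))) * ((p ^ m : ℕ) : ZMod (p ^ (m + 1))) := by push_cast; ring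
    rwa [h2]
  have ht : t = ((t.val % p ^ m : ℕ) : ZMod (p ^ (m + 1)))
      + (((t.val / p ^ m) * p ^ m : ℕ) : ZMod (p ^ (m + 1))) := by
    rw [← Nat.cast_add]
    rw [show t.val % p ^ m + t.val / p ^ m * p ^ m = t.val from Nat.mod_add_div' _ _]
    exact (ZMod.natCast_rightInverse t).symm
  conv_lhs => rw [ht]
  exact congrFun (key (t.val / p ^ m)) _

lemma main_step (hp : p.Prime) (m : ℕ) (φ : ℤ → ℤ) (D : ℤ) (hD : ∀ y : ℤ, D ∣ φ y) :
    ((p : ℤ) ^ (m + 1) * D) ∣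
      (∑ h : ZMod (p ^ (m + 1)) → Fin r, φ (cw A (p ^ (m + 1)) h))
        - ∑ g : ZMod (p ^ m) → Fin r, φ ((cw A (p ^ m) g) ^ p) := by
  classical
  set M : ZMod (p ^ (m + 1)) := ((p ^ m : ℕ) : ZMod (p ^ (m + 1))) with hM
  rw [← Finset.sum_filter_add_sum_filter_not Finset.univ (fun h => rot M h = h)
    (fun h => φ (cw A (p ^ (m + 1)) h))]
  have hfixed : ∑ h ∈ Finset.univ.filter (fun h => rot M h = h), φ (cw A (p ^ (m + 1)) h)
      = ∑ g : ZMod (p ^ m) → Fin r, φ ((cw A (p ^ m) g) ^ p) := by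
    refine Finset.sum_nbij'
      (i := fun h => fun b : ZMod (p ^ m) => h ((b.val : ℕ)))
      (j := fun g => fun t => g (cmap p m t)) ?_ ?_ ?_ ?_ ?_
    · intro h _; exact Finset.mem_univ _
    · -- lift g is fixed
      intro g _
      rw [Finset.mem_filter]
      refine ⟨Finset.mem_univ _, ?_⟩
      funext t
      show g (cmap p m (t + M)) = g (cmap p m t)
      rw [map_add, hM, map_natCast, ZMod.natCast_self, add_zero]
    · -- left inverse : lift (res h) = h
      intro h hh
      rw [Finset.mem_filter] at hh
      funext t
      show h (((cmap p m t).val : ℕ)) = h t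
      have h1 : cmap p m t = ((t.val : ℕ) : ZMod (p ^ m)) := by
        conv_lhs => rw [← ZMod.natCast_rightInverse t]
        rw [map_natCast]
      rw [h1, ZMod.val_natCast]
      exact (fixed_iter m h hh.2 t).symm
    · -- right inverse : res (lift g) = g
      intro g _
      funext b
      show g (cmap p m ((b.val : ℕ))) = g b
      rw [map_natCast, ZMod.natCast_rightInverse b]
    · -- values
      intro h hh
      rw [Finset.mem_filter] at hh
      congr 1
      have hlift : (fun t => (fun b : ZMod (p ^ m) => h ((b.val : ℕ))) (cmap p m t)) = h := by
        funext t
        show h (((cmap p m t).val : ℕ)) = h t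
        have h1 : cmap p m t = ((t.val : ℕ) : ZMod (p ^ m)) := by
          conv_lhs => rw [← ZMod.natCast_rightInverse t]
          rw [map_natCast]
        rw [h1, ZMod.val_natCast]
        exact (fixed_iter m h hh.2 t).symm
      rw [← cw_lift A m (fun b => h ((b.val : ℕ))), hlift]
  rw [hfixed, add_sub_cancel_left]
  have hfree := free_sum (p ^ (m + 1)) (rot (N := p ^ (m + 1)) (r := r)) rot_zero rot_rot
    (fun h => φ (cw A (p ^ (m + 1)) h))
    (fun a h => congrArg φ (cw_rot A a h)) D
    (Finset.univ.filter (fun h => ¬ rot M h = h)) ?_ ?_ ?_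
  · have hcast : ((p ^ (m + 1) : ℕ) : ℤ) * D = (p : ℤ) ^ (m + 1) * D := by push_cast; ring
    rwa [hcast] at hfree
  · intro h hh a
    rw [Finset.mem_filter] at hh ⊢
    refine ⟨Finset.mem_univ _, ?_⟩
    intro hcon
    refine hh.2 ?_
    have h1 : rot (-a) (rot M (rot a h)) = rot (-a) (rot a h) := by rw [hcon]
    rw [rot_rot, rot_rot, rot_rot, neg_add_cancel, rot_zero] at h1
    rwa [show -a + M + a = M by ring] at h1
  · intro h hh a ha
    by_contra hane
    rw [Finset.mem_filter] at hh
    obtain ⟨u, hu⟩ := exists_mul_eq hp m a hane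
    have h2 := rot_nat_mul a h ha u.val
    rw [show ((u.val : ℕ) : ZMod (p ^ (m + 1))) * a = M from hu] at h2
    exact hh.2 h2
  · intro h _
    exact hD _

end Fixed

section Final

variable {p : ℕ}

lemma gauss_int (hp : p.Prime) (e : ℕ) (y : ℤ) :
    (p : ℤ) ^ (e + 1) ∣ y ^ p ^ (e + 1) - y ^ p ^ e := by
  haveI : Fact p.Prime := ⟨hp⟩
  have hF : ((p : ℕ) : ℤ) ∣ y ^ p - y := by
    have h0 : ((y ^ p - y : ℤ) : ZMod p) = 0 := by
      push_cast
      rw [ZMod.pow_card]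
      ring
    exact (ZMod.intCast_zmod_eq_zero_iff_dvd _ _).mp h0
  have key := dvd_sub_pow_of_dvd_sub (R := ℤ) (p := p) hF e
  have h1 : (y ^ p) ^ p ^ e = y ^ p ^ (e + 1) := by
    rw [← pow_mul, ← pow_succ']
  rwa [h1] at key

lemma q_dvd [NeZero p] (hp : p.Prime) :
    ∀ m e : ℕ, (p : ℤ) ^ (m + e + 1) ∣
      ∑ g : ZMod (p ^ m) → Fin r,
        ((cw A (p ^ m) g) ^ p ^ (e + 1) - (cw A (p ^ m) g) ^ p ^ e) := by
  intro m
  induction m with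
  | zero =>
      intro e
      rw [zero_add]
      exact Finset.dvd_sum fun g _ => gauss_int hp e _
  | succ m ih =>
      intro e
      have h1 := main_step A hp m (fun y => y ^ p ^ (e + 1) - y ^ p ^ e)
        ((p : ℤ) ^ (e + 1)) (fun y => gauss_int hp e y)
      beta_reduce at h1
      have h2 := ih (e + 1)
      have h3 : ∀ g : ZMod (p ^ m) → Fin r,
          ((cw A (p ^ m) g ^ p) ^ p ^ (e + 1) - (cw A (p ^ m) g ^ p) ^ p ^ e)
            = ((cw A (p ^ m) g) ^ p ^ (e + 2) - (cw A (p ^ m) g) ^ p ^ (e + 1)) := by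
        intro g
        rw [← pow_mul, ← pow_mul, ← pow_succ', ← pow_succ']
      rw [Finset.sum_congr rfl (fun g _ => h3 g)] at h1
      have hmod : (p : ℤ) ^ (m + 1) * (p : ℤ) ^ (e + 1) = (p : ℤ) ^ (m + 1 + e + 1) := by
        rw [← pow_add]; ring_nf
      rw [hmod] at h1
      have h2' : (p : ℤ) ^ (m + 1 + e + 1) ∣
          ∑ g : ZMod (p ^ m) → Fin r,
            ((cw A (p ^ m) g) ^ p ^ (e + 2) - (cw A (p ^ m) g) ^ p ^ (e + 1)) := by
        have heq : m + (e + 1) + 1 = m + 1 + e + 1 := by ring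
        rw [heq] at h2
        exact h2
      have h4 := dvd_add h1 h2'
      rwa [sub_add_cancel] at h4

lemma trace_pow_all (N : ℕ) [NeZero N] :
    (A ^ N).trace = ∑ h : ZMod N → Fin r, cw A N h := by
  obtain ⟨n, rfl⟩ := Nat.exists_eq_succ_of_ne_zero (NeZero.ne N)
  exact trace_pow_succ A n

end Final

end GaussTrace

theorem stmt_1 (r : ℕ) (f : Matrix (Fin r) (Fin r) ℤ)
    (p : ℕ) (hp : p.Prime) (k : ℕ) (hk : 1 ≤ k) :
    (f ^ (p ^ k)).trace ≡ (f ^ (p ^ (k - 1))).trace [ZMOD (p : ℤ) ^ k] := by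
  haveI : NeZero p := ⟨hp.ne_zero⟩
  obtain ⟨m, rfl⟩ : ∃ m, k = m + 1 := ⟨k - 1, by omega⟩
  rw [show m + 1 - 1 = m from rfl]
  have key : (p : ℤ) ^ (m + 1) ∣ (f ^ p ^ (m + 1)).trace - (f ^ p ^ m).trace := by
    rw [GaussTrace.trace_pow_all f (p ^ (m + 1)), GaussTrace.trace_pow_all f (p ^ m)]
    have h1 := GaussTrace.main_step f hp m (fun y => y) 1 (fun y => one_dvd y)
    rw [mul_one] at h1
    have h2 := GaussTrace.q_dvd f hp m 0
    simp only [pow_one, pow_zero] at h2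
    have h2' : (p : ℤ) ^ (m + 1) ∣
        ∑ g : ZMod (p ^ m) → Fin r,
          ((GaussTrace.cw f (p ^ m) g) ^ p - GaussTrace.cw f (p ^ m) g) := by
      have : m + 0 + 1 = m + 1 := by ring
      rwa [this, (by norm_num : p ^ 1 = p)] at h2
    have hsplit :
        (∑ h : ZMod (p ^ (m + 1)) → Fin r, GaussTrace.cw f (p ^ (m + 1)) h)
          - ∑ g : ZMod (p ^ m) → Fin r, GaussTrace.cw f (p ^ m) g
        = ((∑ h : ZMod (p ^ (m + 1)) → Fin r, GaussTrace.cw f (p ^ (m + 1)) h)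
            - ∑ g : ZMod (p ^ m) → Fin r, (GaussTrace.cw f (p ^ m) g) ^ p)
          + ∑ g : ZMod (p ^ m) → Fin r,
              ((GaussTrace.cw f (p ^ m) g) ^ p - GaussTrace.cw f (p ^ m) g) := by
      rw [Finset.sum_sub_distrib]
      ring
    rw [hsplit]
    exact dvd_add h1 h2'
  have := Int.modEq_iff_dvd.mpr key
  exact this.symm
end

section
/- Let f be a square matrix with integer entries, p a prime, and let k ≥ s ≥ 1. Then Tr(f^(p^k)) ≡ Tr(f^(p^(k−s))) (mod p^(k−s+1)). -/
open Finset
open Fin.CommRing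

namespace TraceCong

variable {r : ℕ}

/-! ### Walk weights and the trace formula -/

private def chain {n : ℕ} (i j : Fin r) (w : Fin n → Fin r) : Fin (n+2) → Fin r :=
  Fin.cons i (Fin.snoc w j)

private def cw {n : ℕ} [NeZero n] (A : Matrix (Fin r) (Fin r) ℤ) (v : Fin n → Fin r) : ℤ :=
  ∏ i : Fin n, A (v i) (v (i + 1))

variable (A : Matrix (Fin r) (Fin r) ℤ)

private lemma pow_apply_walk (n : ℕ) (i j : Fin r) :
    (A ^ (n+1)) i j = ∑ w : Fin n → Fin r,
      ∏ t : Fin (n+1), A (chain i j w t.castSucc) (chain i j w t.succ) := by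
  induction n generalizing i with
  | zero =>
    rw [pow_one]
    simp only [Fin.prod_univ_succ, Fin.prod_univ_zero, mul_one, chain]
    rw [Finset.sum_eq_single (default : Fin 0 → Fin r)]
    · simp only [Fin.castSucc_zero, Fin.cons_zero, Fin.cons_succ]
      rw [show (0 : Fin 1) = Fin.last 0 from rfl, Fin.snoc_last]
    · intro b _ hb; exact absurd (Subsingleton.elim b default) hb
    · intro h; exact absurd (Finset.mem_univ _) h
  | succ n ih =>
    rw [pow_succ', Matrix.mul_apply]
    simp_rw [ih, Finset.mul_sum]
    rw [← Equiv.sum_comp (Fin.consEquiv fun _ => Fin r)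
        (fun w' => ∏ t : Fin (n+2), A (chain i j w' t.castSucc) (chain i j w' t.succ)),
      Fintype.sum_prod_type]
    refine Finset.sum_congr rfl fun x _ => Finset.sum_congr rfl fun w _ => ?_
    have hce : ((Fin.consEquiv fun _ => Fin r) (x, w)) = Fin.cons x w := rfl
    rw [hce]
    have hch : chain i j (Fin.cons x w) = Fin.cons i (chain x j w) := by
      unfold chain
      rw [← Fin.cons_snoc_eq_snoc_cons]
    rw [hch]
    conv_rhs => rw [Fin.prod_univ_succ]
    simp only [Fin.castSucc_zero, Fin.cons_zero, Fin.cons_succ, ← Fin.succ_castSucc, chain]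

private lemma trace_pow_walk (n : ℕ) :
    (A ^ (n+1)).trace = ∑ v : Fin (n+1) → Fin r, cw A v := by
  rw [Matrix.trace]
  simp only [Matrix.diag, pow_apply_walk]
  rw [← Equiv.sum_comp (Fin.consEquiv fun _ => Fin r) (cw A), Fintype.sum_prod_type]
  refine Finset.sum_congr rfl fun i _ => Finset.sum_congr rfl fun w _ => ?_
  have hce : ((Fin.consEquiv fun _ => Fin r) (i, w)) = Fin.cons i w := rfl
  rw [hce, cw]
  unfold chain
  refine Finset.prod_congr rfl fun t _ => ?_
  congr 1
  · refine Fin.cases ?_ (fun u => ?_) t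
    · rw [Fin.castSucc_zero]; rfl
    · rw [← Fin.succ_castSucc, Fin.cons_succ, Fin.snoc_castSucc, Fin.cons_succ]
  · rw [Fin.cons_succ]
    refine Fin.lastCases ?_ (fun u => ?_) t
    · rw [Fin.snoc_last, Fin.last_add_one, Fin.cons_zero]
    · rw [Fin.snoc_castSucc, Fin.coeSucc_eq_succ, Fin.cons_succ]

private lemma trace_pow_walk' (n : ℕ) (hn : 0 < n) [NeZero n] :
    (A ^ n).trace = ∑ v : Fin n → Fin r, cw A v := by
  obtain ⟨n', rfl⟩ : ∃ n', n = n' + 1 := ⟨n - 1, by omega⟩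
  exact trace_pow_walk A n'

/-! ### Rotations -/

private def rot {n : ℕ} [NeZero n] (t : Fin n) (w : Fin n → Fin r) : Fin n → Fin r :=
  fun i => w (i + t)

private def Fx {n : ℕ} [NeZero n] (w : Fin n → Fin r) (x : Fin n) : Prop :=
  ∀ i, w (i + x) = w i

private instance {n : ℕ} [NeZero n] (x : Fin n) :
    DecidablePred (fun w : Fin n → Fin r => Fx w x) :=
  fun _ => decidable_of_iff (∀ i, _) Iff.rfl

private lemma cw_rot {n : ℕ} [NeZero n] (t : Fin n) (w : Fin n → Fin r) :
    cw A (rot t w) = cw A w := by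
  rw [cw, cw, ← Equiv.prod_comp (Equiv.addRight t) (fun i => A (w i) (w (i + 1)))]
  refine Finset.prod_congr rfl fun i _ => ?_
  simp only [Equiv.coe_addRight, rot]
  congr 2
  ring

private lemma fx_mul {n : ℕ} [NeZero n] (w : Fin n → Fin r) (t : Fin n) (h : Fx w t) (c : ℕ) :
    Fx w ((c : Fin n) * t) := by
  induction c with
  | zero => intro i; simp
  | succ c ih =>
    intro i
    have h1 : ((c+1 : ℕ) : Fin n) * t = (c : Fin n) * t + t := by push_cast; ring
    have e : i + ((c : Fin n) * t + t) = (i + t) + (c : Fin n) * t := by ring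
    rw [h1, e, ih (i + t), h i]

private lemma fx_boost {p m : ℕ} (hp : p.Prime) (hm : 1 ≤ m) [NeZero (p ^ m)]
    (w : Fin (p ^ m) → Fin r) (t : Fin (p ^ m)) (ht : t ≠ 0) (hfx : Fx w t) :
    Fx w ((p ^ (m - 1) : ℕ) : Fin (p ^ m)) := by
  have hn1 : 1 < p ^ m := Nat.one_lt_pow (by omega) hp.one_lt
  have htv : t.val ≠ 0 := fun h => ht (Fin.ext (by simpa using h))
  set i := (t.val).factorization p with hi
  set u := t.val / p ^ i with hu
  have hdecomp : p ^ i * u = t.val := Nat.ordProj_mul_ordCompl_eq_self t.val p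
  have hpu : ¬ p ∣ u := Nat.not_dvd_ordCompl hp htv
  have him : i < m := by
    have h1 : p ^ i ≤ t.val := Nat.ordProj_le p htv
    have h2 : t.val < p ^ m := t.isLt
    exact (Nat.pow_lt_pow_iff_right hp.one_lt).mp (lt_of_le_of_lt h1 h2)
  have hcop : u.Coprime (p ^ m) :=
    Nat.Coprime.pow_right _ ((hp.coprime_iff_not_dvd.mpr hpu).symm)
  obtain ⟨c, -, hc⟩ := Nat.exists_mul_mod_eq_one_of_coprime hcop hn1
  have key : ((p ^ (m - 1 - i) * c : ℕ) : Fin (p ^ m)) * t = ((p ^ (m - 1) : ℕ) : Fin (p ^ m)) := by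
    apply Fin.ext
    rw [Fin.val_mul, Fin.val_natCast, Fin.val_natCast, Nat.mod_mul_mod]
    have hexp : m - 1 - i + i = m - 1 := by omega
    have e1 : p ^ (m - 1 - i) * c * t.val = p ^ (m - 1) * (u * c) := by
      rw [← hdecomp]
      calc p ^ (m-1-i) * c * (p ^ i * u) = p ^ (m-1-i) * p ^ i * (u * c) := by ring
        _ = p ^ (m-1) * (u * c) := by rw [← pow_add, hexp]
    rw [e1]
    obtain ⟨q, hq⟩ : ∃ q, u * c = q * (p ^ m) + 1 := by
      refine ⟨u * c / (p ^ m), ?_⟩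
      have h3 := Nat.div_add_mod (u * c) (p ^ m)
      rw [mul_comm (u * c / p ^ m) (p ^ m)]
      omega
    rw [hq]
    have e2 : p ^ (m - 1) * (q * p ^ m + 1) = p ^ (m - 1) + (p ^ (m-1) * q) * p ^ m := by ring
    rw [e2, Nat.add_mul_mod_self_right, Nat.mod_eq_of_lt]
    exact Nat.pow_lt_pow_right hp.one_lt (by omega)
  have h4 := fx_mul w t hfx (p ^ (m - 1 - i) * c)
  rwa [key] at h4

private lemma rot_inj {p m : ℕ} (hp : p.Prime) (hm : 1 ≤ m) [NeZero (p ^ m)]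
    (w : Fin (p ^ m) → Fin r) (hw : ¬ Fx w ((p ^ (m - 1) : ℕ) : Fin (p ^ m))) :
    Function.Injective (fun t => rot t w) := by
  intro t t' h
  by_contra hne
  apply hw
  apply fx_boost hp hm w (t - t') (sub_ne_zero_of_ne hne)
  intro j
  have h1 : ∀ i, w (i + t) = w (i + t') := fun i => congrFun h i
  have e : j + (t - t') = (j - t') + t := by ring
  have e2 : (j - t') + t' = j := by ring
  rw [e, h1 (j - t'), e2]

private lemma orbit_dvd {p m : ℕ} (hp : p.Prime) (hm : 1 ≤ m) [NeZero (p ^ m)]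
    (F : (Fin (p ^ m) → Fin r) → ℤ) (hF : ∀ t w, F (rot t w) = F w) (d : ℤ)
    (S : Finset (Fin (p ^ m) → Fin r))
    (h1 : ∀ w ∈ S, ¬ Fx w ((p ^ (m - 1) : ℕ) : Fin (p ^ m)))
    (h2 : ∀ w ∈ S, ∀ t, rot t w ∈ S)
    (h3 : ∀ w ∈ S, d ∣ F w) :
    ((p ^ m : ℕ) : ℤ) * d ∣ ∑ w ∈ S, F w := by
  induction S using Finset.strongInduction with
  | _ S ih =>
  rcases S.eq_empty_or_nonempty with rfl | ⟨w, hw⟩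
  · simp
  · have hinj := rot_inj hp hm w (h1 w hw)
    set O : Finset (Fin (p ^ m) → Fin r) := image (fun t => rot t w) univ with hO
    have hOS : O ⊆ S := by
      intro x hx
      rw [hO, mem_image] at hx
      obtain ⟨t, _, rfl⟩ := hx
      exact h2 w hw t
    have hwO : w ∈ O := by
      rw [hO, mem_image]
      exact ⟨0, mem_univ _, by funext i; simp [rot]⟩
    have hsplit : S = O ∪ (S \ O) := (Finset.union_sdiff_of_subset hOS).symm
    rw [hsplit, Finset.sum_union Finset.disjoint_sdiff]
    apply dvd_add
    · rw [hO, Finset.sum_image (fun x _ y _ h => hinj h)]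
      have hc : ∀ t : Fin (p ^ m), F (rot t w) = F w := fun t => hF t w
      rw [Finset.sum_congr rfl (fun t _ => hc t), Finset.sum_const, Finset.card_univ,
        Fintype.card_fin, nsmul_eq_mul]
      exact mul_dvd_mul_left _ (h3 w hw)
    · have hss : S \ O ⊂ S := Finset.sdiff_ssubset hOS ⟨w, hwO⟩
      refine ih _ hss (fun x hx => h1 x (Finset.mem_sdiff.mp hx).1) ?_
          (fun x hx => h3 x (Finset.mem_sdiff.mp hx).1)
      intro x hx t
      rw [Finset.mem_sdiff] at hx ⊢
      refine ⟨h2 x hx.1 t, fun hmem => hx.2 ?_⟩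
      rw [hO, mem_image] at hmem ⊢
      obtain ⟨t', _, ht'⟩ := hmem
      refine ⟨t' - t, mem_univ _, ?_⟩
      funext i
      have hcf := congrFun ht' (i - t)
      simp only [rot] at hcf ⊢
      have e3 : i - t + t = i := by ring
      have e4 : i - t + t' = i + (t' - t) := by ring
      rw [e3, e4] at hcf
      exact hcf

/-! ### Projection / repetition -/

section proj

variable {p m : ℕ} [NeZero (p ^ m)] [NeZero (p ^ (m - 1))]

private def prj (hp : p.Prime) (hm : 1 ≤ m) (i : Fin (p ^ m)) : Fin (p ^ (m - 1)) :=
  ⟨i.val % p ^ (m - 1), Nat.mod_lt _ (pow_pos hp.pos _)⟩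

private def emb (hp : p.Prime) (hm : 1 ≤ m) (j : Fin (p ^ (m - 1))) : Fin (p ^ m) :=
  Fin.castLE (Nat.pow_le_pow_right hp.pos (by omega)) j

private lemma prj_add (hp : p.Prime) (hm : 1 ≤ m) (x y : Fin (p ^ m)) :
    prj hp hm (x + y) = prj hp hm x + prj hp hm y := by
  apply Fin.ext
  show (x + y).val % p ^ (m-1) = ((prj hp hm x) + (prj hp hm y)).val
  rw [Fin.val_add, Fin.val_add]
  show (x.val + y.val) % p ^ m % p ^ (m-1) = (x.val % p ^ (m-1) + y.val % p ^ (m-1)) % p ^ (m-1)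
  rw [Nat.mod_mod_of_dvd _ (pow_dvd_pow p (by omega)), Nat.add_mod]

private lemma prj_one (hp : p.Prime) (hm : 1 ≤ m) : prj hp hm (1 : Fin (p ^ m)) = 1 := by
  apply Fin.ext
  show (1 : Fin (p ^ m)).val % p ^ (m - 1) = _
  rw [Fin.val_one', ← Nat.cast_one (R := Fin (p ^ (m-1))), Fin.val_natCast,
    Nat.mod_mod_of_dvd _ (pow_dvd_pow p (by omega))]

private lemma prj_emb (hp : p.Prime) (hm : 1 ≤ m) (j : Fin (p ^ (m - 1))) :
    prj hp hm (emb hp hm j) = j := by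
  apply Fin.ext
  show (j.val) % p ^ (m - 1) = j.val
  exact Nat.mod_eq_of_lt j.isLt

private lemma prj_dc (hp : p.Prime) (hm : 1 ≤ m) :
    prj hp hm (((p ^ (m - 1) : ℕ) : Fin (p ^ m))) = 0 := by
  apply Fin.ext
  show ((p ^ (m-1) : ℕ) : Fin (p ^ m)).val % p ^ (m - 1) = 0
  rw [Fin.val_natCast, Nat.mod_mod_of_dvd _ (pow_dvd_pow p (by omega)), Nat.mod_self]

private lemma emb_prj (hp : p.Prime) (hm : 1 ≤ m) {w : Fin (p ^ m) → Fin r}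
    (hw : Fx w (((p ^ (m - 1) : ℕ) : Fin (p ^ m)))) (i : Fin (p ^ m)) :
    w (emb hp hm (prj hp hm i)) = w i := by
  have h := fx_mul w _ hw (i.val / p ^ (m - 1))
  have key : emb hp hm (prj hp hm i) + ((i.val / p ^ (m-1) : ℕ) : Fin (p ^ m)) *
      ((p ^ (m - 1) : ℕ) : Fin (p ^ m)) = i := by
    apply Fin.ext
    rw [Fin.val_add, Fin.val_mul, Fin.val_natCast, Fin.val_natCast, Nat.mod_mul_mod,
      Nat.mul_mod_mod]
    show (i.val % p ^ (m-1) + (i.val / p ^ (m-1) * p ^ (m-1)) % p ^ m) % p ^ m = i.val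
    rw [Nat.mod_eq_of_lt (lt_of_le_of_lt (Nat.div_mul_le_self _ _) i.isLt),
      Nat.add_comm, Nat.mul_comm (i.val / p ^ (m-1)) (p ^ (m-1)), Nat.div_add_mod,
      Nat.mod_eq_of_lt i.isLt]
  conv_rhs => rw [← key]
  exact (h _).symm

private lemma fx_prj (hp : p.Prime) (hm : 1 ≤ m) (v : Fin (p ^ (m - 1)) → Fin r) :
    Fx (v ∘ prj hp hm) (((p ^ (m - 1) : ℕ) : Fin (p ^ m))) := by
  intro i
  simp only [Function.comp_apply]
  rw [prj_add hp hm, prj_dc hp hm, add_zero]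

private def rep (hp : p.Prime) (hm : 1 ≤ m) (x : Fin (p ^ (m - 1)) × Fin p) : Fin (p ^ m) :=
  ⟨x.1.val + x.2.val * p ^ (m - 1), by
    have h1 := x.1.isLt
    have h2 := x.2.isLt
    have key : p ^ m = p ^ (m - 1) * p := by
      rw [← pow_succ]
      congr 1
      omega
    calc x.1.val + x.2.val * p ^ (m - 1) + 1 ≤ p ^ (m-1) + x.2.val * p ^ (m-1) := by omega
      _ = (x.2.val + 1) * p ^ (m - 1) := by ring
      _ ≤ p * p ^ (m - 1) := Nat.mul_le_mul_right _ (by omega)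
      _ = p ^ m := by rw [mul_comm, ← key]⟩

private lemma rep_bij (hp : p.Prime) (hm : 1 ≤ m) :
    Function.Bijective (rep (p := p) (m := m) hp hm) := by
  rw [Fintype.bijective_iff_injective_and_card]
  constructor
  · intro x y h
    have hv : x.1.val + x.2.val * p ^ (m-1) = y.1.val + y.2.val * p ^ (m-1) := congrArg Fin.val h
    have h1 := x.1.isLt
    have h2 := y.1.isLt
    have e1 : x.1.val = y.1.val := by
      have hmod := congrArg (· % p ^ (m-1)) hv
      simpa [Nat.add_mul_mod_self_right, Nat.mod_eq_of_lt h1, Nat.mod_eq_of_lt h2] using hmod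
    have hd : 0 < p ^ (m-1) := pow_pos hp.pos _
    have e2 : x.2.val = y.2.val := by
      have hmul : x.2.val * p ^ (m-1) = y.2.val * p ^ (m-1) := by omega
      exact Nat.eq_of_mul_eq_mul_right hd hmul
    exact Prod.ext (Fin.ext e1) (Fin.ext e2)
  · rw [Fintype.card_prod, Fintype.card_fin, Fintype.card_fin, Fintype.card_fin, ← pow_succ]
    congr 1
    omega

private lemma prj_rep (hp : p.Prime) (hm : 1 ≤ m) (x : Fin (p ^ (m - 1)) × Fin p) :
    prj hp hm (rep hp hm x) = x.1 := by
  apply Fin.ext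
  show (x.1.val + x.2.val * p ^ (m - 1)) % p ^ (m - 1) = x.1.val
  rw [Nat.add_mul_mod_self_right, Nat.mod_eq_of_lt x.1.isLt]

private lemma cw_rep (hp : p.Prime) (hm : 1 ≤ m) (v : Fin (p ^ (m - 1)) → Fin r) :
    cw A (v ∘ prj hp hm) = (cw A v) ^ p := by
  rw [cw]
  have step : ∀ i : Fin (p ^ m), A ((v ∘ prj hp hm) i) ((v ∘ prj hp hm) (i + 1)) =
      (fun j => A (v j) (v (j + 1))) (prj hp hm i) := by
    intro i
    simp only [Function.comp_apply]
    rw [prj_add hp hm, prj_one hp hm]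
  rw [Finset.prod_congr rfl (fun i _ => step i)]
  rw [← Fintype.prod_bijective (rep hp hm) (rep_bij hp hm)
      (fun x => (fun j => A (v j) (v (j + 1))) (prj hp hm (rep hp hm x))) _ (fun x => rfl)]
  simp_rw [prj_rep hp hm]
  rw [Fintype.prod_prod_type, cw, ← Finset.prod_pow]
  refine Finset.prod_congr rfl fun j _ => ?_
  simp [Finset.prod_const]

private lemma fix_sum (hp : p.Prime) (hm : 1 ≤ m) (F : (Fin (p ^ m) → Fin r) → ℤ) :
    ∑ w ∈ univ.filter (fun w => Fx w (((p ^ (m - 1) : ℕ) : Fin (p ^ m)))), F w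
      = ∑ v : Fin (p ^ (m - 1)) → Fin r, F (v ∘ prj hp hm) := by
  refine Finset.sum_nbij' (fun w => w ∘ emb hp hm) (fun v => v ∘ prj hp hm) ?_ ?_ ?_ ?_ ?_
  · intro w _; exact mem_univ _
  · intro v _
    rw [mem_filter]
    exact ⟨mem_univ _, fx_prj hp hm v⟩
  · intro w hw
    rw [mem_filter] at hw
    funext i
    exact emb_prj hp hm hw.2 i
  · intro v _
    funext j
    simp only [Function.comp_apply]
    rw [prj_emb hp hm]
  · intro w hw
    rw [mem_filter] at hw
    congr 1
    funext i
    exact (emb_prj hp hm hw.2 i).symm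

end proj

/-! ### Assembly -/

private lemma fx_rot {n : ℕ} [NeZero n] (t x : Fin n) (w : Fin n → Fin r) :
    Fx (rot t w) x ↔ Fx w x := by
  constructor
  · intro h j
    have h1 := h (j - t)
    simp only [rot] at h1
    have e1 : j - t + x + t = j + x := by ring
    have e2 : j - t + t = j := by ring
    rwa [e1, e2] at h1
  · intro h i
    simp only [rot]
    have e1 : i + x + t = (i + t) + x := by ring
    rw [e1, h (i + t)]

private lemma fermat_lift {p : ℕ} (hp : p.Prime) (a : ℤ) (e : ℕ) :
    (p : ℤ) ^ (e + 1) ∣ a ^ (p ^ (e + 1)) - a ^ (p ^ e) := by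
  haveI := Fact.mk hp
  have hf : (p : ℤ) ∣ a ^ p - a := by
    have hz : ((a ^ p - a : ℤ) : ZMod p) = 0 := by
      push_cast
      rw [ZMod.pow_card]
      ring
    exact_mod_cast (ZMod.intCast_zmod_eq_zero_iff_dvd _ _).mp hz
  have h2 := dvd_sub_pow_of_dvd_sub hf e
  rwa [← pow_mul, ← pow_succ'] at h2

private def TT (p : ℕ) (hp : p.Prime) (m e : ℕ) : ℤ :=
  letI : NeZero (p ^ m) := ⟨(pow_pos hp.pos m).ne'⟩
  ∑ w : Fin (p ^ m) → Fin r, (cw A w) ^ (p ^ e)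

private lemma TT_def (p : ℕ) (hp : p.Prime) (m e : ℕ) [NeZero (p ^ m)] :
    TT A p hp m e = ∑ w : Fin (p ^ m) → Fin r, (cw A w) ^ (p ^ e) := rfl

private lemma step1 (p : ℕ) (hp : p.Prime) (m e : ℕ) (hm : 1 ≤ m)
    [NeZero (p ^ m)] [NeZero (p ^ (m - 1))] :
    TT A p hp m e =
      (∑ w ∈ univ.filter (fun w => ¬ Fx w (((p ^ (m - 1) : ℕ) : Fin (p ^ m)))),
        (cw A w) ^ (p ^ e)) + TT A p hp (m - 1) (e + 1) := by
  rw [TT_def, ← Finset.sum_filter_add_sum_filter_not univ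
      (fun w => Fx w (((p ^ (m - 1) : ℕ) : Fin (p ^ m)))) (fun w => (cw A w) ^ (p ^ e)),
    add_comm]
  congr 1
  rw [fix_sum hp hm, TT_def]
  refine Finset.sum_congr rfl fun v _ => ?_
  rw [cw_rep A hp hm, ← pow_mul, ← pow_succ']

private lemma prim_dvd (p : ℕ) (hp : p.Prime) (m e : ℕ) (hm : 1 ≤ m) (d : ℤ)
    [NeZero (p ^ m)]
    (F : (Fin (p ^ m) → Fin r) → ℤ) (hF : ∀ t w, F (rot t w) = F w)
    (h3 : ∀ w, d ∣ F w) :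
    (p : ℤ) ^ m * d ∣
      ∑ w ∈ univ.filter (fun w => ¬ Fx w (((p ^ (m - 1) : ℕ) : Fin (p ^ m)))), F w := by
  have h := orbit_dvd hp hm F hF d
    (univ.filter (fun w => ¬ Fx w (((p ^ (m - 1) : ℕ) : Fin (p ^ m)))))
    (fun w hw => (mem_filter.mp hw).2)
    (fun w hw t => by
      rw [mem_filter]
      refine ⟨mem_univ _, ?_⟩
      rw [fx_rot]
      exact (mem_filter.mp hw).2)
    (fun w _ => h3 w)
  rwa [Nat.cast_pow] at h

private lemma lemN (p : ℕ) (hp : p.Prime) (m : ℕ) : ∀ e : ℕ,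
    (p : ℤ) ^ (m + e + 1) ∣ TT A p hp m (e + 1) - TT A p hp m e := by
  induction m with
  | zero =>
    intro e
    haveI : NeZero (p ^ 0) := ⟨(pow_pos hp.pos 0).ne'⟩
    rw [TT_def, TT_def, ← Finset.sum_sub_distrib]
    refine Finset.dvd_sum fun w _ => ?_
    simpa using fermat_lift hp (cw A w) e
  | succ m ih =>
    intro e
    haveI : NeZero (p ^ (m + 1)) := ⟨(pow_pos hp.pos _).ne'⟩
    haveI : NeZero (p ^ m) := ⟨(pow_pos hp.pos m).ne'⟩
    haveI : NeZero (p ^ (m + 1 - 1)) := ⟨(pow_pos hp.pos _).ne'⟩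
    rw [step1 A p hp (m+1) (e+1) (by omega), step1 A p hp (m+1) e (by omega)]
    have hre : ∀ x : ℕ, TT A p hp (m + 1 - 1) x = TT A p hp m x := fun x => by
      simp only [Nat.add_sub_cancel]
    rw [hre, hre]
    have key : ∀ P Q R S : ℤ, (P + Q) - (R + S) = (P - R) + (Q - S) := fun _ _ _ _ => by ring
    rw [key]
    apply dvd_add
    · rw [← Finset.sum_sub_distrib]
      have hdvd := prim_dvd p hp (m+1) e (by omega) ((p : ℤ) ^ (e + 1))
        (fun w => (cw A w) ^ (p ^ (e+1)) - (cw A w) ^ (p ^ e))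
        (fun t w => by simp only [cw_rot A])
        (fun w => fermat_lift hp (cw A w) e)
      rw [← pow_add] at hdvd
      have hmod : m + 1 + (e + 1) = m + 1 + e + 1 := by omega
      rwa [hmod] at hdvd
    · have h2 := ih (e + 1)
      have hmod : m + (e + 1) + 1 = m + 1 + e + 1 := by omega
      rwa [hmod] at h2

private lemma lemM (p : ℕ) (hp : p.Prime) (m : ℕ) (hm : 1 ≤ m) :
    (p : ℤ) ^ m ∣ TT A p hp m 0 - TT A p hp (m - 1) 0 := by
  haveI : NeZero (p ^ m) := ⟨(pow_pos hp.pos m).ne'⟩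
  haveI : NeZero (p ^ (m - 1)) := ⟨(pow_pos hp.pos _).ne'⟩
  rw [step1 A p hp m 0 hm, add_sub_assoc]
  apply dvd_add
  · have hdvd := prim_dvd p hp m 0 hm 1
      (fun w => (cw A w) ^ (p ^ 0)) (fun t w => by simp only [cw_rot A]) (fun w => one_dvd _)
    rwa [mul_one] at hdvd
  · have h2 := lemN A p hp (m - 1) 0
    have hmod : m - 1 + 0 + 1 = m := by omega
    rwa [hmod] at h2

private lemma lemChain (p : ℕ) (hp : p.Prime) : ∀ s k : ℕ, s ≤ k →
    (p : ℤ) ^ (k - s + 1) ∣ TT A p hp k 0 - TT A p hp (k - s) 0 := by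
  intro s
  induction s with
  | zero => intro k _; simp
  | succ s ih =>
    intro k hsk
    have h1 := ih k (by omega)
    have h2 := lemM A p hp (k - s) (by omega)
    have e1 : k - (s + 1) = k - s - 1 := by omega
    have e2 : k - (s + 1) + 1 = k - s := by omega
    rw [e2, e1]
    have split : TT A p hp k 0 - TT A p hp (k - s - 1) 0 =
        (TT A p hp k 0 - TT A p hp (k - s) 0) + (TT A p hp (k - s) 0 - TT A p hp (k - s - 1) 0) :=
      by ring
    rw [split]
    exact dvd_add (dvd_trans (pow_dvd_pow _ (by omega)) h1) h2

end TraceCong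

theorem stmt_2 (r : ℕ) (f : Matrix (Fin r) (Fin r) ℤ)
    (p : ℕ) (hp : p.Prime) (k s : ℕ) (hs : 1 ≤ s) (hsk : s ≤ k) :
    (f ^ (p ^ k)).trace ≡ (f ^ (p ^ (k - s))).trace [ZMOD (p : ℤ) ^ (k - s + 1)] := by
  haveI : NeZero (p ^ k) := ⟨(pow_pos hp.pos k).ne'⟩
  haveI : NeZero (p ^ (k - s)) := ⟨(pow_pos hp.pos _).ne'⟩
  apply Int.modEq_iff_dvd.mpr
  have tk : (f ^ p ^ k).trace = TraceCong.TT f p hp k 0 := by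
    rw [TraceCong.trace_pow_walk' f (p ^ k) (pow_pos hp.pos _),
      TraceCong.TT_def]
    simp
  have tks : (f ^ p ^ (k - s)).trace = TraceCong.TT f p hp (k - s) 0 := by
    rw [TraceCong.trace_pow_walk' f (p ^ (k - s)) (pow_pos hp.pos _),
      TraceCong.TT_def]
    simp
  rw [tk, tks]
  exact dvd_sub_comm.mp (TraceCong.lemChain f p hp s k hsk)
end

section
/- Let f be a square matrix with complex entries whose characteristic polynomial has integer coefficients, p a prime, and k ≥ 1. Then there exists an integer c such that Tr(f^(p^k)) − Tr(f^(p^(k−1))) = p^k · c. -/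
open Polynomial Matrix

private lemma stmt3_frob {r p : ℕ} (hp : p.Prime) (g : MvPolynomial (Fin r) ℤ) :
    (p : MvPolynomial (Fin r) ℤ) ∣ MvPolynomial.expand p g - g ^ p := by
  haveI : Fact p.Prime := ⟨hp⟩
  rw [show ((p : MvPolynomial (Fin r) ℤ)) = MvPolynomial.C (p : ℤ) by simp]
  rw [MvPolynomial.C_dvd_iff_zmod]
  rw [RingHom.map_sub, MvPolynomial.map_expand, map_pow]
  rw [← MvPolynomial.frobenius_zmod]
  simp [frobenius_def]

private lemma stmt3_fermat {p : ℕ} (hp : p.Prime) (z : ℤ) (m : ℕ) (hm : 1 ≤ m) :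
    (p : ℤ) ^ m ∣ z ^ p ^ m - z ^ p ^ (m - 1) := by
  haveI : Fact p.Prime := ⟨hp⟩
  have h1 : (p : ℤ) ∣ z ^ p - z := by
    have := ZMod.pow_card (z : ZMod p)
    rwa [← Int.cast_pow, ← sub_eq_zero, ← Int.cast_sub, ZMod.intCast_zmod_eq_zero_iff_dvd] at this
  have h2 := dvd_sub_pow_of_dvd_sub h1 (m - 1)
  have hm2 : m - 1 + 1 = m := by omega
  rw [← pow_mul, ← pow_succ', hm2] at h2
  exact h2

open MvPolynomial Finset in
private lemma stmt3_theta {r p : ℕ} (hp : p.Prime) (k : ℕ) :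
    ∃ w : ℕ → MvPolynomial (Fin r) ℤ, (∀ i, (w i).IsSymmetric) ∧
      ∀ j ≤ k, psum (Fin r) ℤ (p ^ j) =
        ∑ i ∈ Finset.range (j + 1), (p : MvPolynomial (Fin r) ℤ) ^ i * (w i) ^ (p ^ (j - i)) := by
  induction k with
  | zero =>
    refine ⟨fun _ => psum (Fin r) ℤ 1, fun _ => psum_isSymmetric _ _ _, ?_⟩
    intro j hj
    interval_cases j
    simp
  | succ k ih =>
    obtain ⟨w, hsym, hw⟩ := ih
    have hexp : expand p (psum (Fin r) ℤ (p ^ k)) = psum (Fin r) ℤ (p ^ (k + 1)) := by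
      simp only [psum, map_sum, _root_.map_pow, MvPolynomial.expand_X, ← pow_mul]
      congr 1; ext i; rw [pow_succ, mul_comm]
    set d : MvPolynomial (Fin r) ℤ := psum (Fin r) ℤ (p ^ (k + 1)) -
      ∑ i ∈ Finset.range (k + 1),
        (p : MvPolynomial (Fin r) ℤ) ^ i * (w i) ^ (p ^ (k + 1 - i)) with hd
    have hdvd : (p : MvPolynomial (Fin r) ℤ) ^ (k + 1) ∣ d := by
      have expd : psum (Fin r) ℤ (p ^ (k + 1)) =
          ∑ i ∈ Finset.range (k + 1),
            (p : MvPolynomial (Fin r) ℤ) ^ i * (expand p (w i)) ^ (p ^ (k - i)) := by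
        rw [← hexp, hw k le_rfl]
        simp [map_sum, _root_.map_mul, _root_.map_pow]
      rw [hd, expd, ← Finset.sum_sub_distrib]
      apply Finset.dvd_sum
      intro i hi
      rw [Finset.mem_range] at hi
      have h1 : (p : MvPolynomial (Fin r) ℤ) ^ (k - i + 1) ∣
          (expand p (w i)) ^ (p ^ (k - i)) - ((w i) ^ p) ^ (p ^ (k - i)) :=
        dvd_sub_pow_of_dvd_sub (stmt3_frob hp (w i)) (k - i)
      have h2 : ((w i) ^ p) ^ (p ^ (k - i)) = (w i) ^ (p ^ (k + 1 - i)) := by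
        rw [← pow_mul, ← pow_succ']
        congr 2
        omega
      rw [← mul_sub, ← h2]
      have h3 : (p : MvPolynomial (Fin r) ℤ) ^ (k + 1) =
          (p : MvPolynomial (Fin r) ℤ) ^ i * (p : MvPolynomial (Fin r) ℤ) ^ (k - i + 1) := by
        rw [← pow_add]; congr 1; omega
      rw [h3]
      exact mul_dvd_mul_left _ h1
    obtain ⟨θ, hθ⟩ := hdvd
    have hpow_ne : (p : MvPolynomial (Fin r) ℤ) ^ (k + 1) ≠ 0 := by
      apply pow_ne_zero
      simpa using hp.ne_zero
    have hθsym : θ.IsSymmetric := by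
      intro e
      have hdsym : rename (⇑e) d = d := by
        rw [hd]
        simp only [map_sub, map_sum, _root_.map_mul, _root_.map_pow, map_natCast]
        rw [psum_isSymmetric _ _ _ e]
        congr 1
        exact Finset.sum_congr rfl fun i _ => by rw [hsym i e]
      have h3 := congrArg (rename (⇑e)) hθ
      rw [_root_.map_mul, _root_.map_pow, map_natCast, hdsym, hθ] at h3
      exact (mul_left_cancel₀ hpow_ne h3).symm
    refine ⟨Function.update w (k + 1) θ, ?_, ?_⟩
    · intro i
      rcases eq_or_ne i (k + 1) with h | h
      · rw [h, Function.update_self]; exact hθsym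
      · rw [Function.update_of_ne h]; exact hsym i
    · intro j hj
      rcases Nat.lt_or_ge j (k + 1) with h | h
      · rw [hw j (by omega)]
        apply Finset.sum_congr rfl
        intro i hi
        rw [Finset.mem_range] at hi
        rw [Function.update_of_ne (by omega)]
      · have hj' : j = k + 1 := by omega
        subst hj'
        rw [Finset.sum_range_succ, Function.update_self]
        have h4 : ∑ i ∈ Finset.range (k + 1), (p : MvPolynomial (Fin r) ℤ) ^ i *
            (Function.update w (k + 1) θ i) ^ (p ^ (k + 1 - i)) =
            ∑ i ∈ Finset.range (k + 1),
              (p : MvPolynomial (Fin r) ℤ) ^ i * (w i) ^ (p ^ (k + 1 - i)) := by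
          apply Finset.sum_congr rfl
          intro i hi
          rw [Finset.mem_range] at hi
          rw [Function.update_of_ne (by omega)]
        rw [h4, Nat.sub_self, pow_zero, pow_one]
        linear_combination hθ

private lemma stmt3_swap {α β : Type*} (s : Multiset α) (t : Multiset β) (h : α → β → ℂ) :
    (s.map (fun a => (t.map (h a)).prod)).prod
      = (t.map (fun b => (s.map (fun a => h a b)).prod)).prod := by
  induction s using Multiset.induction with
  | empty => simp [Multiset.map_const']
  | cons a s ih => simp [ih, Multiset.prod_map_mul]

private lemma stmt3_neg (s : Multiset ℂ) (g : ℂ → ℂ) :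
    (s.map (fun a => -(g a))).prod = (-1) ^ (Multiset.card s) * (s.map g).prod := by
  induction s using Multiset.induction with
  | empty => simp
  | cons a s ih => simp [ih, pow_succ]; ring

private lemma stmt3_evalcp {r : ℕ} (M : Matrix (Fin r) (Fin r) ℂ) (x : ℂ) :
    (M.charpoly).eval x = (Matrix.scalar (Fin r) x - M).det := by
  rw [Matrix.charpoly, eval_det, matPolyEquiv_charmatrix]
  simp

private lemma stmt3_scalar_alg {r : ℕ} (x : ℂ) :
    Matrix.scalar (Fin r) x = algebraMap ℂ (Matrix (Fin r) (Fin r) ℂ) x := by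
  simp [Matrix.scalar, Matrix.algebraMap_eq_diagonal]

private lemma stmt3_charpow {r : ℕ} (M : Matrix (Fin r) (Fin r) ℂ) (n : ℕ) (hn : 1 ≤ n) :
    (M ^ n).charpoly = ((M.charpoly.roots.map (fun l => l ^ n)).map (fun a => X - C a)).prod := by
  have hmon := M.charpoly_monic
  have hsplit : M.charpoly.Splits := IsAlgClosed.splits _
  have hcf : M.charpoly = (M.charpoly.roots.map (fun a => X - C a)).prod :=
    hsplit.eq_prod_roots_of_monic hmon
  have hcard : Multiset.card M.charpoly.roots = r := by
    have h := (splits_iff_card_roots.mp hsplit)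
    rw [M.charpoly_natDegree_eq_dim, Fintype.card_fin] at h
    exact h
  apply Polynomial.funext
  intro x
  have hmon2 : (X ^ n - C x : ℂ[X]).Monic := monic_X_pow_sub_C x (by omega)
  have hsplit2 : (X ^ n - C x : ℂ[X]).Splits := IsAlgClosed.splits _
  set μs := (X ^ n - C x : ℂ[X]).roots with hμs
  have hfac : (X ^ n - C x : ℂ[X]) = (μs.map (fun a => X - C a)).prod :=
    hsplit2.eq_prod_roots_of_monic hmon2
  have hcardμ : Multiset.card μs = n := by
    have h := (splits_iff_card_roots.mp hsplit2)
    rw [natDegree_X_pow_sub_C] at h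
    exact h
  rw [stmt3_evalcp, eval_multiset_prod]
  have key : (M ^ n - Matrix.scalar (Fin r) x).det
      = (M.charpoly.roots.map (fun l => l ^ n - x)).prod := by
    have h1 : M ^ n - Matrix.scalar (Fin r) x = Polynomial.aeval M (X ^ n - C x) := by
      rw [map_sub, map_pow, aeval_X, aeval_C, stmt3_scalar_alg]
    let φ : ℂ[X] →* ℂ := Matrix.detMonoidHom.comp (Polynomial.aeval M).toRingHom.toMonoidHom
    have hφ : ∀ g : ℂ[X], φ g = (Polynomial.aeval M g).det := fun g => rfl
    have h2 : (M ^ n - Matrix.scalar (Fin r) x).det = φ (X ^ n - C x) := by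
      rw [hφ, h1]
    rw [h2, hfac, φ.map_multiset_prod, Multiset.map_map]
    have h3 : ∀ μ : ℂ, φ (X - C μ) = (-1) ^ r * (M.charpoly.roots.map (fun l => μ - l)).prod := by
      intro μ
      rw [hφ, map_sub, aeval_X, aeval_C, ← stmt3_scalar_alg]
      rw [show M - Matrix.scalar (Fin r) μ = -(Matrix.scalar (Fin r) μ - M) from (neg_sub _ _).symm]
      rw [Matrix.det_neg, Fintype.card_fin]
      congr 1
      rw [← stmt3_evalcp]
      conv_lhs => rw [hcf]
      rw [eval_multiset_prod, Multiset.map_map]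
      simp
    calc (μs.map fun μ => φ (X - C μ)).prod
        = (μs.map fun μ => ((M.charpoly.roots.map (fun l => -(μ - l))).prod)).prod := by
          apply congr_arg
          apply Multiset.map_congr rfl
          intro μ _
          rw [h3 μ, stmt3_neg, hcard]
      _ = (M.charpoly.roots.map fun l => (μs.map (fun μ => -(μ - l))).prod).prod := by
          rw [stmt3_swap]
      _ = (M.charpoly.roots.map (fun l => l ^ n - x)).prod := by
          apply congr_arg
          apply Multiset.map_congr rfl
          intro l _
          have h5 : (μs.map (fun μ => -(μ - l))).prod = (μs.map (fun μ => l - μ)).prod := by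
            congr 1; apply Multiset.map_congr rfl; intros; ring
          rw [h5]
          have heval : (X ^ n - C x : ℂ[X]).eval l = l ^ n - x := by simp
          rw [← heval]
          conv_rhs => rw [hfac]
          rw [eval_multiset_prod, Multiset.map_map]
          simp
  have lhs_eq : (Matrix.scalar (Fin r) x - M ^ n).det
      = (-1) ^ r * (M ^ n - Matrix.scalar (Fin r) x).det := by
    rw [show Matrix.scalar (Fin r) x - M ^ n = -(M ^ n - Matrix.scalar (Fin r) x) from
      (neg_sub _ _).symm]
    rw [Matrix.det_neg]
    norm_num
  rw [lhs_eq, key, Multiset.map_map, Multiset.map_map]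
  have h6 : ∀ l : ℂ, ((eval x ∘ fun a => X - C a) ∘ fun l => l ^ n) l
      = -((fun l => l ^ n - x) l) := by
    intro l; simp
  rw [Multiset.map_congr rfl (fun l _ => h6 l), stmt3_neg, hcard]

private lemma stmt3_trace {r : ℕ} (M : Matrix (Fin r) (Fin r) ℂ) (n : ℕ) (hn : 1 ≤ n) :
    (M ^ n).trace = (M.charpoly.roots.map (fun l => l ^ n)).sum := by
  rw [Matrix.trace_eq_sum_roots_charpoly, stmt3_charpow M n hn, roots_multiset_prod_X_sub_C]

theorem stmt_3 (r : ℕ) (f : Matrix (Fin r) (Fin r) ℂ)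
    (hint : ∀ i : ℕ, ∃ z : ℤ, f.charpoly.coeff i = (z : ℂ))
    (p : ℕ) (hp : p.Prime) (k : ℕ) (hk : 1 ≤ k) :
    ∃ c : ℤ, (f ^ (p ^ k)).trace - (f ^ (p ^ (k - 1))).trace = (p : ℂ) ^ k * (c : ℂ) := by
  haveI : Fact p.Prime := ⟨hp⟩
  have hsplit : f.charpoly.Splits := IsAlgClosed.splits _
  have hcard : Multiset.card f.charpoly.roots = r := by
    have h := (splits_iff_card_roots.mp hsplit)
    rw [f.charpoly_natDegree_eq_dim, Fintype.card_fin] at h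
    exact h
  -- enumerate the roots
  obtain ⟨lf, hlf⟩ : ∃ lf : Fin r → ℂ, (Finset.univ.val.map lf) = f.charpoly.roots := by
    have hl : f.charpoly.roots.toList.length = r := by rw [Multiset.length_toList, hcard]
    refine ⟨fun i => f.charpoly.roots.toList.get (Fin.cast hl.symm i), ?_⟩
    have h2 : (List.finRange r).map (fun i => f.charpoly.roots.toList.get (Fin.cast hl.symm i))
        = f.charpoly.roots.toList := by
      apply List.ext_getElem
      · simp [hl]
      · intro i h1 h2
        simp
    calc (Finset.univ.val.map fun i => f.charpoly.roots.toList.get (Fin.cast hl.symm i))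
        = ((List.finRange r : List (Fin r)) : Multiset (Fin r)).map
            (fun i => f.charpoly.roots.toList.get (Fin.cast hl.symm i)) := by
          rfl
      _ = (f.charpoly.roots.toList : Multiset ℂ) := by rw [Multiset.map_coe, h2]
      _ = f.charpoly.roots := Multiset.coe_toList _
  -- values of elementary symmetric polynomials are integers
  have hesymm : ∀ m : ℕ, ∃ z : ℤ,
      MvPolynomial.aeval lf (MvPolynomial.esymm (Fin r) ℤ m) = (z : ℂ) := by
    intro m
    rw [MvPolynomial.aeval_esymm_eq_multiset_esymm, hlf]
    rcases le_or_gt m r with hm | hm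
    · obtain ⟨z, hz⟩ := hint (r - m)
      refine ⟨(-1) ^ m * z, ?_⟩
      have hco := Polynomial.coeff_eq_esymm_roots_of_splits hsplit
        (k := r - m) (by rw [f.charpoly_natDegree_eq_dim, Fintype.card_fin]; omega)
      rw [f.charpoly_natDegree_eq_dim, Fintype.card_fin] at hco
      have hmm : r - (r - m) = m := by omega
      rw [hmm] at hco
      rw [(f.charpoly_monic).leadingCoeff, one_mul] at hco
      rw [hz] at hco
      push_cast
      rw [hco, ← mul_assoc, ← pow_add, Even.neg_one_pow ⟨m, by ring⟩, one_mul]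
    · refine ⟨0, ?_⟩
      rw [Multiset.esymm, Multiset.powersetCard_eq_empty]
      · simp
      · omega
  -- values of symmetric integer polynomials at the roots are integers
  have hsymval : ∀ W : MvPolynomial (Fin r) ℤ, W.IsSymmetric →
      ∃ z : ℤ, MvPolynomial.aeval lf W = (z : ℂ) := by
    intro W hW
    obtain ⟨q, hq⟩ := MvPolynomial.esymmAlgHom_surjective (σ := Fin r) (R := ℤ) (n := r)
      (by simp) ⟨W, hW⟩
    have hWq : W = MvPolynomial.aeval
        (fun i : Fin r => MvPolynomial.esymm (Fin r) ℤ ((i : ℕ) + 1)) q := by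
      have h1 := congrArg Subtype.val hq
      rw [MvPolynomial.esymmAlgHom_apply] at h1
      exact h1.symm
    rw [hWq]
    clear hWq hq hW
    induction q using MvPolynomial.induction_on with
    | C a => exact ⟨a, by simp⟩
    | add q1 q2 h1 h2 =>
      obtain ⟨z1, hz1⟩ := h1
      obtain ⟨z2, hz2⟩ := h2
      exact ⟨z1 + z2, by rw [map_add, map_add, hz1, hz2]; push_cast; ring⟩
    | mul_X q1 j h1 =>
      obtain ⟨z1, hz1⟩ := h1
      obtain ⟨z2, hz2⟩ := hesymm ((j : ℕ) + 1)
      refine ⟨z1 * z2, ?_⟩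
      rw [_root_.map_mul, _root_.map_mul, hz1]
      simp only [MvPolynomial.aeval_X]
      rw [hz2]
      push_cast
      ring
  -- power sums evaluate to traces
  have hpsum : ∀ n : ℕ, 1 ≤ n →
      MvPolynomial.aeval lf (MvPolynomial.psum (Fin r) ℤ n) = (f ^ n).trace := by
    intro n hn
    rw [stmt3_trace f n hn, MvPolynomial.psum, map_sum, ← hlf, Multiset.map_map]
    simp [Finset.sum]
  -- get the Witt coordinates
  obtain ⟨w, hwsym, hw⟩ := stmt3_theta (r := r) hp k
  choose z hz using fun i => hsymval (w i) (hwsym i)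
  -- evaluate the two identities
  have heval : ∀ j ≤ k, (f ^ (p ^ j)).trace
      = ∑ i ∈ Finset.range (j + 1), (p : ℂ) ^ i * (z i : ℂ) ^ (p ^ (j - i)) := by
    intro j hj
    rw [← hpsum (p ^ j) (Nat.one_le_pow _ _ hp.pos), hw j hj]
    rw [map_sum]
    apply Finset.sum_congr rfl
    intro i _
    rw [_root_.map_mul, _root_.map_pow, _root_.map_pow, map_natCast, hz i]
  -- the integer side
  set N : ℤ := (∑ i ∈ Finset.range (k + 1), (p : ℤ) ^ i * (z i) ^ (p ^ (k - i)))
    - ∑ i ∈ Finset.range k, (p : ℤ) ^ i * (z i) ^ (p ^ (k - 1 - i)) with hN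
  have hdvd : (p : ℤ) ^ k ∣ N := by
    rw [hN, Finset.sum_range_succ, Nat.sub_self, pow_zero, pow_one]
    have hre : ((∑ i ∈ Finset.range k, (p : ℤ) ^ i * (z i) ^ (p ^ (k - i))) + (p : ℤ) ^ k * z k)
        - ∑ i ∈ Finset.range k, (p : ℤ) ^ i * (z i) ^ (p ^ (k - 1 - i))
        = (p : ℤ) ^ k * z k + ∑ i ∈ Finset.range k,
            ((p : ℤ) ^ i * (z i) ^ (p ^ (k - i)) - (p : ℤ) ^ i * (z i) ^ (p ^ (k - 1 - i))) := by
      rw [Finset.sum_sub_distrib]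
      ring
    rw [hre]
    apply dvd_add
    · exact Dvd.intro _ rfl
    · apply Finset.dvd_sum
      intro i hi
      rw [Finset.mem_range] at hi
      rw [← mul_sub]
      have h1 : (p : ℤ) ^ (k - i) ∣ (z i) ^ (p ^ (k - i)) - (z i) ^ (p ^ (k - 1 - i)) := by
        have := stmt3_fermat hp (z i) (k - i) (by omega)
        have hki : k - i - 1 = k - 1 - i := by omega
        rwa [hki] at this
      have h2 : (p : ℤ) ^ k = (p : ℤ) ^ i * (p : ℤ) ^ (k - i) := by
        rw [← pow_add]; congr 1; omega
      rw [h2]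
      exact mul_dvd_mul_left _ h1
  obtain ⟨c, hc⟩ := hdvd
  refine ⟨c, ?_⟩
  rw [heval k le_rfl, heval (k - 1) (by omega)]
  have hk1 : k - 1 + 1 = k := by omega
  rw [hk1]
  have : ((N : ℤ) : ℂ) = (p : ℂ) ^ k * (c : ℂ) := by
    rw [hc]; push_cast; ring
  rw [← this, hN]
  push_cast
  ring
end

section
/- Let G be a finite group and let ρ be a finite-dimensional complex representation of G whose character χ takes only integer values. Then for every g ∈ G, every prime p, and every k ≥ 1, there exists an integer c such that χ(g^(p^k)) − χ(g^(p^(k−1))) = p^k · c. -/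
open Polynomial Finset IntermediateField

lemma pow_congr_of_pow_eq_one {ω : ℂ} {n : ℕ} (h : ω ^ n = 1) {a b : ℕ}
    (hab : a ≡ b [MOD n]) : ω ^ a = ω ^ b := by
  have key : ∀ c : ℕ, ω ^ c = ω ^ (c % n) := by
    intro c
    conv_lhs => rw [← Nat.mod_add_div c n, pow_add, pow_mul, h, one_pow, mul_one]
  rw [key a, key b, hab]

lemma sum_nthRoots_pow {r : ℕ} (hr : 0 < r) (j : ℕ) :
    ∑ ω ∈ nthRootsFinset r (1 : ℂ), ω ^ j = if r ∣ j then (r : ℂ) else 0 := by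
  obtain ⟨ζ, hζ⟩ : ∃ ζ : ℂ, IsPrimitiveRoot ζ r := ⟨_, Complex.isPrimitiveRoot_exp r hr.ne'⟩
  split_ifs with hd
  · have : ∀ ω ∈ nthRootsFinset r (1 : ℂ), ω ^ j = 1 := by
      intro ω hω
      rw [mem_nthRootsFinset hr (1 : ℂ)] at hω
      rw [pow_congr_of_pow_eq_one hω (Nat.modEq_zero_iff_dvd.mpr hd), pow_zero]
    rw [Finset.sum_congr rfl this, Finset.sum_const, hζ.card_nthRootsFinset]
    simp
  · have hζr : ζ ∈ nthRootsFinset r (1 : ℂ) := (mem_nthRootsFinset hr (1 : ℂ)).mpr hζ.pow_eq_one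
    have hζinv : ζ⁻¹ ∈ nthRootsFinset r (1 : ℂ) := (mem_nthRootsFinset hr (1 : ℂ)).mpr (by
      rw [inv_pow, hζ.pow_eq_one, inv_one])
    have hζ0 : ζ ≠ 0 := hζ.ne_zero hr.ne'
    have key : (ζ ^ j) * ∑ ω ∈ nthRootsFinset r (1 : ℂ), ω ^ j
        = ∑ ω ∈ nthRootsFinset r (1 : ℂ), ω ^ j := by
      rw [Finset.mul_sum]
      refine Finset.sum_nbij' (fun ω => ζ * ω) (fun ω => ζ⁻¹ * ω)
        (fun ω hω => by simpa using mul_mem_nthRootsFinset hζr hω)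
        (fun ω hω => by simpa using mul_mem_nthRootsFinset hζinv hω)
        (fun ω _ => by field_simp) (fun ω _ => by field_simp) ?_
      intro ω _
      rw [mul_pow]
    have hz : ζ ^ j ≠ 1 := fun h => hd (hζ.dvd_of_pow_eq_one j h)
    have h2 := sub_eq_zero.mpr key
    rw [← sub_one_mul] at h2
    rcases mul_eq_zero.mp h2 with h | h
    · exact absurd (by linear_combination h) hz
    · exact h

lemma key_primroots (p k : ℕ) (hp : p.Prime) (hk : 1 ≤ k) :
    ∀ r : ℕ, 0 < r → ∃ z : ℤ, ∑ ω ∈ primitiveRoots r ℂ, (ω ^ p ^ k - ω ^ p ^ (k-1))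
      = (p:ℂ) ^ k * z := by
  intro r
  induction r using Nat.strong_induction_on with
  | _ r ih =>
  intro hr
  obtain ⟨ζ, hζ⟩ : ∃ ζ : ℂ, IsPrimitiveRoot ζ r := ⟨_, Complex.isPrimitiveRoot_exp r hr.ne'⟩
  -- sum over all divisors
  have hpart : ∑ d ∈ r.divisors, ∑ ω ∈ primitiveRoots d ℂ, (ω ^ p ^ k - ω ^ p ^ (k-1))
      = (if r ∣ p ^ k then (r:ℂ) else 0) - (if r ∣ p ^ (k-1) then (r:ℂ) else 0) := by
    rw [← Finset.sum_biUnion ?hdisj]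
    · rw [← IsPrimitiveRoot.nthRoots_one_eq_biUnion_primitiveRoots, Finset.sum_sub_distrib,
        sum_nthRoots_pow hr, sum_nthRoots_pow hr]
    · exact fun i _ j _ hij => IsPrimitiveRoot.disjoint hij
  -- the RHS is p^k when r = p^k, else 0
  have hnd : ¬ p ^ k ∣ p ^ (k-1) := by
    rw [Nat.pow_dvd_pow_iff_le_right hp.one_lt]
    omega
  have hRHS : (if r ∣ p ^ k then (r:ℂ) else 0) - (if r ∣ p ^ (k-1) then (r:ℂ) else 0)
      = if r = p ^ k then ((p:ℂ)) ^ k else 0 := by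
    by_cases h1 : r ∣ p ^ (k-1)
    · have h2 : r ∣ p ^ k := h1.trans (pow_dvd_pow p (Nat.sub_le k 1))
      have h3 : r ≠ p ^ k := by rintro rfl; exact hnd h1
      simp [h1, h2, h3]
    · by_cases h2 : r ∣ p ^ k
      · have h3 : r = p ^ k := by
          obtain ⟨e, he, rfl⟩ := (Nat.dvd_prime_pow hp).mp h2
          rcases Nat.lt_or_ge e k with h | h
          · exact absurd (pow_dvd_pow p (Nat.le_sub_one_of_lt h)) h1
          · rw [le_antisymm he h]
        subst h3
        simp [h1, Nat.cast_pow]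
      · have h3 : r ≠ p ^ k := by rintro rfl; exact h2 dvd_rfl
        simp [h1, h2, h3]
  -- extract the r-term
  have hsplit : ∑ d ∈ r.divisors, ∑ ω ∈ primitiveRoots d ℂ, (ω ^ p ^ k - ω ^ p ^ (k-1))
      = (∑ ω ∈ primitiveRoots r ℂ, (ω ^ p ^ k - ω ^ p ^ (k-1)))
        + ∑ d ∈ r.divisors.erase r, ∑ ω ∈ primitiveRoots d ℂ, (ω ^ p ^ k - ω ^ p ^ (k-1)) := by
    rw [← Finset.sum_erase_add _ _ (Nat.mem_divisors_self r hr.ne'), add_comm]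
  -- induction on the proper divisors
  have hrec : ∀ d ∈ r.divisors.erase r, ∃ z : ℤ,
      ∑ ω ∈ primitiveRoots d ℂ, (ω ^ p ^ k - ω ^ p ^ (k-1)) = (p:ℂ) ^ k * z := by
    intro d hd
    have hd' := Finset.mem_erase.mp hd
    have hdvd := (Nat.mem_divisors.mp hd'.2).1
    exact ih d (lt_of_le_of_ne (Nat.le_of_dvd hr hdvd) hd'.1) (Nat.pos_of_dvd_of_pos hdvd hr)
  choose zf hzf using hrec
  refine ⟨(if r = p ^ k then 1 else 0) - ∑ d ∈ (r.divisors.erase r).attach, zf d d.2, ?_⟩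
  have : ∑ d ∈ r.divisors.erase r, ∑ ω ∈ primitiveRoots d ℂ, (ω ^ p ^ k - ω ^ p ^ (k-1))
      = (p:ℂ)^k * ∑ d ∈ (r.divisors.erase r).attach, (zf d d.2 : ℂ) := by
    rw [Finset.mul_sum, ← Finset.sum_attach (r.divisors.erase r)
      (fun d => ∑ ω ∈ primitiveRoots d ℂ, (ω ^ p ^ k - ω ^ p ^ (k-1)))]
    exact Finset.sum_congr rfl fun d _ => hzf d d.2
  have heq : (∑ ω ∈ primitiveRoots r ℂ, (ω ^ p ^ k - ω ^ p ^ (k-1)))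
      = (if r = p ^ k then ((p:ℂ)) ^ k else 0)
        - (p:ℂ)^k * ∑ d ∈ (r.divisors.erase r).attach, (zf d d.2 : ℂ) := by
    rw [← this, ← hRHS, ← hpart, hsplit]; ring
  rw [heq]
  push_cast
  split_ifs <;> ring

lemma inv_lemma (n : ℕ) (hn : 0 < n) (d : ℂ → ℕ) (s : ℕ → ℤ)
    (hs : ∀ j : ℕ, (s j : ℂ) = ∑ ω ∈ nthRootsFinset n (1 : ℂ), (d ω : ℂ) * ω ^ j)
    (t : ℕ) (ht : t.Coprime n) (j : ℕ) : s (t * j) = s j := by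
  haveI : NeZero n := ⟨hn.ne'⟩
  set ζ := Complex.exp (2 * Real.pi * Complex.I / n) with hζdef
  have hζ : IsPrimitiveRoot ζ n := Complex.isPrimitiveRoot_exp n hn.ne'
  have hζint : IsIntegral ℚ ζ := (hζ.isIntegral hn).tower_top
  set L := ℚ⟮ζ⟯
  let pb : PowerBasis ℚ L := IntermediateField.adjoin.powerBasis hζint
  have hgen : algebraMap L ℂ pb.gen = ζ := IntermediateField.AdjoinSimple.algebraMap_gen ℚ ζ
  have hroot : aeval (ζ ^ t) (minpoly ℚ pb.gen) = 0 := by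
    show aeval (ζ ^ t) (minpoly ℚ (AdjoinSimple.gen ℚ ζ)) = 0
    rw [show minpoly ℚ (AdjoinSimple.gen ℚ ζ) = minpoly ℚ ζ from IntermediateField.minpoly_gen (F := ℚ) (α := ζ), ← cyclotomic_eq_minpoly_rat hζ hn]
    have hroot' := (hζ.pow_of_coprime t ht).isRoot_cyclotomic hn
    rw [aeval_def, eval₂_eq_eval_map, map_cyclotomic]
    exact hroot'
  let σ : L →ₐ[ℚ] ℂ := pb.lift (ζ ^ t) hroot
  have hσgen : σ pb.gen = ζ ^ t := PowerBasis.lift_gen pb (ζ ^ t) hroot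
  -- exponent function
  have hA : ∀ ω ∈ nthRootsFinset n (1 : ℂ), ∃ a : ℕ, ζ ^ a = ω := by
    intro ω hω
    obtain ⟨a, _, ha⟩ := hζ.eq_pow_of_pow_eq_one ((mem_nthRootsFinset hn (1 : ℂ)).mp hω)
    exact ⟨a, ha⟩
  choose A hA using hA
  -- the sum as an element of L
  have claim : ∀ m : ℕ, (algebraMap L ℂ)
      (∑ ω ∈ (nthRootsFinset n (1 : ℂ)).attach, (d ω : L) * pb.gen ^ (A ω ω.2 * m)) = (s m : ℂ) := by
    intro m
    rw [map_sum, hs m, ← Finset.sum_attach (nthRootsFinset n (1 : ℂ)) (fun ω => (d ω : ℂ) * ω ^ m)]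
    refine Finset.sum_congr rfl fun ω _ => ?_
    rw [map_mul, map_pow, hgen, map_natCast, pow_mul, hA ω ω.2]
  have claimL : ∀ m : ℕ, (∑ ω ∈ (nthRootsFinset n (1 : ℂ)).attach, (d ω : L) * pb.gen ^ (A ω ω.2 * m))
      = ((s m : ℤ) : L) := by
    intro m
    apply (algebraMap L ℂ).injective
    rw [claim m, map_intCast]
  -- apply σ
  have happ := congrArg σ (claimL j)
  rw [map_intCast, map_sum] at happ
  have key : (∑ ω ∈ (nthRootsFinset n (1 : ℂ)).attach, (d ω : ℂ) * (ω : ℂ) ^ (t * j)) = (s j : ℂ) := by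
    rw [← happ]
    refine Finset.sum_congr rfl fun ω _ => ?_
    rw [map_mul, map_pow, map_natCast, hσgen]
    congr 1
    have e1 : (ζ ^ t) ^ (A ω ω.2 * j) = (ζ ^ (A ω ω.2)) ^ (t * j) := by
      rw [← pow_mul, ← pow_mul]
      congr 1
      ring
    rw [e1, hA ω ω.2]
  rw [Finset.sum_attach (nthRootsFinset n (1 : ℂ)) (fun ω => (d ω : ℂ) * ω ^ (t * j)),
    ← hs (t * j)] at key
  exact_mod_cast key

lemma per_lemma (n : ℕ) (d : ℂ → ℕ) (s : ℕ → ℤ) (hn : 0 < n)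
    (hs : ∀ j : ℕ, (s j : ℂ) = ∑ ω ∈ nthRootsFinset n (1 : ℂ), (d ω : ℂ) * ω ^ j)
    {a b : ℕ} (hab : a ≡ b [MOD n]) : s a = s b := by
  have : (s a : ℂ) = (s b : ℂ) := by
    rw [hs a, hs b]
    refine Finset.sum_congr rfl fun ω hω => ?_
    rw [pow_congr_of_pow_eq_one ((mem_nthRootsFinset hn (1 : ℂ)).mp hω) hab]
  exact_mod_cast this

lemma fourier_lemma (n : ℕ) (d : ℂ → ℕ) (s : ℕ → ℤ) (hn : 0 < n)
    (hs : ∀ j : ℕ, (s j : ℂ) = ∑ ω ∈ nthRootsFinset n (1 : ℂ), (d ω : ℂ) * ω ^ j)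
    {ω : ℂ} (hω : ω ∈ nthRootsFinset n (1 : ℂ)) :
    (n : ℂ) * d ω = ∑ j ∈ range n, (s j : ℂ) * (ω⁻¹) ^ j := by
  have hω0 : ω ≠ 0 := ne_zero_of_mem_nthRootsFinset one_ne_zero hω
  have key : ∀ η ∈ nthRootsFinset n (1 : ℂ), ∑ j ∈ range n, (η * ω⁻¹) ^ j
      = if η = ω then (n : ℂ) else 0 := by
    intro η hη
    have hu : (η * ω⁻¹) ^ n = 1 := by
      rw [mul_pow, (mem_nthRootsFinset hn (1 : ℂ)).mp hη, inv_pow, (mem_nthRootsFinset hn (1 : ℂ)).mp hω]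
      simp
    split_ifs with h
    · subst h
      rw [mul_inv_cancel₀ hω0]
      simp
    · have hu1 : η * ω⁻¹ ≠ 1 := by
        intro hc
        exact h (by field_simp at hc; exact hc)
      rw [geom_sum_eq hu1, hu]
      simp
  calc (n : ℂ) * d ω = ∑ η ∈ nthRootsFinset n (1 : ℂ), (d η : ℂ) * (if η = ω then (n:ℂ) else 0) := by
        simp only [mul_ite, mul_zero, Finset.sum_ite_eq', hω, if_pos]
        ring
    _ = ∑ η ∈ nthRootsFinset n (1 : ℂ), (d η : ℂ) * ∑ j ∈ range n, (η * ω⁻¹) ^ j :=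
        Finset.sum_congr rfl fun η hη => by rw [key η hη]
    _ = ∑ η ∈ nthRootsFinset n (1 : ℂ), ∑ j ∈ range n, (d η : ℂ) * (η * ω⁻¹) ^ j :=
        Finset.sum_congr rfl fun η _ => Finset.mul_sum _ _ _
    _ = ∑ j ∈ range n, ∑ η ∈ nthRootsFinset n (1 : ℂ), (d η : ℂ) * (η * ω⁻¹) ^ j := Finset.sum_comm
    _ = ∑ j ∈ range n, (s j : ℂ) * (ω⁻¹) ^ j := by
        refine Finset.sum_congr rfl fun j _ => ?_
        rw [hs j, Finset.sum_mul]
        refine Finset.sum_congr rfl fun η _ => ?_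
        rw [mul_pow]
        ring

lemma four_lemma (n : ℕ) (d : ℂ → ℕ) (s : ℕ → ℤ) (hn : 0 < n)
    (hs : ∀ j : ℕ, (s j : ℂ) = ∑ ω ∈ nthRootsFinset n (1 : ℂ), (d ω : ℂ) * ω ^ j)
    (hinv : ∀ t j : ℕ, t.Coprime n → s (t * j) = s j)
    {t : ℕ} (ht : t.Coprime n) {ω : ℂ} (hω : ω ∈ nthRootsFinset n (1 : ℂ)) :
    d (ω ^ t) = d ω := by
  have hω0 : ω ≠ 0 := ne_zero_of_mem_nthRootsFinset one_ne_zero hω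
  have hωn : ω ^ n = 1 := (mem_nthRootsFinset hn (1 : ℂ)).mp hω
  haveI : NeZero n := ⟨hn.ne'⟩
  have hωt : ω ^ t ∈ nthRootsFinset n (1 : ℂ) := by
    rw [mem_nthRootsFinset hn (1 : ℂ), ← pow_mul, mul_comm, pow_mul, hωn, one_pow]
  -- inverse of t mod n
  set u0 : (ZMod n)ˣ := ZMod.unitOfCoprime t ht
  set t' : ℕ := ((u0⁻¹ : (ZMod n)ˣ) : ZMod n).val with ht'def
  have htt' : (t * t') % n = 1 % n := by
    have : ((t * t' : ℕ) : ZMod n) = ((1 : ℕ) : ZMod n) := by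
      push_cast
      rw [show ((t : ZMod n)) = (u0 : ZMod n) from (ZMod.coe_unitOfCoprime t ht).symm,
        ht'def, ZMod.natCast_val, ZMod.cast_id]
      exact_mod_cast u0.mul_inv
    exact (ZMod.natCast_eq_natCast_iff _ _ _).mp this
  have htt'' : ∀ a : ℕ, (t * t') * a ≡ a [MOD n] := by
    intro a
    calc (t * t') * a ≡ 1 * a [MOD n] := Nat.ModEq.mul_right a htt'
      _ = a := one_mul a
  -- reindexing
  have hrei : ∑ j ∈ range n, (s j : ℂ) * (ω⁻¹) ^ (t * j)
      = ∑ j ∈ range n, (s j : ℂ) * (ω⁻¹) ^ j := by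
    have hu : (ω⁻¹) ^ n = 1 := by rw [inv_pow, hωn, inv_one]
    refine Finset.sum_nbij' (fun j => t * j % n) (fun i => t' * i % n)
      (fun j hj => Finset.mem_range.mpr (Nat.mod_lt _ hn))
      (fun i hi => Finset.mem_range.mpr (Nat.mod_lt _ hn)) ?_ ?_ ?_
    · intro j hj
      have h1 : t' * (t * j % n) ≡ j [MOD n] := by
        calc t' * (t * j % n) ≡ t' * (t * j) [MOD n] := (Nat.mod_modEq _ n).mul_left t'
          _ = (t * t') * j := by ring
          _ ≡ j [MOD n] := htt'' j
      rw [Nat.ModEq] at h1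
      rwa [Nat.mod_eq_of_lt (Finset.mem_range.mp hj)] at h1
    · intro i hi
      have h1 : t * (t' * i % n) ≡ i [MOD n] := by
        calc t * (t' * i % n) ≡ t * (t' * i) [MOD n] := (Nat.mod_modEq _ n).mul_left t
          _ = (t * t') * i := by ring
          _ ≡ i [MOD n] := htt'' i
      rw [Nat.ModEq] at h1
      rwa [Nat.mod_eq_of_lt (Finset.mem_range.mp hi)] at h1
    · intro j _
      have e1 : s (t * j % n) = s j := by
        rw [per_lemma n d s hn hs (Nat.mod_modEq _ n)]
        exact hinv t j ht
      have e2 : (ω⁻¹) ^ (t * j % n) = (ω⁻¹) ^ (t * j) :=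
        pow_congr_of_pow_eq_one hu (Nat.mod_modEq _ n)
      rw [e1, e2]
  -- conclude
  have h1 := fourier_lemma n d s hn hs hωt
  have h2 := fourier_lemma n d s hn hs hω
  have h3 : ((ω ^ t)⁻¹ : ℂ) = (ω⁻¹) ^ t := by rw [inv_pow]
  have h4 : (n : ℂ) * d (ω ^ t) = (n : ℂ) * d ω := by
    rw [h1, h2, ← hrei]
    refine Finset.sum_congr rfl fun j _ => ?_
    rw [h3, ← pow_mul]
  have h5 : (d (ω ^ t) : ℂ) = d ω :=
    mul_left_cancel₀ (Nat.cast_ne_zero.mpr hn.ne') h4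
  exact_mod_cast h5

lemma core_lemma (n : ℕ) (hn : 0 < n) (d : ℂ → ℕ) (s : ℕ → ℤ)
    (hs : ∀ j : ℕ, (s j : ℂ) = ∑ ω ∈ nthRootsFinset n (1 : ℂ), (d ω : ℂ) * ω ^ j)
    (p k : ℕ) (hp : p.Prime) (hk : 1 ≤ k) :
    ∃ z : ℤ, s (p ^ k) - s (p ^ (k - 1)) = p ^ k * z := by
  haveI : NeZero n := ⟨hn.ne'⟩
  have hζ : IsPrimitiveRoot (Complex.exp (2 * Real.pi * Complex.I / n)) n :=
    Complex.isPrimitiveRoot_exp n hn.ne'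
  set ζ := Complex.exp (2 * Real.pi * Complex.I / n)
  have hinv := inv_lemma n hn d s hs
  -- decompose the difference over divisors
  have hdiff : ((s (p ^ k) : ℂ) - (s (p ^ (k - 1)) : ℂ))
      = ∑ r ∈ n.divisors, ∑ ω ∈ primitiveRoots r ℂ,
          (d ω : ℂ) * (ω ^ p ^ k - ω ^ p ^ (k - 1)) := by
    rw [hs, hs, ← Finset.sum_sub_distrib,
      Finset.sum_congr rfl (fun ω _ => (mul_sub (d ω : ℂ) _ _).symm),
      IsPrimitiveRoot.nthRoots_one_eq_biUnion_primitiveRoots,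
      Finset.sum_biUnion (fun i _ j _ hij => IsPrimitiveRoot.disjoint hij)]
  -- each divisor contributes a multiple of p^k
  have hper : ∀ r ∈ n.divisors, ∃ w : ℤ,
      ∑ ω ∈ primitiveRoots r ℂ, (d ω : ℂ) * (ω ^ p ^ k - ω ^ p ^ (k - 1))
        = (p:ℂ) ^ k * w := by
    intro r hr
    have hrdvd : r ∣ n := (Nat.mem_divisors.mp hr).1
    have hr0 : 0 < r := Nat.pos_of_mem_divisors hr
    haveI : NeZero r := ⟨hr0.ne'⟩
    have hζr : IsPrimitiveRoot (ζ ^ (n / r)) r :=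
      IsPrimitiveRoot.pow hn hζ (Nat.div_mul_cancel hrdvd).symm
    have hζrn : ζ ^ (n / r) ∈ nthRootsFinset n (1 : ℂ) := by
      rw [mem_nthRootsFinset hn (1 : ℂ), ← pow_mul, mul_comm, pow_mul, hζ.pow_eq_one, one_pow]
    -- constancy of d on primitive r-th roots
    have hconst : ∀ ω ∈ primitiveRoots r ℂ, d ω = d (ζ ^ (n / r)) := by
      intro ω hωmem
      have hω : IsPrimitiveRoot ω r := isPrimitiveRoot_of_mem_primitiveRoots hωmem
      obtain ⟨i, hilt, hii⟩ := hζr.eq_pow_of_pow_eq_one hω.pow_eq_one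
      have hcop : i.Coprime r := (hζr.pow_iff_coprime hr0 i).mp (by rw [hii]; exact hω)
      obtain ⟨w, hw⟩ := ZMod.unitsMap_surjective hrdvd (ZMod.unitOfCoprime i hcop)
      set tnat : ℕ := ((w : (ZMod n)ˣ) : ZMod n).val with htnatdef
      have htcop : tnat.Coprime n := ZMod.val_coe_unit_coprime w
      have htir : tnat ≡ i [MOD r] := by
        have h1 := congrArg Units.val hw
        rw [ZMod.unitsMap_def] at h1
        have h2 : (ZMod.castHom hrdvd (ZMod r)) ((w : (ZMod n)ˣ) : ZMod n)
            = ((i : ZMod r)) := by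
          rw [← ZMod.coe_unitOfCoprime i hcop, ← h1]
          rfl
        rw [← (ZMod.natCast_eq_natCast_iff tnat i r)] at *
        rw [← h2, htnatdef, ZMod.natCast_val, ZMod.castHom_apply]
      have hωeq : (ζ ^ (n / r)) ^ tnat = ω := by
        rw [pow_congr_of_pow_eq_one hζr.pow_eq_one htir, hii]
      rw [← hωeq, four_lemma n d s hn hs (fun t j ht => hinv t ht j) htcop hζrn]
    obtain ⟨z, hz⟩ := key_primroots p k hp hk r hr0
    refine ⟨(d (ζ ^ (n / r)) : ℤ) * z, ?_⟩
    rw [Finset.sum_congr rfl (fun ω hω => by rw [hconst ω hω]), ← Finset.mul_sum, hz]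
    push_cast
    ring
  choose wf hwf using hper
  refine ⟨∑ r ∈ n.divisors.attach, wf r r.2, ?_⟩
  have : ((s (p ^ k) : ℂ) - (s (p ^ (k - 1)) : ℂ))
      = (p:ℂ) ^ k * ∑ r ∈ n.divisors.attach, (wf r r.2 : ℂ) := by
    rw [hdiff, ← Finset.sum_attach n.divisors
      (fun r => ∑ ω ∈ primitiveRoots r ℂ, (d ω : ℂ) * (ω ^ p ^ k - ω ^ p ^ (k - 1))),
      Finset.mul_sum]
    exact Finset.sum_congr rfl fun r _ => hwf r r.2
  have hfin : ((s (p ^ k) - s (p ^ (k - 1)) : ℤ) : ℂ)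
      = (((p : ℤ) ^ k * ∑ r ∈ n.divisors.attach, wf r r.2 : ℤ) : ℂ) := by
    push_cast
    rw [this]
  exact_mod_cast hfin

theorem stmt_4 (G : Type*) [Group G] [Finite G]
    (V : Type*) [AddCommGroup V] [Module ℂ V] [FiniteDimensional ℂ V]
    (ρ : Representation ℂ G V)
    (hint : ∀ g : G, ∃ z : ℤ, LinearMap.trace ℂ V (ρ g) = (z : ℂ))
    (g : G) (p : ℕ) (hp : p.Prime) (k : ℕ) (hk : 1 ≤ k) :
    ∃ c : ℤ, LinearMap.trace ℂ V (ρ (g ^ p ^ k)) - LinearMap.trace ℂ V (ρ (g ^ p ^ (k - 1)))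
      = (p : ℂ) ^ k * (c : ℂ) := by
  set n := orderOf g with hndef
  have hn : 0 < n := orderOf_pos g
  set f : Module.End ℂ V := ρ g with hfdef
  have hfn : f ^ n = 1 := by rw [hfdef, ← map_pow, pow_orderOf_eq_one, map_one]
  -- action of powers of f on eigenspaces
  have hpow : ∀ (μ : ℂ) (v : V), v ∈ f.eigenspace μ → ∀ m : ℕ, (f ^ m) v = μ ^ m • v := by
    intro μ v hv m
    induction m with
    | zero => simp
    | succ m ihm =>
      rw [pow_succ', pow_succ', Module.End.mul_apply, ihm, map_smul,
        Module.End.mem_eigenspace_iff.mp hv, smul_smul, mul_comm]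
  -- eigenvalues are n-th roots of unity
  have hbot : ∀ μ : ℂ, μ ∉ nthRootsFinset n (1 : ℂ) → f.eigenspace μ = ⊥ := by
    intro μ hμ
    rw [eq_bot_iff]
    intro v hv
    have h1 : (f ^ n) v = μ ^ n • v := hpow μ v hv n
    rw [hfn, Module.End.one_apply] at h1
    have h2 : (μ ^ n - 1) • v = 0 := by rw [sub_smul, one_smul, ← h1, sub_self]
    have h3 : μ ^ n ≠ 1 := fun hc => hμ ((mem_nthRootsFinset hn (1 : ℂ)).mpr hc)
    rcases smul_eq_zero.mp h2 with h | h
    · exact absurd (sub_eq_zero.mp h) h3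
    · simpa using h
  -- semisimplicity
  have hsq : Squarefree (X ^ n - 1 : ℂ[X]) :=
    ((Polynomial.X_pow_sub_one_separable_iff).mpr (by exact_mod_cast Nat.cast_ne_zero.mpr hn.ne')).squarefree
  have haeval : Polynomial.aeval f (X ^ n - 1 : ℂ[X]) = 0 := by
    rw [map_sub, map_one, aeval_X_pow, hfn, sub_self]
  have hss : f.IsSemisimple := Module.End.isSemisimple_of_squarefree_aeval_eq_zero hsq haeval
  have htop0 : ⨆ μ : ℂ, f.eigenspace μ = ⊤ := by
    have h1 := Module.End.iSup_maxGenEigenspace_eq_top f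
    calc ⨆ μ : ℂ, f.eigenspace μ = ⨆ μ : ℂ, f.maxGenEigenspace μ := by
          exact iSup_congr fun μ =>
            (hss.isFinitelySemisimple.maxGenEigenspace_eq_eigenspace μ).symm
      _ = ⊤ := h1
  -- the internal direct sum over n-th roots of unity
  set N : {x // x ∈ nthRootsFinset n (1 : ℂ)} → Submodule ℂ V :=
    fun ω => f.eigenspace (ω : ℂ) with hNdef
  have hindep : iSupIndep N := (f.eigenspaces_iSupIndep).comp Subtype.coe_injective
  have hsup : iSup N = ⊤ := by
    rw [eq_top_iff, ← htop0]
    refine iSup_le fun μ => ?_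
    by_cases hμ : μ ∈ nthRootsFinset n (1 : ℂ)
    · exact le_iSup N ⟨μ, hμ⟩
    · rw [hbot μ hμ]
      exact bot_le
  have hInternal : DirectSum.IsInternal N :=
    (DirectSum.isInternal_submodule_iff_iSupIndep_and_iSup_eq_top N).mpr ⟨hindep, hsup⟩
  -- the data for the core lemma
  set d : ℂ → ℕ := fun μ => Module.finrank ℂ (f.eigenspace μ) with hddef
  set s : ℕ → ℤ := fun j => (hint (g ^ j)).choose with hsdef
  have hs_trace : ∀ j : ℕ, LinearMap.trace ℂ V (ρ (g ^ j)) = ((s j : ℤ) : ℂ) :=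
    fun j => (hint (g ^ j)).choose_spec
  have hs : ∀ j : ℕ, (s j : ℂ) = ∑ ω ∈ nthRootsFinset n (1 : ℂ), (d ω : ℂ) * ω ^ j := by
    intro j
    have hmaps : ∀ ω : {x // x ∈ nthRootsFinset n (1 : ℂ)},
        Set.MapsTo (f ^ j) (N ω) (N ω) := by
      intro ω v hv
      have hv' : v ∈ f.eigenspace (ω : ℂ) := hv
      show (f ^ j) v ∈ f.eigenspace (ω : ℂ)
      rw [hpow (ω : ℂ) v hv' j]
      exact Submodule.smul_mem _ _ hv'
    have h0 : (s j : ℂ) = LinearMap.trace ℂ V (f ^ j) := by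
      rw [← hs_trace j, hfdef, ← map_pow]
    have h1 := LinearMap.trace_eq_sum_trace_restrict hInternal hmaps
    have h2 : ∀ ω : {x // x ∈ nthRootsFinset n (1 : ℂ)},
        LinearMap.trace ℂ (N ω) ((f ^ j).restrict (hmaps ω)) = (d (ω : ℂ) : ℂ) * (ω : ℂ) ^ j := by
      intro ω
      have hres : (f ^ j).restrict (hmaps ω) = ((ω : ℂ) ^ j) • (LinearMap.id : N ω →ₗ[ℂ] N ω) := by
        apply LinearMap.ext
        intro x
        apply Subtype.ext
        have hx : (x : V) ∈ f.eigenspace (ω : ℂ) := x.2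
        simp only [LinearMap.restrict_apply, LinearMap.smul_apply, LinearMap.id_apply,
          SetLike.val_smul]
        exact hpow (ω : ℂ) x hx j
      rw [hres, map_smul, LinearMap.trace_id]
      simp [hddef, mul_comm]
      exact Or.inl rfl
    rw [h0, h1, Finset.sum_congr rfl (fun ω _ => h2 ω)]
    exact Finset.sum_coe_sort (nthRootsFinset n (1 : ℂ)) (fun ω => (d ω : ℂ) * ω ^ j)
  obtain ⟨z, hz⟩ := core_lemma n hn d s hs p k hp hk
  refine ⟨z, ?_⟩
  rw [hs_trace (p ^ k), hs_trace (p ^ (k - 1))]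
  exact_mod_cast hz
end

section
/- Let M be a square matrix of finite order over ℂ (i.e. M^m = 1 for some m ≥ 1) such that Tr(M^n) is an integer for every n ≥ 1. Then every coefficient of the characteristic polynomial of M is an integer. -/
open Polynomial Matrix

lemma aux_eval_charpoly {r : ℕ} (N : Matrix (Fin r) (Fin r) ℂ) (x : ℂ) :
    N.charpoly.eval x = (x • (1 : Matrix (Fin r) (Fin r) ℂ) - N).det := by
  rw [Matrix.charpoly, eval_det, Matrix.matPolyEquiv_charmatrix]
  simp [Matrix.scalar_apply, Matrix.smul_one_eq_diagonal]

lemma aux_key {r : ℕ} (M : Matrix (Fin r) (Fin r) ℂ) (n : ℕ) (hn : 1 ≤ n) :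
    (M ^ n).charpoly = ((M.charpoly.roots.map (· ^ n)).map (fun a => X - C a)).prod := by
  set T : Multiset ℂ := M.charpoly.roots with hT
  have hcardT : Multiset.card T = r := by
    rw [hT, (splits_iff_card_roots).mp (IsAlgClosed.splits _),
      Matrix.charpoly_natDegree_eq_dim, Fintype.card_fin]
  have hprodT : M.charpoly = (T.map (fun a => X - C a)).prod :=
    (IsAlgClosed.splits _).eq_prod_roots_of_monic M.charpoly_monic
  apply Polynomial.funext
  intro x
  set S : Multiset ℂ := (X ^ n - C x).roots with hS
  have hmonic : (X ^ n - C x).Monic := monic_X_pow_sub_C x (by omega)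
  have hprodS : (X ^ n - C x) = (S.map (fun a => X - C a)).prod :=
    (IsAlgClosed.splits _).eq_prod_roots_of_monic hmonic
  have hcardS : Multiset.card S = n := by
    rw [hS, (splits_iff_card_roots).mp (IsAlgClosed.splits _),
      natDegree_X_pow_sub_C]
  set L : List ℂ := S.toList with hL
  have hLS : (L : Multiset ℂ) = S := Multiset.coe_toList S
  -- matrix identity via list product
  have hprodS' : (X ^ n - C x) = (L.map (fun a => X - C a)).prod := by
    rw [hprodS, ← hLS]
    simp
  have hmat : M ^ n - x • (1 : Matrix (Fin r) (Fin r) ℂ) =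
      (L.map (fun w => M - w • 1)).prod := by
    have := congrArg (Polynomial.aeval M) hprodS'
    rw [map_sub, map_pow, aeval_X, aeval_C, map_list_prod, List.map_map] at this
    rw [Algebra.algebraMap_eq_smul_one] at this
    convert this using 2
    · rfl
    · rfl
    apply List.map_congr_left
    intro w _
    simp [Algebra.algebraMap_eq_smul_one]
  have hdetmat : (M ^ n - x • (1 : Matrix (Fin r) (Fin r) ℂ)).det
      = (S.map (fun w => (M - w • 1).det)).prod := by
    rw [hmat, ← Matrix.coe_detMonoidHom, MonoidHom.map_list_prod, List.map_map, ← hLS]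
    rfl
  have hinner : ∀ w : ℂ, (M - w • 1).det = (-1 : ℂ) ^ r * (T.map (fun l => w - l)).prod := by
    intro w
    have h1 : (M - w • 1).det = (-1 : ℂ) ^ r * (w • (1 : Matrix (Fin r) (Fin r) ℂ) - M).det := by
      rw [← neg_sub, Matrix.det_neg, Fintype.card_fin]
    rw [h1, ← aux_eval_charpoly, hprodT, eval_multiset_prod, Multiset.map_map]
    simp
  have hswap : (S.map (fun w => (T.map (fun l => w - l)).prod)).prod
      = (T.map (fun l => (S.map (fun w => w - l)).prod)).prod :=
    Multiset.prod_map_prod_map S T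
  have hinner2 : ∀ l : ℂ, (S.map (fun w => w - l)).prod = (-1 : ℂ) ^ n * (l ^ n - x) := by
    intro l
    have : (l ^ n - x) = (S.map (fun w => l - w)).prod := by
      have := congrArg (Polynomial.eval l) hprodS
      simpa [eval_multiset_prod, Multiset.map_map] using this
    calc (S.map (fun w => w - l)).prod = (S.map (fun w => (-1) * (l - w))).prod := by
            apply congrArg; apply Multiset.map_congr rfl; intro w _; ring
      _ = ((S.map (fun _ => (-1 : ℂ))).prod) * (S.map (fun w => l - w)).prod := by
            rw [← Multiset.prod_map_mul]
      _ = (-1 : ℂ) ^ n * (l ^ n - x) := by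
            rw [Multiset.map_const', Multiset.prod_replicate, hcardS, this]
  have hcalc : ((M ^ n).charpoly).eval x
      = (((T.map (· ^ n)).map (fun a => X - C a)).prod).eval x := calc ((M ^ n).charpoly).eval x
      = (x • (1 : Matrix (Fin r) (Fin r) ℂ) - M ^ n).det := aux_eval_charpoly _ _
    _ = (-1 : ℂ) ^ r * (M ^ n - x • (1 : Matrix (Fin r) (Fin r) ℂ)).det := by
          rw [← neg_sub, Matrix.det_neg, Fintype.card_fin]
    _ = (-1 : ℂ) ^ r * (S.map (fun w => (M - w • 1).det)).prod := by rw [hdetmat]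
    _ = (-1 : ℂ) ^ r * (((-1 : ℂ) ^ r) ^ n * (S.map (fun w => (T.map (fun l => w - l)).prod)).prod) := by
          congr 1
          calc (S.map (fun w => (M - w • 1).det)).prod
              = (S.map (fun w => (-1 : ℂ) ^ r * (T.map (fun l => w - l)).prod)).prod := by
                apply congrArg; exact Multiset.map_congr rfl (fun w _ => hinner w)
            _ = ((S.map (fun _ => (-1 : ℂ) ^ r)).prod) * (S.map (fun w => (T.map (fun l => w - l)).prod)).prod := by
                rw [← Multiset.prod_map_mul]
            _ = ((-1 : ℂ) ^ r) ^ n * (S.map (fun w => (T.map (fun l => w - l)).prod)).prod := by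
                rw [Multiset.map_const', Multiset.prod_replicate, hcardS]
    _ = (-1 : ℂ) ^ r * (((-1 : ℂ) ^ r) ^ n * (T.map (fun l => (S.map (fun w => w - l)).prod)).prod) := by
          rw [hswap]
    _ = (-1 : ℂ) ^ r * (((-1 : ℂ) ^ r) ^ n * (((-1 : ℂ) ^ n) ^ r * (T.map (fun l => l ^ n - x)).prod)) := by
          congr 1
          congr 1
          calc (T.map (fun l => (S.map (fun w => w - l)).prod)).prod
              = (T.map (fun l => (-1 : ℂ) ^ n * (l ^ n - x))).prod := by
                apply congrArg; exact Multiset.map_congr rfl (fun l _ => hinner2 l)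
            _ = ((T.map (fun _ => (-1 : ℂ) ^ n)).prod) * (T.map (fun l => l ^ n - x)).prod := by
                rw [← Multiset.prod_map_mul]
            _ = ((-1 : ℂ) ^ n) ^ r * (T.map (fun l => l ^ n - x)).prod := by
                rw [Multiset.map_const', Multiset.prod_replicate, hcardT]
    _ = (-1 : ℂ) ^ r * (T.map (fun l => l ^ n - x)).prod := by
          rw [← pow_mul, ← pow_mul, Nat.mul_comm r n]
          congr 1
          rw [← mul_assoc, ← pow_add, Even.neg_one_pow ⟨n * r, rfl⟩, one_mul]
    _ = (T.map (fun l => x - l ^ n)).prod := by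
          calc (-1 : ℂ) ^ r * (T.map (fun l => l ^ n - x)).prod
              = ((T.map (fun _ => (-1 : ℂ))).prod) * (T.map (fun l => l ^ n - x)).prod := by
                rw [Multiset.map_const', Multiset.prod_replicate, hcardT]
            _ = (T.map (fun l => (-1) * (l ^ n - x))).prod := by rw [← Multiset.prod_map_mul]
            _ = _ := by apply congrArg; apply Multiset.map_congr rfl; intro l _; ring
    _ = (((T.map (· ^ n)).map (fun a => X - C a)).prod).eval x := by
          rw [eval_multiset_prod, Multiset.map_map, Multiset.map_map]
          refine congrArg Multiset.prod (Multiset.map_congr rfl fun l _ => ?_)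
          simp
  exact hcalc

lemma aux_roots_pow {r : ℕ} (M : Matrix (Fin r) (Fin r) ℂ) {n : ℕ} (hn : 1 ≤ n) :
    (M ^ n).charpoly.roots = M.charpoly.roots.map (· ^ n) := by
  rw [aux_key M n hn]
  exact roots_multiset_prod_X_sub_C _

lemma aux_charpoly_one {r : ℕ} :
    (1 : Matrix (Fin r) (Fin r) ℂ).charpoly = (X - C 1) ^ r := by
  have : (1 : Matrix (Fin r) (Fin r) ℂ).charpoly
      = ((Multiset.replicate r (1 : ℂ)).map (fun a => X - C a)).prod := by
    apply Polynomial.funext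
    intro x
    rw [aux_eval_charpoly, eval_multiset_prod, Multiset.map_map]
    have : x • (1 : Matrix (Fin r) (Fin r) ℂ) - 1 = (x - 1) • 1 := by
      rw [sub_smul, one_smul]
    rw [this, Matrix.det_smul, det_one, mul_one, Fintype.card_fin, Multiset.map_replicate,
      Multiset.prod_replicate]
    simp
  rw [this, Multiset.map_replicate, Multiset.prod_replicate]

lemma aux_root_pow_eq_one {r : ℕ} {M : Matrix (Fin r) (Fin r) ℂ} {m : ℕ} (hm : 1 ≤ m)
    (h1 : M ^ m = 1) : ∀ l ∈ M.charpoly.roots, l ^ m = 1 := by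
  intro l hl
  have h := aux_roots_pow M hm
  rw [h1, aux_charpoly_one] at h
  have : l ^ m ∈ Multiset.map (· ^ m) M.charpoly.roots := Multiset.mem_map_of_mem _ hl
  rw [← h, roots_pow, roots_X_sub_C] at this
  simp only [Multiset.mem_nsmul, Multiset.mem_singleton] at this
  exact this.2

lemma aux_trace {r : ℕ} (M : Matrix (Fin r) (Fin r) ℂ) {n : ℕ} (hn : 1 ≤ n) :
    (M ^ n).trace = (M.charpoly.roots.map (· ^ n)).sum := by
  rw [Matrix.trace_eq_sum_roots_charpoly, aux_roots_pow M hn]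

lemma aux_rat_int (x : ℂ) (hx : IsIntegral ℤ x) (q : ℚ) (hq : x = (q : ℂ)) :
    ∃ z : ℤ, x = (z : ℂ) := by
  have hinj : Function.Injective (algebraMap ℚ ℂ) := (algebraMap ℚ ℂ).injective
  have hq' : IsIntegral ℤ q := by
    apply IsIntegral.tower_bot (A := ℚ) (B := ℂ) hinj
    have : algebraMap ℚ ℂ q = x := by rw [hq]; rfl
    rwa [this]
  obtain ⟨z, hz⟩ := IsIntegrallyClosed.isIntegral_iff.mp hq'
  refine ⟨z, ?_⟩
  rw [hq, ← hz]
  rfl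

lemma aux_esymm_integral {r : ℕ} {M : Matrix (Fin r) (Fin r) ℂ}
    (hroot : ∀ l ∈ M.charpoly.roots, IsIntegral ℤ l) (k : ℕ) :
    IsIntegral ℤ (M.charpoly.roots.esymm k) := by
  have : M.charpoly.roots.esymm k ∈ integralClosure ℤ ℂ := by
    rw [Multiset.esymm]
    apply Subalgebra.multiset_sum_mem
    intro x hx
    simp only [Multiset.mem_map] at hx
    obtain ⟨u, hu, rfl⟩ := hx
    rw [Multiset.mem_powersetCard] at hu
    apply Subalgebra.multiset_prod_mem
    intro y hy
    exact hroot y (Multiset.mem_of_le hu.1 hy)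
  exact this

lemma aux_enum {r : ℕ} (T : Multiset ℂ) (h : Multiset.card T = r) :
    ∃ f : Fin r → ℂ, (Finset.univ.val : Multiset (Fin r)).map f = T := by
  have hl : T.toList.length = r := by rw [Multiset.length_toList, h]
  refine ⟨fun i => T.toList.get (Fin.cast hl.symm i), ?_⟩
  have h1 : (Finset.univ.val : Multiset (Fin r)) = ↑(List.finRange r) := rfl
  rw [h1, Multiset.map_coe, ← List.ofFn_eq_map]
  have : List.ofFn (fun i : Fin r => T.toList.get (Fin.cast hl.symm i)) = T.toList := by
    apply List.ext_getElem
    · simp [hl]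
    · intro i h1 h2
      simp
  rw [this, Multiset.coe_toList]

lemma aux_newton {r : ℕ} (T : Multiset ℂ) (hcard : Multiset.card T = r) (k : ℕ) :
    (k : ℂ) * T.esymm k = (-1) ^ (k + 1) *
      ∑ a ∈ Finset.HasAntidiagonal.antidiagonal k with a.1 < k,
        (-1) ^ a.1 * T.esymm a.1 * (T.map (· ^ a.2)).sum := by
  obtain ⟨f, hf⟩ := aux_enum T hcard
  have hpsum : ∀ j : ℕ, MvPolynomial.aeval f (MvPolynomial.psum (Fin r) ℂ j)
      = (T.map (· ^ j)).sum := by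
    intro j
    rw [MvPolynomial.psum, map_sum, ← hf, Multiset.map_map]
    simp only [map_pow, MvPolynomial.aeval_X]
    rfl
  have h := congrArg (MvPolynomial.aeval f) (MvPolynomial.mul_esymm_eq_sum (Fin r) ℂ k)
  simp only [_root_.map_mul, map_natCast, map_pow, _root_.map_neg, _root_.map_one, map_sum,
    MvPolynomial.aeval_esymm_eq_multiset_esymm, hpsum, hf] at h
  exact h

theorem stmt_5 (r : ℕ) (M : Matrix (Fin r) (Fin r) ℂ)
    (hfin : ∃ m : ℕ, 1 ≤ m ∧ M ^ m = 1)
    (htr : ∀ n : ℕ, 1 ≤ n → ∃ z : ℤ, (M ^ n).trace = (z : ℂ)) :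
    ∀ i : ℕ, ∃ z : ℤ, M.charpoly.coeff i = (z : ℂ) := by
  obtain ⟨m, hm, hMm⟩ := hfin
  have hcardT : Multiset.card M.charpoly.roots = r := by
    rw [(splits_iff_card_roots).mp (IsAlgClosed.splits _),
      Matrix.charpoly_natDegree_eq_dim, Fintype.card_fin]
  have hdeg : M.charpoly.natDegree = r := by
    rw [Matrix.charpoly_natDegree_eq_dim, Fintype.card_fin]
  -- integrality of roots
  have hroot : ∀ l ∈ M.charpoly.roots, IsIntegral ℤ l := by
    intro l hl
    refine ⟨X ^ m - C 1, monic_X_pow_sub_C 1 (by omega), ?_⟩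
    have h1 : l ^ m = 1 := aux_root_pow_eq_one hm hMm l hl
    simp [h1]
  have hint : ∀ k, IsIntegral ℤ (M.charpoly.roots.esymm k) := aux_esymm_integral hroot
  -- trace values are integers
  have htrz : ∀ j : ℕ, 1 ≤ j → ∃ z : ℤ, (M.charpoly.roots.map (· ^ j)).sum = (z : ℂ) := by
    intro j hj
    obtain ⟨z, hz⟩ := htr j hj
    exact ⟨z, by rw [← aux_trace M hj, hz]⟩
  -- rationality of esymm by strong induction
  set F : Subfield ℂ := (Rat.castHom ℂ).fieldRange with hF
  have hratF : ∀ k, M.charpoly.roots.esymm k ∈ F := by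
    intro k
    induction k using Nat.strong_induction_on with
    | _ k ih =>
      rcases Nat.eq_zero_or_pos k with hk0 | hk0
      · subst hk0
        have : M.charpoly.roots.esymm 0 = 1 := by
          simp [Multiset.esymm, Multiset.powersetCard_zero_left]
        rw [this]
        exact one_mem F
      · have hnewton := aux_newton M.charpoly.roots hcardT k
        have hkne : (k : ℂ) ≠ 0 := Nat.cast_ne_zero.mpr (by omega)
        have heq : M.charpoly.roots.esymm k = (k : ℂ)⁻¹ * ((-1) ^ (k + 1) *
            ∑ a ∈ Finset.HasAntidiagonal.antidiagonal k with a.1 < k,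
              (-1) ^ a.1 * M.charpoly.roots.esymm a.1
                * (M.charpoly.roots.map (· ^ a.2)).sum) := by
          rw [← hnewton, inv_mul_cancel_left₀ hkne]
        rw [heq]
        have hkF : (k : ℂ) ∈ F := ⟨(k : ℚ), by push_cast; rfl⟩
        refine mul_mem (inv_mem hkF) (mul_mem (pow_mem (neg_mem (one_mem F)) _) ?_)
        apply Subfield.sum_mem
        intro a ha
        simp only [Finset.mem_filter, Finset.HasAntidiagonal.mem_antidiagonal] at ha
        have ha2 : 1 ≤ a.2 := by omega
        obtain ⟨z, hz⟩ := htrz a.2 ha2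
        refine mul_mem (mul_mem (pow_mem (neg_mem (one_mem F)) _) (ih a.1 ha.2)) ?_
        rw [hz]
        exact ⟨(z : ℚ), by push_cast; rfl⟩
  -- assemble
  intro i
  rcases le_or_gt i r with hi | hi
  · have hcoeff : M.charpoly.coeff i = M.charpoly.leadingCoeff * (-1) ^ (r - i)
        * M.charpoly.roots.esymm (r - i) := by
      have := Polynomial.coeff_eq_esymm_roots_of_card
        (by rw [hcardT, hdeg]) (k := i) (by rw [hdeg]; exact hi)
      rwa [hdeg] at this
    rw [M.charpoly_monic.leadingCoeff, one_mul] at hcoeff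
    obtain ⟨q, hq⟩ := hratF (r - i)
    have hq' : M.charpoly.roots.esymm (r - i) = ((q : ℚ) : ℂ) := hq.symm
    obtain ⟨z, hz⟩ := aux_rat_int _ (hint (r - i)) q hq'
    refine ⟨(-1) ^ (r - i) * z, ?_⟩
    rw [hcoeff, hz]
    push_cast
    ring
  · refine ⟨0, ?_⟩
    rw [Polynomial.coeff_eq_zero_of_natDegree_lt (by rw [hdeg]; exact hi)]
    simp
end

section
/- Let f be a square matrix with integer entries, p a prime, and k ≥ 1. Then the characteristic polynomials of f^(p^k) and of f^(p^(k−1)) are congruent coefficient-wise modulo p^k: for every i, the coefficient of t^i in the characteristic polynomial of f^(p^k) is congruent modulo p^k to the coefficient of t^i in the characteristic polynomial of f^(p^(k−1))). -/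
-- enumeration of a multiset of known cardinality
lemma exists_enum {α : Type*} {r : ℕ} (μ : Multiset α) (h : Multiset.card μ = r) :
    ∃ g : Fin r → α, Multiset.map g Finset.univ.val = μ := by
  subst h
  have hlen : μ.toList.length = Multiset.card μ := Multiset.length_toList μ
  refine ⟨fun i => μ.toList.get (Fin.cast hlen.symm i), ?_⟩
  conv_rhs => rw [← μ.coe_toList]
  have huniv : (Finset.univ.val : Multiset (Fin (Multiset.card μ)))
      = ((List.finRange (Multiset.card μ) : List (Fin (Multiset.card μ))) : Multiset (Fin (Multiset.card μ))) := rfl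
  rw [huniv, Multiset.map_coe, Multiset.coe_eq_coe]
  apply List.Perm.of_eq
  apply List.ext_get
  · simp [hlen]
  · intro n h1 h2
    simp [List.get_finRange]


open Polynomial Matrix

lemma multiset_prod_comm' {α β γ : Type*} [CommMonoid γ] (s : Multiset α) (t : Multiset β)
    (f : α → β → γ) :
    (s.map (fun a => (t.map (f a)).prod)).prod = (t.map (fun b => (s.map (fun a => f a b)).prod)).prod := by
  induction s using Multiset.induction with
  | empty => simp
  | cons a s ih => simp [ih, Multiset.prod_map_mul]

variable {L : Type*} [Field L] [IsAlgClosed L] [CharZero L] {r : ℕ}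

lemma eval_charpoly (M : Matrix (Fin r) (Fin r) L) (t : L) :
    (M.charpoly).eval t = ((t • (1 : Matrix (Fin r) (Fin r) L)) - M).det := by
  rw [Matrix.charpoly, ← Polynomial.coe_evalRingHom, RingHom.map_det]
  congr 1
  ext i j
  simp [charmatrix_apply, Matrix.smul_apply, Matrix.one_apply, Matrix.sub_apply,
    Matrix.diagonal_apply]
  split <;> simp

-- main lemma A
lemma charpoly_pow_eq (M : Matrix (Fin r) (Fin r) L) (μ : Multiset L)
    (hμ : M.charpoly = (μ.map (fun a => X - C a)).prod) (hcard : Multiset.card μ = r)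
    (n : ℕ) (hn : 0 < n) :
    (M ^ n).charpoly = ((μ.map (fun a => a ^ n)).map (fun a => X - C a)).prod := by
  apply Polynomial.funext
  intro t
  -- roots of X^n - C t
  have hmon : (X ^ n - C t).Monic := monic_X_pow_sub_C t hn.ne'
  have hsplit : Splits (X ^ n - C t) := IsAlgClosed.splits _
  set s : Multiset L := (X ^ n - C t).roots with hs
  have hprod : X ^ n - C t = (s.map (fun a => X - C a)).prod :=
    hsplit.eq_prod_roots_of_monic hmon
  have hscard : Multiset.card s = n := by
    rw [hs, Polynomial.splits_iff_card_roots.mp hsplit, Polynomial.natDegree_X_pow_sub_C]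

  -- the det-aeval monoid hom
  let D : L[X] →* L :=
    Matrix.detMonoidHom.comp ((Polynomial.aeval (M : Matrix (Fin r) (Fin r) L)).toRingHom.toMonoidHom)
  have hD : ∀ q : L[X], D q = ((Polynomial.aeval M) q).det := fun q => rfl
  -- LHS
  have lhs1 : ((M ^ n).charpoly).eval t = (-1 : L) ^ r * ((Polynomial.aeval M) (X ^ n - C t)).det := by
    rw [_root_.eval_charpoly]
    have : (Polynomial.aeval M) (X ^ n - C t) = -(t • (1 : Matrix (Fin r) (Fin r) L) - M ^ n) := by
      simp [Polynomial.aeval_X_pow, Algebra.algebraMap_eq_smul_one]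
    rw [this, Matrix.det_neg]
    simp [Fintype.card_fin]
    rw [← mul_assoc, ← pow_add, ← two_mul, pow_mul]
    simp
  -- compute D of the product
  have hDfac : ∀ a : L, D (X - C a) = (-1 : L) ^ r * (μ.map (fun l => a - l)).prod := by
    intro a
    rw [hD]
    have : (Polynomial.aeval M) (X - C a) = -(a • (1 : Matrix (Fin r) (Fin r) L) - M) := by
      simp [Algebra.algebraMap_eq_smul_one]
    rw [this, Matrix.det_neg, Fintype.card_fin, ← _root_.eval_charpoly M a, hμ,
      Polynomial.eval_multiset_prod, Multiset.map_map]
    simp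
  have lhs2 : ((M ^ n).charpoly).eval t
      = (-1 : L) ^ r * ((-1 : L) ^ (r * n) * (s.map (fun a => (μ.map (fun l => a - l)).prod)).prod) := by
    rw [lhs1, ← hD, hprod, map_multiset_prod, Multiset.map_map]
    congr 1
    have : (s.map (fun a => D (X - C a))).prod
        = (s.map (fun a => (-1 : L) ^ r * (μ.map (fun l => a - l)).prod)).prod := by
      congr 1; exact Multiset.map_congr rfl (fun a _ => hDfac a)
    simpa [Multiset.prod_map_mul, hscard, pow_mul, Function.comp] using this
  -- RHS
  have hval : ∀ l : L, t - l ^ n = (-1 : L) ^ (n + 1) * (s.map (fun a => a - l)).prod := by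
    intro l
    have h1 : l ^ n - t = (s.map (fun a => l - a)).prod := by
      have := congrArg (Polynomial.eval l) hprod
      simpa [Polynomial.eval_multiset_prod, Multiset.map_map] using this
    have h2 : (s.map (fun a => l - a)).prod = (-1 : L) ^ n * (s.map (fun a => a - l)).prod := by
      have : (s.map (fun a => l - a)) = (s.map (fun a => (-1 : L) * (a - l))) := by
        apply Multiset.map_congr rfl; intro a _; ring
      rw [this]
      rw [show (fun a : L => -1 * (a - l)) = (fun a : L => (fun _ => (-1:L)) a * (fun a : L => a - l) a) from rfl,
        Multiset.prod_map_mul, Multiset.map_const', Multiset.prod_replicate, hscard]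
    have : t - l ^ n = -(l ^ n - t) := by ring
    rw [this, h1, h2, pow_succ]
    ring
  have rhs2 : (((μ.map (fun a => a ^ n)).map (fun a => X - C a)).prod).eval t
      = (-1 : L) ^ ((n + 1) * r) * (μ.map (fun l => (s.map (fun a => a - l)).prod)).prod := by
    rw [Polynomial.eval_multiset_prod, Multiset.map_map, Multiset.map_map]
    have : (μ.map (fun l => Polynomial.eval t (X - C (l ^ n))))
        = μ.map (fun l => (-1 : L) ^ (n + 1) * (s.map (fun a => a - l)).prod) := by
      apply Multiset.map_congr rfl; intro l _; simpa using hval l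
    simp only [Function.comp_def]
    rw [this]
    simp [Multiset.prod_map_mul, hcard, pow_mul]
  rw [lhs2, rhs2, multiset_prod_comm' s μ (fun a l => a - l),
    show (n + 1) * r = r + r * n by ring, pow_add]
  ring


open Polynomial Matrix MvPolynomial

variable {r p : ℕ}

lemma pdvd_of_map_zero (hp : p.Prime) (y : MvPolynomial (Fin r) ℤ)
    (h : MvPolynomial.map (Int.castRingHom (ZMod p)) y = 0) :
    (p : MvPolynomial (Fin r) ℤ) ∣ y := by
  have h2 : ∀ m, (p : ℤ) ∣ y.coeff m := by
    intro m
    have := congrArg (fun q => MvPolynomial.coeff m q) h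
    simp only [MvPolynomial.coeff_map, MvPolynomial.coeff_zero] at this
    exact_mod_cast (ZMod.intCast_zmod_eq_zero_iff_dvd _ _).mp this
  have := (MvPolynomial.C_dvd_iff_dvd_coeff ((p : ℤ)) y).mpr h2
  rwa [show (MvPolynomial.C ((p : ℤ)) : MvPolynomial (Fin r) ℤ) = (p : MvPolynomial (Fin r) ℤ) by
    push_cast; simp] at this

lemma frob_lift (hp : p.Prime) (x : MvPolynomial (Fin r) ℤ) :
    (p : MvPolynomial (Fin r) ℤ) ∣
      (MvPolynomial.bind₁ (fun i => (MvPolynomial.X i : MvPolynomial (Fin r) ℤ) ^ p)) x - x ^ p := by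
  haveI : Fact p.Prime := ⟨hp⟩
  apply pdvd_of_map_zero hp
  rw [map_sub, map_pow, sub_eq_zero]
  have key : (MvPolynomial.map (Int.castRingHom (ZMod p))).comp
      ((MvPolynomial.bind₁ (fun i => (MvPolynomial.X i : MvPolynomial (Fin r) ℤ) ^ p)) : MvPolynomial (Fin r) ℤ →+* MvPolynomial (Fin r) ℤ)
      = (frobenius (MvPolynomial (Fin r) (ZMod p)) p).comp (MvPolynomial.map (Int.castRingHom (ZMod p))) := by
    apply MvPolynomial.ringHom_ext
    · intro a
      simp [frobenius_def, ← map_pow, ZMod.intCast_cast]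
    · intro i
      simp [frobenius_def]
  have := congrFun (congrArg (fun (g : MvPolynomial (Fin r) ℤ →+* MvPolynomial (Fin r) (ZMod p)) => (g : MvPolynomial (Fin r) ℤ → MvPolynomial (Fin r) (ZMod p))) key) x
  simpa [frobenius_def] using this


lemma dwork_seq (hp : p.Prime) (E : MvPolynomial (Fin r) ℤ) (m : ℕ) :
    ∃ w : ℕ → MvPolynomial (Fin r) ℤ, ∀ j ≤ m,
      (MvPolynomial.bind₁ (fun i => (MvPolynomial.X i : MvPolynomial (Fin r) ℤ) ^ (p ^ j))) E
        = ∑ i ∈ Finset.range (j+1), (p : MvPolynomial (Fin r) ℤ)^i * (w i)^(p^(j-i)) := by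
  induction m with
  | zero =>
    refine ⟨fun _ => E, ?_⟩
    intro j hj
    interval_cases j
    simp
  | succ m ih =>
    obtain ⟨w, hw⟩ := ih
    set φ : MvPolynomial (Fin r) ℤ →ₐ[ℤ] MvPolynomial (Fin r) ℤ :=
      MvPolynomial.bind₁ (fun i => (MvPolynomial.X i : MvPolynomial (Fin r) ℤ) ^ p) with hφdef
    have hcomp : (MvPolynomial.bind₁ (fun i => (MvPolynomial.X i : MvPolynomial (Fin r) ℤ) ^ (p ^ (m+1)))) E
        = φ ((MvPolynomial.bind₁ (fun i => (MvPolynomial.X i : MvPolynomial (Fin r) ℤ) ^ (p ^ m))) E) := by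
      rw [hφdef, MvPolynomial.bind₁_bind₁]
      have : (fun i => (MvPolynomial.X i : MvPolynomial (Fin r) ℤ) ^ p ^ (m+1))
          = fun i => (MvPolynomial.bind₁ (fun i => (MvPolynomial.X i : MvPolynomial (Fin r) ℤ) ^ p))
              ((MvPolynomial.X i : MvPolynomial (Fin r) ℤ) ^ p ^ m) := by
        funext i
        rw [_root_.map_pow, MvPolynomial.bind₁_X_right, ← pow_mul, ← pow_succ']
      rw [this]
    have hphi : φ ((MvPolynomial.bind₁ (fun i => (MvPolynomial.X i : MvPolynomial (Fin r) ℤ) ^ (p ^ m))) E)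
        = ∑ i ∈ Finset.range (m+1), (p : MvPolynomial (Fin r) ℤ)^i * (φ (w i))^(p^(m-i)) := by
      rw [hw m le_rfl]
      rw [map_sum]
      refine Finset.sum_congr rfl (fun i _ => ?_)
      simp only [_root_.map_mul, _root_.map_pow, map_natCast]
    have hdvd : (p : MvPolynomial (Fin r) ℤ)^(m+1) ∣
        ((MvPolynomial.bind₁ (fun i => (MvPolynomial.X i : MvPolynomial (Fin r) ℤ) ^ (p ^ (m+1)))) E
          - ∑ i ∈ Finset.range (m+1), (p : MvPolynomial (Fin r) ℤ)^i * (w i)^(p^(m+1-i))) := by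
      rw [hcomp, hphi, ← Finset.sum_sub_distrib]
      apply Finset.dvd_sum
      intro i hi
      have hi' : i ≤ m := Nat.lt_succ_iff.mp (Finset.mem_range.mp hi)
      rw [← mul_sub]
      have h1 : (p : MvPolynomial (Fin r) ℤ)^(m - i + 1) ∣
          (φ (w i))^(p^(m-i)) - ((w i)^p)^(p^(m-i)) := by
        have := dvd_sub_pow_of_dvd_sub (p := p) (frob_lift hp (w i)) (m - i)
        exact_mod_cast this
      have h2 : ((w i)^p)^(p^(m-i)) = (w i)^(p^(m+1-i)) := by
        rw [← pow_mul, ← pow_succ']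
        congr 2
        omega
      rw [← h2]
      have := mul_dvd_mul_left ((p : MvPolynomial (Fin r) ℤ)^i) h1
      rw [← pow_add] at this
      have he : i + (m - i + 1) = m + 1 := by omega
      rwa [he] at this
    obtain ⟨c, hc⟩ := hdvd
    refine ⟨Function.update w (m+1) c, ?_⟩
    intro j hj
    rcases Nat.lt_succ_iff_lt_or_eq.mp (Nat.lt_succ_of_le hj) with h | rfl
    · have hj' : j ≤ m := Nat.lt_succ_iff.mp h
      rw [hw j hj']
      refine Finset.sum_congr rfl (fun i hi => ?_)
      have : i ≠ m + 1 := by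
        have := Finset.mem_range.mp hi; omega
      rw [Function.update_of_ne this]
    · rw [Finset.sum_range_succ]
      have hlast : Function.update w (m+1) c (m+1) = c := Function.update_self _ _ _
      rw [hlast]
      have : (MvPolynomial.bind₁ (fun i => (MvPolynomial.X i : MvPolynomial (Fin r) ℤ) ^ (p ^ (m+1)))) E
          = ∑ i ∈ Finset.range (m+1), (p : MvPolynomial (Fin r) ℤ)^i * (w i)^(p^(m+1-i))
            + (p : MvPolynomial (Fin r) ℤ)^(m+1) * c := by
        rw [← hc]; ring
      rw [this]
      congr 1
      · refine Finset.sum_congr rfl (fun i hi => ?_)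
        have : i ≠ m + 1 := by have := Finset.mem_range.mp hi; omega
        rw [Function.update_of_ne this]
      · simp


noncomputable def ghostInv (p : ℕ) (a : ℕ → ℤ) : ℕ → ℚ
  | m => ((a m : ℚ) - ∑ i ∈ (Finset.range m).attach,
      (p:ℚ)^(i.1 : ℕ) * (ghostInv p a i.1)^(p^(m - i.1))) / (p:ℚ)^m
termination_by m => m
decreasing_by exact Finset.mem_range.mp i.2

lemma ghostInv_spec (p : ℕ) (hp : p ≠ 0) (a : ℕ → ℤ) (m : ℕ) :
    (a m : ℚ) = ∑ i ∈ Finset.range (m+1), (p:ℚ)^i * (ghostInv p a i)^(p^(m-i)) := by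
  rw [Finset.sum_range_succ, ghostInv]
  rw [Finset.sum_attach (Finset.range m) (fun i => (p:ℚ)^i * (ghostInv p a i)^(p^(m - i)))]
  have hp' : ((p:ℚ))^m ≠ 0 := pow_ne_zero _ (Nat.cast_ne_zero.mpr hp)
  field_simp
  rw [Nat.sub_self, pow_zero, pow_one, mul_div_cancel₀ _ hp']
  ring

lemma int_fermat {p : ℕ} (hp : p.Prime) (c : ℤ) : (p:ℤ) ∣ c^p - c := by
  haveI : Fact p.Prime := ⟨hp⟩
  rw [← ZMod.intCast_zmod_eq_zero_iff_dvd]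
  push_cast
  rw [ZMod.pow_card]
  ring

lemma final_int {p : ℕ} (hp : p.Prime) (K : ℕ) (c : ℕ → ℤ) (a : ℕ → ℤ)
    (hak : a (K+1) = ∑ i ∈ Finset.range (K+2), (p:ℤ)^i * (c i)^(p^(K+1-i)))
    (ha : a K = ∑ i ∈ Finset.range (K+1), (p:ℤ)^i * (c i)^(p^(K-i))) :
    (p:ℤ)^(K+1) ∣ a (K+1) - a K := by
  rw [hak, Finset.sum_range_succ, ha]
  rw [show ∀ A B C : ℤ, A + B - C = (A - C) + B from fun A B C => by ring]
  apply dvd_add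
  · rw [← Finset.sum_sub_distrib]
    apply Finset.dvd_sum
    intro i hi
    have hi' : i ≤ K := Nat.lt_succ_iff.mp (Finset.mem_range.mp hi)
    rw [← mul_sub]
    have h1 : (p:ℤ)^(K-i+1) ∣ (c i)^(p^(K+1-i)) - (c i)^(p^(K-i)) := by
      have h2 := dvd_sub_pow_of_dvd_sub (p := p) (int_fermat hp (c i)) (K - i)
      rwa [← pow_mul, show p * p^(K-i) = p^(K+1-i) by
        rw [← pow_succ']; congr 1; omega] at h2
    have h3 := mul_dvd_mul_left ((p:ℤ)^i) h1
    rw [← pow_add] at h3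
    rwa [show i + (K - i + 1) = K + 1 by omega] at h3
  · exact dvd_mul_right _ _


open Polynomial Matrix MvPolynomial Finset

theorem stmt_7 (r : ℕ) (f : Matrix (Fin r) (Fin r) ℤ)
    (p : ℕ) (hp : p.Prime) (k : ℕ) (hk : 1 ≤ k) :
    ∀ i : ℕ, (f ^ (p ^ k)).charpoly.coeff i ≡ (f ^ (p ^ (k - 1))).charpoly.coeff i
      [ZMOD (p : ℤ) ^ k] := by
  intro j
  haveI : Fact p.Prime := ⟨hp⟩
  by_cases hjr : j ≤ r
  swap
  · have h1 : ∀ n : ℕ, ((f ^ n).charpoly).coeff j = 0 := by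
      intro n
      apply Polynomial.coeff_eq_zero_of_natDegree_lt
      rw [Matrix.charpoly_natDegree_eq_dim]
      simpa using (by omega : r < j)
    rw [h1, h1]
  obtain ⟨K, rfl⟩ : ∃ K, k = K + 1 := ⟨k - 1, by omega⟩
  rw [show K + 1 - 1 = K from rfl]
  set L := AlgebraicClosure ℚ
  set φ : ℤ →+* L := Int.castRingHom L with hφ
  set fL : Matrix (Fin r) (Fin r) L := f.map φ with hfL
  have hsp : Splits fL.charpoly := IsAlgClosed.splits _
  set μ : Multiset L := fL.charpoly.roots with hμdef
  have hcard : Multiset.card μ = r := by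
    rw [hμdef, Polynomial.splits_iff_card_roots.mp hsp, Matrix.charpoly_natDegree_eq_dim,
      Fintype.card_fin]
  have hμ : fL.charpoly = (μ.map fun a => Polynomial.X - Polynomial.C a).prod :=
    hsp.eq_prod_roots_of_monic (Matrix.charpoly_monic _)
  obtain ⟨lam, henum⟩ := exists_enum μ hcard
  -- integrality of the eigenvalues
  have hint : ∀ x ∈ μ, IsIntegral ℤ x := by
    intro x hx
    refine ⟨f.charpoly, Matrix.charpoly_monic f, ?_⟩
    rw [Polynomial.eval₂_eq_eval_map]
    have hxr : (fL.charpoly).IsRoot x := Polynomial.isRoot_of_mem_roots hx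
    rw [Matrix.charpoly_map] at hxr
    exact hxr
  have hlammem : ∀ i : Fin r, lam i ∈ μ := by
    intro i
    rw [← henum]
    exact Multiset.mem_map_of_mem _ (Finset.mem_val.mpr (Finset.mem_univ i))
  set O := integralClosure ℤ L with hO
  set lamO : Fin r → O := fun i => ⟨lam i, hint _ (hlammem i)⟩ with hlamO
  -- the symmetric polynomial
  set E : MvPolynomial (Fin r) ℤ := MvPolynomial.esymm (Fin r) ℤ (r - j) with hE
  -- integer sequences
  set u : ℕ → ℤ := fun m => (f ^ (p ^ m)).charpoly.coeff j with hu
  set a : ℕ → ℤ := fun m => (-1) ^ (r - j) * u m with ha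
  -- cast of coefficients as esymm of powered roots
  have hcast : ∀ m : ℕ, ((u m : L)) =
      (-1 : L) ^ (r - j) * ((μ.map (fun x => x ^ (p ^ m))).esymm (r - j)) := by
    intro m
    have s1 : ((u m : L)) = (((f ^ (p ^ m)).charpoly).map φ).coeff j := by
      rw [Polynomial.coeff_map]; rfl
    have s2 : (((f ^ (p ^ m)).charpoly).map φ) = (fL ^ (p ^ m)).charpoly := by
      rw [← Matrix.charpoly_map]
      congr 1
      rw [hfL]
      exact map_pow (φ.mapMatrix) f (p ^ m)
    have s3 : (fL ^ (p ^ m)).charpoly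
        = ((μ.map (fun x => x ^ (p ^ m))).map (fun a => Polynomial.X - Polynomial.C a)).prod :=
      charpoly_pow_eq fL μ hμ hcard _ (pow_pos hp.pos m)
    have hjc : j ≤ Multiset.card (μ.map (fun x => x ^ (p ^ m))) := by
      rw [Multiset.card_map, hcard]; exact hjr
    have s4 := Multiset.prod_X_sub_C_coeff (μ.map (fun x => x ^ (p ^ m))) hjc
    rw [s1, s2, s3, s4, Multiset.card_map, hcard]
  -- aeval facts
  have hesymm : ∀ m : ℕ,
      (MvPolynomial.aeval lam) ((MvPolynomial.bind₁
        (fun i => (MvPolynomial.X i : MvPolynomial (Fin r) ℤ) ^ (p ^ m))) E)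
      = (μ.map (fun x => x ^ (p ^ m))).esymm (r - j) := by
    intro m
    rw [MvPolynomial.aeval_bind₁, hE, MvPolynomial.aeval_esymm_eq_multiset_esymm]
    congr 1
    have : (fun i : Fin r => (MvPolynomial.aeval lam)
        ((MvPolynomial.X i : MvPolynomial (Fin r) ℤ) ^ (p ^ m)))
        = fun i : Fin r => (lam i) ^ (p ^ m) := by
      funext i; simp
    rw [this, ← henum, Multiset.map_map]
    rfl
  -- Dwork decomposition
  obtain ⟨w, hw⟩ := dwork_seq hp E (K + 1)
  set t : ℕ → O := fun i => (MvPolynomial.aeval lamO) (w i) with ht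
  have hval : ∀ x : MvPolynomial (Fin r) ℤ,
      ((MvPolynomial.aeval lamO) x : L) = (MvPolynomial.aeval lam) x := by
    intro x
    have := congrFun (congrArg (fun (g : MvPolynomial (Fin r) ℤ →ₐ[ℤ] L) => (g : MvPolynomial (Fin r) ℤ → L))
      (MvPolynomial.comp_aeval (φ := O.val) (f := lamO))) x
    exact this
  -- ghost identity in L
  have hgL : ∀ m ≤ K + 1, ((a m : L)) =
      ∑ i ∈ Finset.range (m + 1), (p : L) ^ i * ((t i : L)) ^ (p ^ (m - i)) := by
    intro m hm
    have h1 := congrArg (MvPolynomial.aeval lam) (hw m hm)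
    rw [hesymm m] at h1
    have h2 : (MvPolynomial.aeval lam)
        (∑ i ∈ Finset.range (m + 1), (p : MvPolynomial (Fin r) ℤ) ^ i * (w i) ^ (p ^ (m - i)))
        = ∑ i ∈ Finset.range (m + 1), (p : L) ^ i * ((t i : L)) ^ (p ^ (m - i)) := by
      rw [map_sum]
      refine Finset.sum_congr rfl (fun i _ => ?_)
      rw [_root_.map_mul, _root_.map_pow, _root_.map_pow, map_natCast, ht, hval]
    rw [h2] at h1
    have h3 : ((a m : L)) = (μ.map (fun x => x ^ (p ^ m))).esymm (r - j) := by
      rw [ha]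
      change (((-1 : ℤ) ^ (r - j) * u m : ℤ) : L) = _
      have hmc := map_mul (Int.castRingHom L) ((-1 : ℤ) ^ (r - j)) (u m)
      rw [map_pow, map_neg, map_one] at hmc
      rw [show (((-1 : ℤ) ^ (r - j) * u m : ℤ) : L) = (-1 : L) ^ (r - j) * (u m : L) from hmc]
      rw [hcast m, ← mul_assoc, ← pow_add]
      have : Even (r - j + (r - j)) := ⟨r - j, rfl⟩
      rw [this.neg_one_pow, one_mul]
    rw [h3, h1]
  -- rational ghost components
  set s : ℕ → ℚ := ghostInv p a with hs
  have hgQ : ∀ m : ℕ, ((a m : ℚ)) =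
      ∑ i ∈ Finset.range (m + 1), (p : ℚ) ^ i * (s i) ^ (p ^ (m - i)) :=
    fun m => ghostInv_spec p hp.ne_zero a m
  -- matching
  have hmatch : ∀ i ≤ K + 1, (algebraMap ℚ L) (s i) = (t i : L) := by
    intro i
    induction i using Nat.strong_induction_on with
    | _ i IH =>
      intro hi
      have e1 := hgL i hi
      have e2 : ((a i : L)) = ∑ i' ∈ Finset.range (i + 1),
          (p : L) ^ i' * ((algebraMap ℚ L) (s i')) ^ (p ^ (i - i')) := by
        have := congrArg (algebraMap ℚ L) (hgQ i)
        rw [map_intCast, map_sum] at this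
        rw [this]
        refine Finset.sum_congr rfl (fun i' _ => ?_)
        rw [_root_.map_mul, _root_.map_pow, _root_.map_pow, map_natCast]
      rw [e2] at e1
      rw [Finset.sum_range_succ, Finset.sum_range_succ] at e1
      have e3 : ∑ i' ∈ Finset.range i, (p : L) ^ i' * ((algebraMap ℚ L) (s i')) ^ (p ^ (i - i'))
          = ∑ i' ∈ Finset.range i, (p : L) ^ i' * ((t i' : L)) ^ (p ^ (i - i')) := by
        refine Finset.sum_congr rfl (fun i' hi' => ?_)
        have : i' < i := Finset.mem_range.mp hi'
        rw [IH i' this (by omega)]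
      rw [e3] at e1
      have e4 : (p : L) ^ i * ((algebraMap ℚ L) (s i)) ^ (p ^ (i - i))
          = (p : L) ^ i * ((t i : L)) ^ (p ^ (i - i)) := add_left_cancel e1
      have hpn : (p : L) ^ i ≠ 0 := pow_ne_zero _ (Nat.cast_ne_zero.mpr hp.ne_zero)
      have e5 := mul_left_cancel₀ hpn e4
      simpa using e5
  -- integrality of rational ghost components
  have hsint : ∀ i ≤ K + 1, ∃ z : ℤ, (z : ℚ) = s i := by
    intro i hi
    have hinj : Function.Injective (algebraMap ℚ L) := (algebraMap ℚ L).injective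
    have hIsInt : IsIntegral ℤ (s i) := by
      rw [← isIntegral_algebraMap_iff hinj]
      rw [hmatch i hi]
      exact (t i).2
    obtain ⟨z, hz⟩ := IsIntegrallyClosed.isIntegral_iff.mp hIsInt
    exact ⟨z, hz⟩
  classical
  set c : ℕ → ℤ := fun i => if h : ∃ z : ℤ, (z : ℚ) = s i then h.choose else 0 with hc
  have hcs : ∀ i ≤ K + 1, ((c i : ℚ)) = s i := by
    intro i hi
    rw [hc]
    simp only [dif_pos (hsint i hi)]
    exact (hsint i hi).choose_spec
  -- integer ghost identities
  have hZ : ∀ m ≤ K + 1, a m = ∑ i ∈ Finset.range (m + 1), (p : ℤ) ^ i * (c i) ^ (p ^ (m - i)) := by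
    intro m hm
    apply Int.cast_injective (α := ℚ)
    rw [hgQ m]
    push_cast
    refine Finset.sum_congr rfl (fun i hi => ?_)
    have hi' : i ≤ K + 1 := by
      have := Finset.mem_range.mp hi; omega
    rw [hcs i hi']
  have final := final_int hp K c a (hZ (K + 1) le_rfl) (hZ K (by omega))
  -- conclude
  have hdiff : u (K + 1) - u K = (-1 : ℤ) ^ (r - j) * (a (K + 1) - a K) := by
    rw [ha]
    simp only
    rw [mul_sub, ← mul_assoc, ← mul_assoc, ← pow_add]
    have : Even (r - j + (r - j)) := ⟨r - j, rfl⟩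
    rw [this.neg_one_pow, one_mul, one_mul]
  have hdvd : ((p : ℤ)) ^ (K + 1) ∣ u (K + 1) - u K := by
    rw [hdiff]
    exact Dvd.dvd.mul_left final _
  exact Int.ModEq.symm (Int.modEq_iff_dvd.mpr hdvd)
end

section
/- Let f be a square matrix with integer entries, and set b_n = Tr(f^n) for n ≥ 1. Then for every n ≥ 1 and every prime p dividing n, writing k for the exponent of p in n (so n = m·p^k with p ∤ m and k ≥ 1), we have b_n ≡ b_(n/p) (mod p^k). -/
namespace StmtEight
open Finset

variable {r : ℕ} (f : Matrix (Fin r) (Fin r) ℤ)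

lemma pow_apply_eq (N : ℕ) : ∀ a b : Fin r, (f ^ (N+1)) a b =
    ∑ w : Fin N → Fin r, ∏ i : Fin (N+1),
      f (Fin.cons (α := fun _ => Fin r) a w i) (Fin.snoc (α := fun _ => Fin r) w b i) := by
  induction N with
  | zero =>
    intro a b
    rw [pow_one, Fintype.sum_unique, Fin.prod_univ_one]
    simp [Fin.snoc]
  | succ N ih =>
    intro a b
    rw [pow_succ', Matrix.mul_apply]
    simp_rw [ih, Finset.mul_sum]
    rw [← Equiv.sum_comp (Fin.consEquiv (fun _ => Fin r))
      (fun w : Fin (N+1) → Fin r => ∏ i : Fin (N+2),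
        f (Fin.cons (α := fun _ => Fin r) a w i) (Fin.snoc (α := fun _ => Fin r) w b i)),
      Fintype.sum_prod_type]
    apply Finset.sum_congr rfl
    intro c _
    apply Finset.sum_congr rfl
    intro w _
    symm
    simp only [Fin.consEquiv, Equiv.coe_fn_mk]
    have hsc : (Fin.snoc (α := fun _ => Fin r) (Fin.cons c w) b)
        = Fin.cons (α := fun _ => Fin r) c (Fin.snoc (α := fun _ => Fin r) w b) :=
      (Fin.cons_snoc_eq_snoc_cons _ _ _).symm
    rw [Fin.prod_univ_succ, hsc]
    simp [Fin.cons_zero, Fin.cons_succ]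

lemma snoc_eq_cons_add (N : ℕ) (a : Fin r) (w : Fin N → Fin r) (i : Fin (N+1)) :
    Fin.snoc (α := fun _ => Fin r) w a i = Fin.cons (α := fun _ => Fin r) a w (i+1) := by
  refine Fin.lastCases ?_ ?_ i
  · rw [Fin.snoc_last, Fin.last_add_one, Fin.cons_zero]
  · intro j
    rw [Fin.snoc_castSucc]
    have h1 : (j.castSucc + 1) = j.succ := by
      apply Fin.ext
      rw [Fin.val_add_one_of_lt (Fin.castSucc_lt_last j)]
      simp
    rw [h1, Fin.cons_succ]

lemma trace_pow_fin (N : ℕ) : (f ^ (N+1)).trace =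
    ∑ v : Fin (N+1) → Fin r, ∏ i : Fin (N+1), f (v i) (v (i+1)) := by
  rw [Matrix.trace]
  simp_rw [Matrix.diag, pow_apply_eq, snoc_eq_cons_add]
  rw [← Equiv.sum_comp (Fin.consEquiv (fun _ => Fin r))
    (fun v : Fin (N+1) → Fin r => ∏ i : Fin (N+1), f (v i) (v (i+1))),
    Fintype.sum_prod_type]
  simp only [Fin.consEquiv, Equiv.coe_fn_mk]

lemma trace_pow (N : ℕ) [NeZero N] : (f ^ N).trace =
    ∑ v : ZMod N → Fin r, ∏ i : ZMod N, f (v i) (v (i+1)) := by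
  obtain ⟨N', rfl⟩ := Nat.exists_eq_succ_of_ne_zero (NeZero.ne N)
  exact trace_pow_fin f N'

def cyc (N : ℕ) [NeZero N] (v : ZMod N → Fin r) : ℤ := ∏ i, f (v i) (v (i + 1))

lemma trace_pow_cyc (N : ℕ) [NeZero N] : (f ^ N).trace = ∑ v : ZMod N → Fin r, cyc f N v :=
  trace_pow f N

lemma cyc_shift (N : ℕ) [NeZero N] (s : ZMod N) (v : ZMod N → Fin r) :
    cyc f N (fun i => v (i + s)) = cyc f N v := by
  unfold cyc
  rw [← Equiv.prod_comp (Equiv.addRight s) (fun j => f (v j) (v (j+1)))]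
  apply Finset.prod_congr rfl
  intro i _
  simp [add_right_comm]

section Fold
variable (M p : ℕ) [NeZero M] [NeZero (M*p)]

private def cmap : ZMod (M*p) →+* ZMod M := ZMod.castHom (dvd_mul_right M p) _

private def sec : ZMod M → ZMod (M*p) := fun t => ((t.val : ℕ) : ZMod (M*p))

lemma hsec (t : ZMod M) : cmap M p (sec M p t) = t := by
  simp [cmap, sec, map_natCast, ZMod.natCast_val, ZMod.cast_id]

lemma hiter (v : ZMod (M*p) → Fin r) (hv : ∀ i, v (i + (M : ZMod (M*p))) = v i) :
    ∀ (d : ℕ) (x : ZMod (M*p)), v (x + (M : ZMod (M*p)) * (d : ℕ)) = v x := by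
  intro d
  induction d with
  | zero => simp
  | succ d ih =>
    intro x
    have e : x + (M : ZMod (M*p)) * ((d+1 : ℕ) : ZMod (M*p))
        = (x + (M : ZMod (M*p))) + (M : ZMod (M*p)) * ((d : ℕ) : ZMod (M*p)) := by
      push_cast; ring
    rw [e, ih, hv]

lemma hfix_eq (v : ZMod (M*p) → Fin r) (hv : ∀ i, v (i + (M : ZMod (M*p))) = v i)
    (i : ZMod (M*p)) : v (sec M p (cmap M p i)) = v i := by
  have h1 : sec M p (cmap M p i) = ((i.val % M : ℕ) : ZMod (M*p)) := by
    simp [cmap, sec, ZMod.castHom_apply, ← ZMod.natCast_val, ZMod.val_natCast]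
  have h2 : ((i.val % M : ℕ) : ZMod (M*p)) + (M : ZMod (M*p)) * ((i.val / M : ℕ) : ZMod (M*p)) = i := by
    have h3 : (i.val % M) + M * (i.val / M) = i.val := Nat.mod_add_div _ _
    calc ((i.val % M : ℕ) : ZMod (M*p)) + (M : ZMod (M*p)) * ((i.val / M : ℕ) : ZMod (M*p))
        = (((i.val % M) + M * (i.val / M) : ℕ) : ZMod (M*p)) := by push_cast; ring
    _ = i := by rw [h3, ZMod.natCast_val, ZMod.cast_id]
  rw [h1]
  conv_rhs => rw [← h2]
  rw [hiter M p v hv]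

lemma fibercard (t : ZMod M) :
    (univ.filter (fun i : ZMod (M*p) => cmap M p i = t)).card = p := by
  have equi : ∀ t₁ t₂ : ZMod M, (univ.filter (fun i : ZMod (M*p) => cmap M p i = t₁)).card
      = (univ.filter (fun i : ZMod (M*p) => cmap M p i = t₂)).card := by
    intro t₁ t₂
    apply Finset.card_bij' (fun i _ => i + (sec M p t₂ - sec M p t₁))
      (fun i _ => i + (sec M p t₁ - sec M p t₂))
    · intro a ha
      simp only [Finset.mem_filter, Finset.mem_univ, true_and] at ha ⊢
      rw [map_add, map_sub, hsec, hsec, ha]; ring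
    · intro a ha
      simp only [Finset.mem_filter, Finset.mem_univ, true_and] at ha ⊢
      rw [map_add, map_sub, hsec, hsec, ha]; ring
    · intro a _; ring
    · intro a _; ring
  have hsum : (univ : Finset (ZMod (M*p))).card
      = ∑ t' : ZMod M, (univ.filter (fun i : ZMod (M*p) => cmap M p i = t')).card :=
    Finset.card_eq_sum_card_fiberwise (fun x _ => Finset.mem_univ _)
  rw [Finset.card_univ, ZMod.card] at hsum
  have h2 : ∑ t' : ZMod M, (univ.filter (fun i : ZMod (M*p) => cmap M p i = t')).card
      = M * (univ.filter (fun i : ZMod (M*p) => cmap M p i = t)).card := by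
    rw [Finset.sum_congr rfl (fun t' _ => equi t' t), Finset.sum_const, Finset.card_univ,
      ZMod.card, smul_eq_mul]
  exact (Nat.eq_of_mul_eq_mul_left (Nat.pos_of_ne_zero (NeZero.ne M)) (hsum.trans h2)).symm

lemma cyc_fold (u : ZMod M → Fin r) :
    cyc f (M*p) (u ∘ cmap M p) = (cyc f M u) ^ p := by
  unfold cyc
  have h1 : ∀ i : ZMod (M*p), f ((u ∘ cmap M p) i) ((u ∘ cmap M p) (i+1))
      = f (u (cmap M p i)) (u (cmap M p i + 1)) := by
    intro i; simp [map_add, map_one]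
  simp_rw [h1]
  rw [← Finset.prod_fiberwise_of_maps_to (g := cmap M p) (t := univ) (fun x _ => Finset.mem_univ _)
    (fun i => f (u (cmap M p i)) (u (cmap M p i + 1)))]
  rw [← Finset.prod_pow]
  apply Finset.prod_congr rfl
  intro t _
  have h3 : ∀ i ∈ univ.filter (fun i : ZMod (M*p) => cmap M p i = t),
      f (u (cmap M p i)) (u (cmap M p i + 1)) = f (u t) (u (t + 1)) := by
    intro i hi
    rw [(Finset.mem_filter.mp hi).2]
  rw [Finset.prod_congr rfl h3, Finset.prod_const, fibercard]

lemma fold (g : ℤ → ℤ) :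
    ∑ v ∈ univ.filter (fun v : ZMod (M*p) → Fin r => ∀ i, v (i + (M : ZMod (M*p))) = v i),
      g (cyc f (M*p) v) = ∑ u : ZMod M → Fin r, g ((cyc f M u) ^ p) := by
  apply Finset.sum_bij' (fun v _ => fun t => v (sec M p t)) (fun u _ => u ∘ cmap M p)
  · intro a _; exact Finset.mem_univ _
  · intro u _
    simp only [Finset.mem_filter, Finset.mem_univ, true_and]
    intro i
    simp only [Function.comp_apply, map_add]
    rw [show cmap M p ((M : ZMod (M*p))) = 0 by simp [cmap, map_natCast], add_zero]
  · intro v hv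
    simp only [Finset.mem_filter, Finset.mem_univ, true_and] at hv
    funext x
    exact hfix_eq M p v hv x
  · intro u _
    funext t
    simp only [Function.comp_apply]
    rw [hsec]
  · intro v hv
    simp only [Finset.mem_filter, Finset.mem_univ, true_and] at hv
    congr 1
    have hv2 : v = (fun t => v (sec M p t)) ∘ cmap M p := by
      funext x; exact (hfix_eq M p v hv x).symm
    rw [show cyc f (M*p) v = cyc f (M*p) ((fun t => v (sec M p t)) ∘ cmap M p) from by rw [← hv2]]
    exact cyc_fold f M p _

end Fold
open Finset

lemma orbit_sum (q : ℕ) [NeZero q] {α : Type*} [Fintype α] [DecidableEq α]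
    (e : ZMod q → α → α) (he0 : ∀ v, e 0 v = v)
    (headd : ∀ c d v, e (c + d) v = e c (e d v))
    (wt : α → ℤ) (hwt : ∀ c v, wt (e c v) = wt v)
    (S : Finset α) (hS : ∀ c v, v ∈ S → e c v ∈ S)
    (hfree : ∀ v ∈ S, ∀ c, e c v = v → c = 0)
    (d : ℤ) (hd : ∀ v, d ∣ wt v) :
    (d * q) ∣ ∑ v ∈ S, wt v := by
  classical
  set orb : α → Finset α := fun v => univ.image (fun c => e c v) with horb
  have hmem : ∀ v, v ∈ orb v := by
    intro v
    exact Finset.mem_image.mpr ⟨0, Finset.mem_univ _, he0 v⟩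
  have horbe : ∀ c v, orb (e c v) = orb v := by
    intro c v
    apply Finset.ext
    intro u
    simp only [horb, Finset.mem_image, Finset.mem_univ, true_and]
    constructor
    · rintro ⟨c', rfl⟩; exact ⟨c' + c, headd c' c v⟩
    · rintro ⟨c', rfl⟩
      refine ⟨c' - c, ?_⟩
      rw [← headd]
      congr 1
      ring
  have hcard : ∀ v ∈ S, (orb v).card = q := by
    intro v hv
    rw [horb]
    rw [Finset.card_image_of_injective _ ?inj, Finset.card_univ, ZMod.card]
    case inj =>
      intro c c' h
      have h' : e c v = e c' v := h
      have h2 : e (c - c') (e c' v) = e c' v := by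
        rw [← headd, sub_add_cancel, h']
      have := hfree (e c' v) (hS c' v hv) _ h2
      have := sub_eq_zero.mp this
      exact this
  -- fiberwise decomposition
  rw [← Finset.sum_fiberwise_of_maps_to (g := orb) (t := S.image orb)
    (fun x hx => Finset.mem_image_of_mem _ hx) wt]
  apply Finset.dvd_sum
  intro o ho
  obtain ⟨v₀, hv₀, rfl⟩ := Finset.mem_image.mp ho
  have hfib : S.filter (fun v => orb v = orb v₀) = orb v₀ := by
    apply Finset.ext
    intro u
    simp only [Finset.mem_filter]
    constructor
    · rintro ⟨hu, h⟩
      rw [← h]; exact hmem u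
    · intro hu
      obtain ⟨c, _, rfl⟩ := Finset.mem_image.mp hu
      exact ⟨hS c v₀ hv₀, horbe c v₀⟩
  rw [hfib]
  have hconst : ∀ u ∈ orb v₀, wt u = wt v₀ := by
    intro u hu
    obtain ⟨c, _, rfl⟩ := Finset.mem_image.mp hu
    exact hwt c v₀
  rw [Finset.sum_congr rfl hconst, Finset.sum_const, hcard v₀ hv₀]
  obtain ⟨w, hw⟩ := hd v₀
  exact ⟨w, by rw [hw]; push_cast; ring⟩

lemma exists_mul_eq (p j : ℕ) (hp : p.Prime) (hj : 1 ≤ j) (c : ZMod (p^j)) (hc : c ≠ 0) :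
    ∃ z : ZMod (p^j), z * c = ((p^(j-1) : ℕ) : ZMod (p^j)) := by
  haveI : NeZero (p^j) := ⟨pow_ne_zero _ hp.ne_zero⟩
  set a := c.val with ha
  have ha0 : a ≠ 0 := fun h => hc (by rwa [← ZMod.val_eq_zero])
  have haN : a < p^j := ZMod.val_lt c
  set g := Nat.gcd a (p^j) with hg
  obtain ⟨i, hij, hgi⟩ := (Nat.dvd_prime_pow hp).mp (Nat.gcd_dvd_right a (p^j))
  have hine : i ≠ j := by
    rintro rfl
    have : p^i ∣ a := by rw [← hgi]; exact Nat.gcd_dvd_left _ _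
    exact absurd (Nat.le_of_dvd (Nat.pos_of_ne_zero ha0) this) (not_le.mpr haN)
  have hdvd : g ∣ p^(j-1) := by rw [hg, hgi]; exact pow_dvd_pow p (by omega)
  have bez := Nat.gcd_eq_gcd_ab a (p^j)
  -- cast to ZMod (p^j)
  have hcast : (g : ZMod (p^j)) = (Nat.gcdA a (p^j) : ZMod (p^j)) * c := by
    have h0 := congrArg (fun z : ℤ => (z : ZMod (p^j))) bez
    push_cast at h0
    rw [show ((p : ZMod (p^j)))^j = 0 from by rw [← Nat.cast_pow, ZMod.natCast_self]] at h0
    rw [show ((a : ℕ) : ZMod (p^j)) = c from by rw [ha, ZMod.natCast_val, ZMod.cast_id]] at h0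
    rw [hg, h0]
    ring
  refine ⟨((p^(j-1) / g : ℕ) : ZMod (p^j)) * (Nat.gcdA a (p^j) : ZMod (p^j)), ?_⟩
  rw [mul_assoc, ← hcast, ← Nat.cast_mul, Nat.div_mul_cancel hdvd]

section Level
variable (m p j : ℕ)

def eAct (m p j M : ℕ) (c : ZMod (p^j)) (v : ZMod (M*p) → Fin r) : ZMod (M*p) → Fin r :=
  fun i => v (i + (m : ZMod (M*p)) * ((c.val : ℕ) : ZMod (M*p)))

lemma level (hm : m ≠ 0) (hp : p.Prime) (hj : 1 ≤ j) (M : ℕ) (hM : M = m * p^(j-1))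
    [NeZero M] [NeZero (M*p)]
    (g : ℤ → ℤ) (d : ℤ) (hd : ∀ a : ℤ, d ∣ g a) :
    d * (p:ℤ)^j ∣ (∑ v : ZMod (M*p) → Fin r, g (cyc f (M*p) v))
      - ∑ u : ZMod M → Fin r, g ((cyc f M u) ^ p) := by
  classical
  haveI : NeZero (p^j) := ⟨pow_ne_zero _ hp.ne_zero⟩
  have hNe : m * p^j = M * p := by
    rw [hM, mul_assoc]
    congr 1
    rw [← pow_succ]
    congr 1
    omega
  set Fx : (ZMod (M*p) → Fin r) → Prop := fun v => ∀ i, v (i + (M : ZMod (M*p))) = v i with hFx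
  rw [← Finset.sum_filter_add_sum_filter_not univ Fx (fun v => g (cyc f (M*p) v))]
  rw [show ∑ v ∈ univ.filter Fx, g (cyc f (M*p) v)
      = ∑ u : ZMod M → Fin r, g ((cyc f M u) ^ p) from fold f M p g]
  rw [add_sub_cancel_left]
  -- orbit argument
  set e : ZMod (p^j) → (ZMod (M*p) → Fin r) → (ZMod (M*p) → Fin r) := eAct m p j M with he
  have key : ∀ x : ℕ, (m : ZMod (M*p)) * ((x % p^j : ℕ) : ZMod (M*p))
      = (m : ZMod (M*p)) * ((x : ℕ) : ZMod (M*p)) := by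
    intro x
    have hz : (m : ZMod (M*p)) * ((p : ZMod (M*p)))^j = 0 := by
      rw [← Nat.cast_pow, ← Nat.cast_mul, hNe, ZMod.natCast_self]
    have h4 : (m : ZMod (M*p)) * ((x : ℕ) : ZMod (M*p))
        = (m : ZMod (M*p)) * ((x % p^j : ℕ) : ZMod (M*p))
          + ((m : ZMod (M*p)) * ((p : ZMod (M*p)))^j) * ((x / p^j : ℕ) : ZMod (M*p)) := by
      conv_lhs => rw [show x = p^j * (x / p^j) + x % p^j from (Nat.div_add_mod x (p^j)).symm]
      push_cast
      ring
    rw [h4, hz]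
    ring
  have he0 : ∀ v, e 0 v = v := by
    intro v; funext i; simp [he, eAct, ZMod.val_zero]
  have headd : ∀ c d' v, e (c + d') v = e c (e d' v) := by
    intro c d' v
    funext i
    show v (i + (m:ZMod (M*p)) * (((c + d').val : ℕ) : ZMod (M*p)))
      = (e d' v) ((i + (m:ZMod (M*p)) * ((c.val : ℕ):ZMod (M*p))))
    show v (i + (m:ZMod (M*p)) * (((c + d').val : ℕ) : ZMod (M*p)))
      = v ((i + (m:ZMod (M*p)) * ((c.val : ℕ):ZMod (M*p))) + (m:ZMod (M*p)) * ((d'.val : ℕ):ZMod (M*p)))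
    rw [ZMod.val_add, key]
    congr 1
    push_cast
    ring
  have hwt : ∀ c v, g (cyc f (M*p) (e c v)) = g (cyc f (M*p) v) := by
    intro c v
    exact congrArg g (cyc_shift f (M*p) _ v)
  have hS : ∀ c v, v ∈ univ.filter (fun v => ¬ Fx v) → e c v ∈ univ.filter (fun v => ¬ Fx v) := by
    intro c v hv
    simp only [Finset.mem_filter, Finset.mem_univ, true_and] at hv ⊢
    intro hFxe
    apply hv
    intro i
    set s := (m : ZMod (M*p)) * ((c.val : ℕ) : ZMod (M*p))
    have h1 := hFxe (i - s)
    show v (i + M) = v i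
    have e1 : (i - s + (M:ZMod (M*p))) + s = i + M := by ring
    have e2 : (i - s) + s = i := by ring
    rw [show (e c v) (i - s + (M:ZMod (M*p))) = v ((i - s + (M:ZMod (M*p))) + s) from rfl,
      show (e c v) (i - s) = v ((i - s) + s) from rfl, e1, e2] at h1
    exact h1
  have hfree : ∀ v ∈ univ.filter (fun v => ¬ Fx v), ∀ c, e c v = v → c = 0 := by
    intro v hv c hc
    by_contra hc0
    simp only [Finset.mem_filter, Finset.mem_univ, true_and] at hv
    apply hv
    obtain ⟨z, hz⟩ := exists_mul_eq p j hp hj c hc0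
    have hiter2 : ∀ t : ℕ, e ((t : ZMod (p^j)) * c) v = v := by
      intro t
      induction t with
      | zero => simpa using he0 v
      | succ t ih =>
        have : ((t+1 : ℕ) : ZMod (p^j)) * c = c + (t : ZMod (p^j)) * c := by push_cast; ring
        rw [this, headd, ih, hc]
    have hc₀ : e ((p^(j-1) : ℕ) : ZMod (p^j)) v = v := by
      have : ((z.val : ℕ) : ZMod (p^j)) * c = ((p^(j-1) : ℕ) : ZMod (p^j)) := by
        rw [ZMod.natCast_val, ZMod.cast_id, hz]
      rw [← this]
      exact hiter2 z.val
    -- now derive Fx v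
    intro i
    have hval : (((p^(j-1) : ℕ) : ZMod (p^j))).val = p^(j-1) := by
      rw [ZMod.val_natCast, Nat.mod_eq_of_lt (Nat.pow_lt_pow_right hp.one_lt (by omega))]
    have harg : (m : ZMod (M*p)) * (((((p^(j-1) : ℕ) : ZMod (p^j))).val : ℕ) : ZMod (M*p))
        = (M : ZMod (M*p)) := by
      rw [hval, ← Nat.cast_mul, ← hM]
    have := congrFun hc₀ i
    rw [show (e ((p^(j-1) : ℕ) : ZMod (p^j)) v) i
        = v (i + (m : ZMod (M*p)) * (((((p^(j-1) : ℕ) : ZMod (p^j))).val : ℕ) : ZMod (M*p))) from rfl,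
      harg] at this
    exact this
  have horb := orbit_sum (p^j) e he0 headd (fun v => g (cyc f (M*p) v)) hwt
    (univ.filter (fun v => ¬ Fx v)) hS hfree d (fun v => hd _)
  have : ((p^j : ℕ) : ℤ) = (p:ℤ)^j := by push_cast; ring
  rwa [this] at horb

end Level

def PS (N q : ℕ) (hN : N ≠ 0) : ℤ :=
  letI : NeZero N := ⟨hN⟩
  ∑ v : ZMod N → Fin r, (cyc f N v)^q

lemma termwise (p : ℕ) (hp : p.Prime) (a : ℤ) (s t : ℕ) (hs : 1 ≤ s) :
    (p:ℤ)^s ∣ a^(p^s * t) - a^(p^(s-1) * t) := by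
  haveI : Fact p.Prime := ⟨hp⟩
  obtain ⟨s', rfl⟩ : ∃ s', s = s' + 1 := ⟨s - 1, by omega⟩
  have hferm : (p:ℤ) ∣ (a^t)^p - a^t := by
    have h0 : (((a^t)^p - a^t : ℤ) : ZMod p) = 0 := by
      push_cast [ZMod.pow_card]
      ring
    exact_mod_cast (ZMod.intCast_zmod_eq_zero_iff_dvd _ p).mp h0
  have h2 := dvd_sub_pow_of_dvd_sub hferm s'
  have e1 : ((a^t)^p)^(p^s') = a^(p^(s'+1) * t) := by
    rw [← pow_mul, ← pow_mul]
    congr 1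
    ring
  have e2 : (a^t)^(p^s') = a^(p^((s'+1)-1) * t) := by
    rw [← pow_mul]
    congr 1
    simp [mul_comm]
  rwa [e1, e2] at h2

lemma sum_g_eq (N : ℕ) (hN : N ≠ 0) (A B : ℕ) :
    letI : NeZero N := ⟨hN⟩
    (∑ v : ZMod N → Fin r, ((cyc f N v)^A - (cyc f N v)^B))
      = PS f N A hN - PS f N B hN := by
  letI : NeZero N := ⟨hN⟩
  rw [Finset.sum_sub_distrib]
  rfl

lemma Cstep (m p : ℕ) (hm : m ≠ 0) (hp : p.Prime) :
    ∀ j s t : ℕ, 1 ≤ s →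
      (p:ℤ)^(j+s) ∣ PS f (m*p^j) (p^s*t) (Nat.mul_ne_zero hm (pow_ne_zero j hp.ne_zero))
        - PS f (m*p^j) (p^(s-1)*t) (Nat.mul_ne_zero hm (pow_ne_zero j hp.ne_zero)) := by
  intro j
  induction j with
  | zero =>
    intro s t hs
    haveI : NeZero (m*p^0) := ⟨Nat.mul_ne_zero hm (pow_ne_zero 0 hp.ne_zero)⟩
    rw [← sum_g_eq f (m*p^0) _ (p^s*t) (p^(s-1)*t)]
    rw [zero_add]
    apply Finset.dvd_sum
    intro v _
    exact termwise p hp _ s t hs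
  | succ j ih =>
    intro s t hs
    set M := m * p^j with hMdef
    haveI : NeZero M := ⟨Nat.mul_ne_zero hm (pow_ne_zero j hp.ne_zero)⟩
    haveI : NeZero (M*p) := ⟨Nat.mul_ne_zero (NeZero.ne M) hp.ne_zero⟩
    have hMp : m * p^(j+1) = M * p := by rw [hMdef, mul_assoc, ← pow_succ]
    have hrw : ∀ (q : ℕ),
        PS f (m*p^(j+1)) q (Nat.mul_ne_zero hm (pow_ne_zero (j+1) hp.ne_zero))
          = PS f (M*p) q (NeZero.ne (M*p)) := by
      intro q
      congr 1
    -- level application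
    have hlev := level f m p (j+1) hm hp (by omega) M (by simp [hMdef]) 
      (fun x => x^(p^s*t) - x^(p^(s-1)*t)) ((p:ℤ)^s) (fun a => termwise p hp a s t hs)
    have hsum1 : (∑ v : ZMod (M*p) → Fin r, ((cyc f (M*p) v)^(p^s*t) - (cyc f (M*p) v)^(p^(s-1)*t)))
        = PS f (M*p) (p^s*t) (NeZero.ne _) - PS f (M*p) (p^(s-1)*t) (NeZero.ne _) :=
      sum_g_eq f (M*p) (NeZero.ne _) _ _
    have hsum2 : (∑ u : ZMod M → Fin r, (((cyc f M u)^p)^(p^s*t) - ((cyc f M u)^p)^(p^(s-1)*t)))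
        = PS f M (p^(s+1)*t) (NeZero.ne _) - PS f M (p^s*t) (NeZero.ne _) := by
      have he1 : ∀ x : ℤ, (x^p)^(p^s*t) = x^(p^(s+1)*t) := by
        intro x; rw [← pow_mul]; congr 1; ring
      have he2 : ∀ x : ℤ, (x^p)^(p^(s-1)*t) = x^(p^s*t) := by
        intro x; rw [← pow_mul]; congr 1
        have : p * (p^(s-1)*t) = p^(s-1+1)*t := by ring
        rw [this]
        congr 2
        omega
      simp_rw [he1, he2]
      exact sum_g_eq f M (NeZero.ne _) _ _
    rw [hsum1, hsum2] at hlev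
    have hih := ih (s+1) t (by omega)
    rw [show s+1-1 = s from by omega] at hih
    -- hih : p^(j+(s+1)) ∣ PS f (m*p^j) (p^(s+1)*t) - PS f (m*p^j) (p^s*t)
    rw [hrw (p^s*t), hrw (p^(s-1)*t)]
    have hexp : (p:ℤ)^s * (p:ℤ)^(j+1) = (p:ℤ)^(j+1+s) := by
      rw [← pow_add]; congr 1; omega
    rw [hexp] at hlev
    have hexp2 : (j+(s+1)) = (j+1+s) := by omega
    rw [hexp2] at hih
    have hfinal : PS f (M*p) (p^s*t) (NeZero.ne _) - PS f (M*p) (p^(s-1)*t) (NeZero.ne _)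
        = (PS f (M*p) (p^s*t) (NeZero.ne _) - PS f (M*p) (p^(s-1)*t) (NeZero.ne _)
            - (PS f M (p^(s+1)*t) (NeZero.ne _) - PS f M (p^s*t) (NeZero.ne _)))
          + (PS f M (p^(s+1)*t) (NeZero.ne _) - PS f M (p^s*t) (NeZero.ne _)) := by ring
    rw [hfinal]
    exact dvd_add hlev hih

lemma PS_congr (N N' q : ℕ) (h : N = N') (hN : N ≠ 0) (hN' : N' ≠ 0) :
    PS f N q hN = PS f N' q hN' := by
  subst h
  rfl

lemma trace_eq_PS (N : ℕ) (hN : N ≠ 0) : (f ^ N).trace = PS f N 1 hN := by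
  letI : NeZero N := ⟨hN⟩
  rw [trace_pow_cyc f N]
  unfold PS
  simp [cyc]

theorem main (r : ℕ) (f : Matrix (Fin r) (Fin r) ℤ)
    (b : ℕ → ℤ) (hb : ∀ n : ℕ, 1 ≤ n → b n = (f ^ n).trace)
    (n : ℕ) (hn : 1 ≤ n) (p : ℕ) (hp : p.Prime) (hpn : p ∣ n) :
    b n ≡ b (n / p) [ZMOD (p : ℤ) ^ (n.factorization p)] := by
  set k := n.factorization p with hk
  have hk1 : 1 ≤ k := hp.factorization_pos_of_dvd (by omega) hpn
  set m := n / p^k with hm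
  have hm0 : m ≠ 0 := (Nat.ordCompl_pos p (show n ≠ 0 by omega)).ne'
  have hn2 : n = m * p^k := by
    rw [hm, hk]
    rw [mul_comm]
    exact (Nat.ordProj_mul_ordCompl_eq_self n p).symm
  have hnp : n / p = m * p^(k-1) := by
    rw [hn2, show p^k = p^(k-1)*p from by rw [← pow_succ]; congr 1; omega, ← mul_assoc,
      Nat.mul_div_cancel _ hp.pos]
  set M := m * p^(k-1) with hMdef
  haveI : NeZero M := ⟨Nat.mul_ne_zero hm0 (pow_ne_zero _ hp.ne_zero)⟩
  haveI : NeZero (M*p) := ⟨Nat.mul_ne_zero (NeZero.ne M) hp.ne_zero⟩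
  have hMp : m * p^k = M * p := by
    rw [hMdef, mul_assoc, ← pow_succ]
    congr 2
    omega
  -- express b n, b (n/p)
  have hbn : b n = PS f (M*p) 1 (NeZero.ne _) := by
    rw [hb n hn, trace_eq_PS f n (by omega)]
    exact PS_congr f n (M*p) 1 (by rw [hn2, hMp]) _ _
  have hbnp : b (n/p) = PS f M 1 (NeZero.ne _) := by
    have h1 : 1 ≤ n / p := Nat.one_le_div_iff hp.pos |>.mpr (Nat.le_of_dvd (by omega) hpn)
    rw [hb _ h1, trace_eq_PS f (n/p) (by omega)]
    exact PS_congr f (n/p) M 1 hnp _ _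
  -- piece 1 : level with g = id
  have hlev := level f m p k hm0 hp hk1 M hMdef (fun x => x) 1 (fun a => one_dvd _)
  rw [one_mul] at hlev
  have hs1 : (∑ v : ZMod (M*p) → Fin r, cyc f (M*p) v) = PS f (M*p) 1 (NeZero.ne _) := by
    unfold PS; simp
  have hs2 : (∑ u : ZMod M → Fin r, (cyc f M u)^p) = PS f M p (NeZero.ne _) := by
    unfold PS; rfl
  rw [hs1, hs2] at hlev
  -- piece 2 : Cstep with j = k-1, s = 1, t = 1
  have hC := Cstep f m p hm0 hp (k-1) 1 1 (le_refl 1)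
  rw [show (k-1) + 1 = k from by omega] at hC
  rw [show p^1*1 = p from by ring, show p^(1-1)*1 = 1 from by norm_num] at hC
  -- hC : p^k ∣ PS f (m*p^(k-1)) p - PS f (m*p^(k-1)) 1  (with m*p^(k-1) = M)
  have hdvd : (p:ℤ)^k ∣ b n - b (n/p) := by
    rw [hbn, hbnp]
    have : PS f (M*p) 1 (NeZero.ne _) - PS f M 1 (NeZero.ne _)
        = (PS f (M*p) 1 (NeZero.ne _) - PS f M p (NeZero.ne _))
          + (PS f M p (NeZero.ne _) - PS f M 1 (NeZero.ne _)) := by ring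
    rw [this]
    exact dvd_add hlev hC
  have := Int.modEq_iff_dvd.mpr hdvd
  exact this.symm

end StmtEight

theorem stmt_8 (r : ℕ) (f : Matrix (Fin r) (Fin r) ℤ)
    (b : ℕ → ℤ) (hb : ∀ n : ℕ, 1 ≤ n → b n = (f ^ n).trace)
    (n : ℕ) (hn : 1 ≤ n) (p : ℕ) (hp : p.Prime) (hpn : p ∣ n) :
    b n ≡ b (n / p) [ZMOD (p : ℤ) ^ (n.factorization p)] := by
  exact StmtEight.main r f b hb n hn p hp hpn
end

section
/- Let x : ℕ → ℚ be a sequence (indexed from 1). For each n ≥ 1 define a_n ∈ ℚ by (−1)^n a_n = the coefficient of t^n in the finite product ∏_{i=1}^{n} (1 − x_i t^i). Then every a_n is an integer if and only if every x_n is an integer. -/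
open Polynomial in
theorem stmt_11 (x : ℕ → ℚ) (a : ℕ → ℚ)
    (ha : ∀ n : ℕ, 1 ≤ n →
      (∏ i ∈ Finset.Icc 1 n, (1 - C (x i) * X ^ i)).coeff n = (-1) ^ n * a n) :
    (∀ n : ℕ, 1 ≤ n → ∃ z : ℤ, a n = (z : ℚ)) ↔ (∀ n : ℕ, 1 ≤ n → ∃ z : ℤ, x n = (z : ℚ)) := by
  have key : ∀ (s : Finset ℕ), (∀ i ∈ s, ∃ z : ℤ, x i = (z : ℚ)) → ∀ k,
      ∃ z : ℤ, (∏ i ∈ s, (1 - C (x i) * X ^ i)).coeff k = (z : ℚ) := by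
    intro s hs k
    have hmem : (∏ i ∈ s, (1 - C (x i) * X ^ i)) ∈ (mapRingHom (Int.castRingHom ℚ)).range := by
      refine Subring.prod_mem _ fun i hi => ?_
      obtain ⟨z, hz⟩ := hs i hi
      refine ⟨1 - C z * X ^ i, ?_⟩
      simp [hz]
    obtain ⟨q, hq⟩ := hmem
    refine ⟨q.coeff k, ?_⟩
    rw [← hq]
    simp [coe_mapRingHom, coeff_map]
  have const1 : ∀ m : ℕ, (∏ i ∈ Finset.Icc 1 m, (1 - C (x i) * X ^ i)).coeff 0 = 1 := by
    intro m
    rw [coeff_zero_eq_eval_zero, eval_prod]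
    refine Finset.prod_eq_one fun i hi => ?_
    have h1 : 1 ≤ i := (Finset.mem_Icc.mp hi).1
    simp [zero_pow (by omega : i ≠ 0)]
  have split : ∀ n : ℕ, 1 ≤ n →
      (∏ i ∈ Finset.Icc 1 n, (1 - C (x i) * X ^ i)).coeff n =
      (∏ i ∈ Finset.Icc 1 (n - 1), (1 - C (x i) * X ^ i)).coeff n - x n := by
    intro n hn
    have hins : Finset.Icc 1 n = insert n (Finset.Icc 1 (n - 1)) := by
      ext i; simp [Finset.mem_Icc]; omega
    rw [hins, Finset.prod_insert (by simp [Finset.mem_Icc]; omega)]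
    set P := ∏ i ∈ Finset.Icc 1 (n - 1), (1 - C (x i) * X ^ i) with hP
    have hr : (1 - C (x n) * X ^ n) * P = P - C (x n) * (X ^ n * P) := by ring
    rw [hr, coeff_sub, coeff_C_mul]
    have hx : (X ^ n * P).coeff n = P.coeff 0 := by
      have := coeff_X_pow_mul P n 0
      simpa using this
    rw [hx, hP, const1]
    ring
  constructor
  · intro hA n hn
    induction n using Nat.strong_induction_on with
    | _ n ih =>
      have hprev : ∀ i ∈ Finset.Icc 1 (n - 1), ∃ z : ℤ, x i = (z : ℚ) := by
        intro i hi
        have := Finset.mem_Icc.mp hi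
        exact ih i (by omega) (by omega)
      obtain ⟨z1, hz1⟩ := key _ hprev n
      obtain ⟨z2, hz2⟩ := hA n hn
      have h := split n hn
      rw [ha n hn, hz1, hz2] at h
      refine ⟨z1 - (-1) ^ n * z2, ?_⟩
      push_cast
      linarith [h]
  · intro hX n hn
    obtain ⟨z, hz⟩ := key (Finset.Icc 1 n) (fun i hi => hX i (Finset.mem_Icc.mp hi).1) n
    rw [ha n hn] at hz
    refine ⟨(-1) ^ n * z, ?_⟩
    have h2 : a n = (-1:ℚ) ^ n * ((-1) ^ n * a n) := by
      rw [← mul_assoc, ← mul_pow]; simp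
    rw [h2, hz]
    push_cast
    ring
end

section
/- Let x : ℕ → ℤ (indexed from 1), and for n ≥ 1 set b_n = ∑_{d ∣ n} d · x_d^(n/d). For each N ≥ 1, let P_N = ∏_{i=1}^{N} (1 − x_i t^i) ∈ ℤ[t]. Then for every n with 1 ≤ n ≤ N, the coefficient of t^n in −t · P_N′ equals the coefficient of t^n in P_N · (∑_{m=1}^{N} b_m t^m), where P_N′ denotes the formal derivative of P_N. -/
open Polynomial Finset

private lemma geo_tel (a : ℤ) (i N : ℕ) :
    (1 - C a * X ^ i) * (∑ k ∈ range N, C (a ^ (k + 1)) * X ^ (i * (k + 1))) =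
      C a * X ^ i - C (a ^ (N + 1)) * X ^ (i * (N + 1)) := by
  have h := Finset.sum_range_sub' (f := fun k => C (a ^ (k + 1)) * (X : ℤ[X]) ^ (i * (k + 1))) N
  calc (1 - C a * X ^ i) * (∑ k ∈ range N, C (a ^ (k + 1)) * X ^ (i * (k + 1)))
      = ∑ k ∈ range N, (C (a ^ (k + 1)) * X ^ (i * (k + 1))
          - C (a ^ (k + 1 + 1)) * X ^ (i * (k + 1 + 1))) := by
        rw [sub_mul, one_mul, Finset.mul_sum, ← Finset.sum_sub_distrib]
        refine Finset.sum_congr rfl fun k _ => ?_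
        congr 1
        rw [mul_mul_mul_comm, ← C_mul, ← pow_add]
        congr 2
        · ring
        · ring
    _ = C (a ^ (0 + 1)) * X ^ (i * (0 + 1)) - C (a ^ (N + 1)) * X ^ (i * (N + 1)) := h
    _ = _ := by norm_num

open Polynomial in
theorem stmt_12 (x : ℕ → ℤ) (b : ℕ → ℤ)
    (hb : ∀ n : ℕ, 1 ≤ n → b n = ∑ d ∈ n.divisors, (d : ℤ) * x d ^ (n / d))
    (N : ℕ) (hN : 1 ≤ N) :
    ∀ n : ℕ, 1 ≤ n → n ≤ N →
      (-(X * derivative (∏ i ∈ Finset.Icc 1 N, (1 - C (x i) * X ^ i)))).coeff n =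
      ((∏ i ∈ Finset.Icc 1 N, (1 - C (x i) * X ^ i)) *
        ∑ m ∈ Finset.Icc 1 N, C (b m) * X ^ m).coeff n := by
  set P : ℤ[X] := ∏ i ∈ Icc 1 N, (1 - C (x i) * X ^ i) with hP
  set B : ℤ[X] := ∑ m ∈ Icc 1 N, C (b m) * X ^ m with hB
  set T : ℕ → ℤ[X] := fun i => C (i : ℤ) * ∑ k ∈ range N, C (x i ^ (k + 1)) * X ^ (i * (k + 1))
    with hT
  have hderiv : derivative P = ∑ i ∈ Icc 1 N,
      (∏ j ∈ (Icc 1 N).erase i, (1 - C (x j) * X ^ j)) * derivative (1 - C (x i) * X ^ i) :=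
    derivative_prod
  -- Step 1: derivative sum form
  have hder : -(X * derivative P) = ∑ i ∈ Icc 1 N,
      (∏ j ∈ (Icc 1 N).erase i, (1 - C (x j) * X ^ j)) * (C ((i : ℤ) * x i) * X ^ i) := by
    rw [hderiv, Finset.mul_sum, neg_eq_iff_eq_neg, ← Finset.sum_neg_distrib]
    refine Finset.sum_congr rfl fun i hi => ?_
    have hi1 : 1 ≤ i := (Finset.mem_Icc.mp hi).1
    have h1 : derivative (1 - C (x i) * X ^ i) = -(C (x i * i) * X ^ (i - 1)) := by
      rw [derivative_sub, derivative_one, derivative_C_mul_X_pow]; ring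
    have hx : (X : ℤ[X]) * X ^ (i - 1) = X ^ i := by
      rw [← pow_succ']; congr 1; omega
    rw [h1]
    rw [show (X : ℤ[X]) * ((∏ j ∈ (Icc 1 N).erase i, (1 - C (x j) * X ^ j)) *
        -(C (x i * i) * X ^ (i - 1)))
      = -((∏ j ∈ (Icc 1 N).erase i, (1 - C (x j) * X ^ j)) *
          (C (x i * i) * (X * X ^ (i - 1)))) by ring, hx]
    rw [mul_comm (x i) ((i : ℤ))]
  -- Step 2: per-term congruence
  have hterm : ∀ i ∈ Icc 1 N, X ^ (N + 1) ∣
      (∏ j ∈ (Icc 1 N).erase i, (1 - C (x j) * X ^ j)) * (C ((i : ℤ) * x i) * X ^ i)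
        - P * T i := by
    intro i hi
    have hi1 : 1 ≤ i := (Finset.mem_Icc.mp hi).1
    have hgeo := geo_tel (x i) i N
    have key : C ((i : ℤ) * x i) * X ^ i
        = (1 - C (x i) * X ^ i) * T i + C ((i : ℤ) * x i ^ (N + 1)) * X ^ (i * (N + 1)) := by
      rw [hT]
      simp only []
      rw [mul_left_comm, hgeo, C_mul, C_mul]
      ring
    rw [key, mul_add]
    have hPe : (∏ j ∈ (Icc 1 N).erase i, (1 - C (x j) * X ^ j))
        * ((1 - C (x i) * X ^ i) * T i) = P * T i := by
      rw [hP, ← Finset.mul_prod_erase _ _ hi]; ring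
    rw [hPe, add_sub_cancel_left]
    refine Dvd.dvd.mul_left ?_ _
    refine Dvd.dvd.mul_left ?_ _
    exact pow_dvd_pow X (by nlinarith)
  -- Step 3: sum of T's agrees with B up to degree N
  have hsumT : X ^ (N + 1) ∣ (∑ i ∈ Icc 1 N, T i) - B := by
    rw [X_pow_dvd_iff]
    intro d hd
    rw [coeff_sub, sub_eq_zero]
    have hL : (∑ i ∈ Icc 1 N, T i).coeff d
        = ∑ i ∈ Icc 1 N, ∑ k ∈ range N,
            (if i * (k + 1) = d then (i : ℤ) * x i ^ (k + 1) else 0) := by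
      rw [finset_sum_coeff]
      refine Finset.sum_congr rfl fun i hi => ?_
      rw [hT]
      simp only [coeff_C_mul, finset_sum_coeff, coeff_X_pow, Finset.mul_sum, mul_ite, mul_one,
        mul_zero]
      refine Finset.sum_congr rfl fun k hk => ?_
      by_cases h : i * (k + 1) = d
      · rw [if_pos h.symm, if_pos h]
      · rw [if_neg (fun hh => h hh.symm), if_neg h]
    have hR : B.coeff d = if d ∈ Icc 1 N then b d else 0 := by
      rw [hB, finset_sum_coeff]
      simp only [coeff_C_mul, coeff_X_pow, mul_ite, mul_one, mul_zero]
      rw [Finset.sum_ite_eq (Icc 1 N) d (fun m => b m)]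
    rw [hL, hR]
    rcases Nat.eq_zero_or_pos d with hd0 | hd1
    · subst hd0
      rw [if_neg (by simp)]
      refine Finset.sum_eq_zero fun i hi => Finset.sum_eq_zero fun k hk => ?_
      have hi1 : 1 ≤ i := (Finset.mem_Icc.mp hi).1
      rw [if_neg (by positivity)]
    · have hdN : d ≤ N := by omega
      rw [if_pos (Finset.mem_Icc.mpr ⟨hd1, hdN⟩), hb d hd1,
        ← Nat.sum_divisorsAntidiagonal (fun a c => (a : ℤ) * x a ^ c),
        ← Finset.sum_product', ← Finset.sum_filter]
      refine Finset.sum_nbij' (fun p => (p.1, p.2 + 1)) (fun p => (p.1, p.2 - 1)) ?_ ?_ ?_ ?_ ?_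
      · rintro ⟨i, k⟩ hik
        simp only [Finset.mem_filter, Finset.mem_product, Finset.mem_Icc, Finset.mem_range] at hik
        rw [Nat.mem_divisorsAntidiagonal]
        exact ⟨hik.2, by omega⟩
      · rintro ⟨a, c⟩ hac
        rw [Nat.mem_divisorsAntidiagonal] at hac
        simp only [Finset.mem_filter, Finset.mem_product, Finset.mem_Icc, Finset.mem_range]
        obtain ⟨hac1, -⟩ := hac
        simp only at hac1
        have ha : 1 ≤ a := by
          by_contra h
          push_neg at h
          interval_cases a
          simp at hac1
          omega
        have hc : 1 ≤ c := by
          by_contra h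
          push_neg at h
          interval_cases c
          simp at hac1
          omega
        refine ⟨⟨⟨ha, ?_⟩, ?_⟩, ?_⟩
        · calc a ≤ a * c := Nat.le_mul_of_pos_right a hc
            _ = d := hac1
            _ ≤ N := hdN
        · have hcd : c ≤ d := by
            calc c ≤ a * c := Nat.le_mul_of_pos_left c ha
              _ = d := hac1
          omega
        · rw [Nat.sub_add_cancel hc]; exact hac1
      · rintro ⟨i, k⟩ _; simp
      · rintro ⟨a, c⟩ hac
        rw [Nat.mem_divisorsAntidiagonal] at hac
        obtain ⟨hac1, hd0⟩ := hac
        simp only at hac1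
        have hc : 1 ≤ c := by
          by_contra h
          push_neg at h
          interval_cases c
          simp at hac1
          omega
        show (a, c - 1 + 1) = (a, c)
        have hcc : c - 1 + 1 = c := by omega
        rw [hcc]
      · rintro ⟨i, k⟩ _; rfl
  -- Assemble
  intro n hn hnN
  have hdvd : X ^ (N + 1) ∣ (-(X * derivative P) - P * B) := by
    have hsplit : -(X * derivative P) - P * B
        = (∑ i ∈ Icc 1 N,
            ((∏ j ∈ (Icc 1 N).erase i, (1 - C (x j) * X ^ j)) * (C ((i : ℤ) * x i) * X ^ i)
              - P * T i))
          + P * ((∑ i ∈ Icc 1 N, T i) - B) := by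
      rw [hder, Finset.sum_sub_distrib, ← Finset.mul_sum, mul_sub]
      ring
    rw [hsplit]
    exact dvd_add (Finset.dvd_sum hterm) (Dvd.dvd.mul_left hsumT _)
  have h0 := (X_pow_dvd_iff.mp hdvd) n (by omega)
  rw [coeff_sub, sub_eq_zero] at h0
  exact h0
end

section
/- Let x : ℕ → ℤ (indexed from 1) and set b_n = ∑_{d ∣ n} d · x_d^(n/d) for n ≥ 1. Let p be a prime and n = m·p^k with k ≥ 1 and p ∤ m. Then p^k divides b_n − b_(n/p) − n·x_n. -/
theorem stmt_13 (x : ℕ → ℤ) (b : ℕ → ℤ)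
    (hb : ∀ n : ℕ, 1 ≤ n → b n = ∑ d ∈ n.divisors, (d : ℤ) * x d ^ (n / d))
    (p : ℕ) (hp : p.Prime) (m k n : ℕ) (hk : 1 ≤ k) (hm : ¬ p ∣ m)
    (hn : n = m * p ^ k) :
    (p : ℤ) ^ k ∣ b n - b (n / p) - (n : ℤ) * x n := by
  have hm0 : m ≠ 0 := by rintro rfl; exact hm (dvd_zero p)
  have hp0 : p ≠ 0 := hp.ne_zero
  have hn0 : n ≠ 0 := by simp [hn, hm0, hp0]
  -- N = n / p
  set N := m * p ^ (k - 1) with hN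
  have hpN : p * N = n := by
    rw [hn, hN]; rw [mul_left_comm, ← pow_succ']
    congr 2; omega
  have hNdiv : n / p = N := by rw [← hpN, Nat.mul_div_cancel_left _ hp.pos]
  have hN0 : N ≠ 0 := by simp [hN, hm0, hp0]
  -- factorization facts
  have hfn : n.factorization p = k := by
    rw [hn, Nat.factorization_mul hm0 (pow_ne_zero k hp0),
      Nat.Prime.factorization_pow hp]
    simp [Nat.factorization_eq_zero_of_not_dvd hm]
  have hfN : N.factorization p = k - 1 := by
    rw [hN, Nat.factorization_mul hm0 (pow_ne_zero _ hp0),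
      Nat.Prime.factorization_pow hp]
    simp [Nat.factorization_eq_zero_of_not_dvd hm]
  rw [hb n (by omega), hNdiv, hb N (by omega)]
  have hsub : N.divisors ⊆ n.divisors :=
    Nat.divisors_subset_of_dvd hn0 ⟨p, by rw [mul_comm]; exact hpN.symm⟩
  rw [← Finset.sum_sdiff hsub]
  have key : (∑ d ∈ n.divisors \ N.divisors, (d : ℤ) * x d ^ (n / d)) +
      (∑ d ∈ N.divisors, ((d : ℤ) * x d ^ (n / d) - (d : ℤ) * x d ^ (N / d)))
      - (n : ℤ) * x n =
      (∑ d ∈ n.divisors \ N.divisors, (d : ℤ) * x d ^ (n / d)) +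
      (∑ d ∈ N.divisors, (d : ℤ) * x d ^ (n / d)) -
      (∑ d ∈ N.divisors, (d : ℤ) * x d ^ (N / d)) - (n : ℤ) * x n := by
    rw [Finset.sum_sub_distrib]; ring
  rw [← key]
  have hpk_n : (p : ℤ) ^ k ∣ (n : ℤ) := by
    exact_mod_cast Int.natCast_dvd_natCast.mpr ⟨m, by rw [hn, mul_comm]⟩
  refine dvd_sub (dvd_add ?_ ?_) (hpk_n.mul_right _)
  · -- terms with p^k ∣ d
    refine Finset.dvd_sum fun d hd => ?_
    simp only [Finset.mem_sdiff, Nat.mem_divisors] at hd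
    obtain ⟨⟨hdn, -⟩, hdN⟩ := hd
    have hd0 : d ≠ 0 := fun h => hn0 (by simpa [h] using hdn)
    have hj : k ≤ d.factorization p := by
      by_contra hlt
      push_neg at hlt
      apply hdN
      constructor
      · -- d ∣ N
        have h1 : p ^ d.factorization p ∣ p ^ (k - 1) :=
          pow_dvd_pow p (by omega)
        have h2 : (d / p ^ d.factorization p) ∣ m := by
          have := Nat.ordCompl_dvd_ordCompl_of_dvd hdn p
          rwa [hfn, hn, mul_comm m, Nat.mul_div_cancel_left _ (Nat.pos_of_ne_zero (pow_ne_zero k hp0))] at this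
        have hcop : Nat.Coprime (p ^ d.factorization p) (d / p ^ d.factorization p) :=
          Nat.coprime_ordCompl hp hd0 |>.pow_left _ |>.symm.symm
        calc d = p ^ d.factorization p * (d / p ^ d.factorization p) :=
              (Nat.ordProj_mul_ordCompl_eq_self d p).symm
          _ ∣ p ^ (k-1) * m := mul_dvd_mul h1 h2
          _ = N := by rw [hN, mul_comm]
      · exact hN0
    have : (p : ℤ) ^ k ∣ (d : ℤ) := by
      have := pow_dvd_pow p hj
      have h2 : p ^ k ∣ d := this.trans (Nat.ordProj_dvd d p)
      exact_mod_cast Int.natCast_dvd_natCast.mpr h2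
    exact this.mul_right _
  · -- terms d ∣ N
    refine Finset.dvd_sum fun d hd => ?_
    rw [Nat.mem_divisors] at hd
    obtain ⟨hdN, -⟩ := hd
    have hd0 : d ≠ 0 := fun h => hN0 (by simpa [h] using hdN)
    set j := d.factorization p with hj
    have hjle : j ≤ k - 1 := by
      rw [← hfN]
      exact (Nat.factorization_le_iff_dvd hd0 hN0).mpr hdN p
    set e := N / d with he
    have hNe : N = d * e := (Nat.div_mul_cancel hdN).symm.trans (mul_comm _ _)
    have he0 : e ≠ 0 := fun h => hN0 (by rw [hNe, h, mul_zero])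
    have hfe : e.factorization p = k - 1 - j := by
      have := Nat.factorization_mul hd0 he0
      have h2 : N.factorization p = j + e.factorization p := by
        rw [hNe, this]; simp [hj]
      omega
    have hnd : n / d = p * e := by
      rw [← hpN, he, Nat.mul_div_assoc p hdN]
    set t := e / p ^ (k - 1 - j) with ht
    have het : e = p ^ (k - 1 - j) * t := by
      rw [ht, ← hfe]; exact (Nat.ordProj_mul_ordCompl_eq_self e p).symm
    set a := x d ^ t with ha
    have hxe : x d ^ e = a ^ p ^ (k - 1 - j) := by
      rw [ha, ← pow_mul, het, mul_comm]
    have hxpe : x d ^ (p * e) = (a ^ p) ^ p ^ (k - 1 - j) := by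
      rw [ha, ← pow_mul, ← pow_mul, het]; ring_nf
    have hfermat : (p : ℤ) ∣ a ^ p - a := by
      haveI : Fact p.Prime := ⟨hp⟩
      have : ((a ^ p - a : ℤ) : ZMod p) = 0 := by
        push_cast
        rw [ZMod.pow_card]
        ring
      exact (ZMod.intCast_zmod_eq_zero_iff_dvd _ p).mp this
    have hdiff : (p : ℤ) ^ (k - j) ∣ x d ^ (p * e) - x d ^ e := by
      rw [hxpe, hxe]
      have := dvd_sub_pow_of_dvd_sub hfermat (k - 1 - j)
      rwa [show k - 1 - j + 1 = k - j by omega] at this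
    have hdj : (p : ℤ) ^ j ∣ (d : ℤ) := by
      exact_mod_cast Int.natCast_dvd_natCast.mpr (Nat.ordProj_dvd d p)
    have : (d : ℤ) * x d ^ (n / d) - (d : ℤ) * x d ^ (N / d)
        = (d : ℤ) * (x d ^ (p * e) - x d ^ e) := by
      rw [hnd, ← he]; ring
    rw [this, show k = j + (k - j) by omega, pow_add]
    exact mul_dvd_mul hdj hdiff
end

section
/- Let b : ℕ → ℤ (indexed from 1). There exists a sequence of integers x : ℕ → ℤ such that b_n = ∑_{d ∣ n} d · x_d^(n/d) for all n ≥ 1 if and only if for every n ≥ 1 and every prime p dividing n, b_n ≡ b_(n/p) (mod p^k), where k is the exponent of p in n. -/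
-- Fermat: p ∣ x^p - x
lemma fermat_dvd (p : ℕ) (hp : p.Prime) (x : ℤ) : (p : ℤ) ∣ x ^ p - x := by
  haveI : Fact p.Prime := ⟨hp⟩
  have := ZMod.pow_card (x : ZMod p)
  have : ((x ^ p - x : ℤ) : ZMod p) = 0 := by push_cast [this]; ring
  exact_mod_cast (ZMod.intCast_zmod_eq_zero_iff_dvd _ _).mp this

-- p^(j+1) ∣ x^(p^(j+1)*m) - x^(p^j*m)
lemma pow_congr_step (p : ℕ) (hp : p.Prime) (x : ℤ) (j m : ℕ) :
    (p : ℤ) ^ (j + 1) ∣ x ^ (p ^ (j + 1) * m) - x ^ (p ^ j * m) := by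
  have h2 := dvd_sub_pow_of_dvd_sub (fermat_dvd p hp x) j
  have h3 : (x ^ p) ^ p ^ j - x ^ p ^ j ∣ ((x ^ p) ^ p ^ j) ^ m - (x ^ p ^ j) ^ m :=
    sub_dvd_pow_sub_pow _ _ m
  have e1 : ((x ^ p) ^ p ^ j) ^ m = x ^ (p ^ (j + 1) * m) := by
    rw [← pow_mul, ← pow_mul, pow_succ]; ring_nf
  have e2 : (x ^ p ^ j) ^ m = x ^ (p ^ j * m) := by rw [← pow_mul]
  rw [e1, e2] at h3
  exact h2.trans h3

-- Claim 1: d ∣ n, ¬ d ∣ n/p → p^k ∣ d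
lemma claim1 (n p d : ℕ) (hn : n ≠ 0) (hp : p.Prime) (hpn : p ∣ n)
    (hd : d ∣ n) (hnd : ¬ d ∣ n / p) : p ^ n.factorization p ∣ d := by
  have hd0 : d ≠ 0 := fun h => hn (by simpa [h] using hd)
  have hnp0 : n / p ≠ 0 := Nat.div_ne_zero_iff.mpr ⟨hp.pos.ne', Nat.le_of_dvd (Nat.pos_of_ne_zero hn) hpn⟩
  by_contra hcon
  rw [hp.pow_dvd_iff_le_factorization hd0] at hcon
  push_neg at hcon
  apply hnd
  rw [← Nat.factorization_le_iff_dvd hd0 hnp0, Nat.factorization_div hpn, hp.factorization,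
    Finsupp.le_def]
  intro q
  have hq : d.factorization q ≤ n.factorization q :=
    Finsupp.le_def.mp ((Nat.factorization_le_iff_dvd hd0 hn).mpr hd) q
  simp only [Finsupp.tsub_apply, Finsupp.single_apply]
  rcases eq_or_ne p q with rfl | hne
  · rw [if_pos rfl]; omega
  · rw [if_neg hne]; omega

-- Claim 2: e ∣ n/p → p^k ∣ e * (x^(n/e) - x^((n/p)/e))
lemma claim2 (n p e : ℕ) (hn : n ≠ 0) (hp : p.Prime) (hpn : p ∣ n)
    (he : e ∣ n / p) (x : ℤ) :
    (p : ℤ) ^ n.factorization p ∣ (e : ℤ) * (x ^ (n / e) - x ^ (n / p / e)) := by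
  set k := n.factorization p with hk
  have hnp0 : n / p ≠ 0 :=
    Nat.div_ne_zero_iff.mpr ⟨hp.pos.ne', Nat.le_of_dvd (Nat.pos_of_ne_zero hn) hpn⟩
  have he0 : e ≠ 0 := fun h => hnp0 (by simpa [h] using he)
  have hk1 : 1 ≤ k := (hp.pow_dvd_iff_le_factorization hn).mp (by simpa using hpn)
  set i := e.factorization p with hi
  have hen : e ∣ n := he.trans (Nat.div_dvd_of_dvd hpn)
  -- i ≤ k - 1
  have hik : i ≤ k - 1 := by
    have h1 : e.factorization p ≤ (n / p).factorization p :=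
      Finsupp.le_def.mp ((Nat.factorization_le_iff_dvd he0 hnp0).mpr he) p
    rw [Nat.factorization_div hpn, hp.factorization] at h1
    simpa [Finsupp.tsub_apply] using h1
  -- valuation of n/e
  have hne0 : n / e ≠ 0 :=
    Nat.div_ne_zero_iff.mpr ⟨he0, Nat.le_of_dvd (Nat.pos_of_ne_zero hn) hen⟩
  have hie : n.factorization p = i + e.factorization p + (k - i) - i := by omega
  have hval : (n / e).factorization p = k - i := by
    rw [Nat.factorization_div hen, Finsupp.tsub_apply]
  set a := n / e with ha
  set j := k - i - 1 with hj
  have hji : j + 1 = k - i := by omega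
  set m := a / p ^ (j + 1) with hm
  have ham : a = p ^ (j + 1) * m := by
    rw [hm, hji, ← hval]; exact (Nat.ordProj_mul_ordCompl_eq_self a p).symm
  have hap : n / p / e = p ^ j * m := by
    have : n / p / e = a / p := by
      rw [ha, Nat.div_div_eq_div_mul, Nat.div_div_eq_div_mul, Nat.mul_comm]
    rw [this, ham, pow_succ]
    rw [Nat.mul_comm (p ^ j) p, Nat.mul_assoc, Nat.mul_div_cancel_left _ hp.pos]
  have hdvd1 : (p : ℤ) ^ i ∣ (e : ℤ) := by
    exact_mod_cast Int.natCast_dvd_natCast.mpr (Nat.ordProj_dvd e p)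
  have hdvd2 : (p : ℤ) ^ (j + 1) ∣ x ^ a - x ^ (n / p / e) := by
    rw [hap, ham]; exact pow_congr_step p hp x j m
  have h := mul_dvd_mul hdvd1 hdvd2
  have hsum : i + (j + 1) = k := by omega
  rw [← pow_add, hsum] at h
  exact h

-- Key lemma: divisor-sum congruence
lemma sum_congr_key (x : ℕ → ℤ) (n p : ℕ) (hn : n ≠ 0) (hp : p.Prime) (hpn : p ∣ n) :
    (p : ℤ) ^ n.factorization p ∣
      (∑ d ∈ n.divisors, (d : ℤ) * x d ^ (n / d)) -
      ∑ d ∈ (n / p).divisors, (d : ℤ) * x d ^ (n / p / d) := by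
  have hnp0 : n / p ≠ 0 :=
    Nat.div_ne_zero_iff.mpr ⟨hp.pos.ne', Nat.le_of_dvd (Nat.pos_of_ne_zero hn) hpn⟩
  have hsub : (n / p).divisors ⊆ n.divisors :=
    Nat.divisors_subset_of_dvd hn (Nat.div_dvd_of_dvd hpn)
  have hrw : ∑ d ∈ (n / p).divisors, (d : ℤ) * x d ^ (n / p / d) =
      ∑ d ∈ n.divisors, (if d ∈ (n / p).divisors then (d : ℤ) * x d ^ (n / p / d) else 0) := by
    rw [Finset.sum_ite_mem, Finset.inter_eq_right.mpr hsub]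
  rw [hrw, ← Finset.sum_sub_distrib]
  apply Finset.dvd_sum
  intro d hd
  have hdn : d ∣ n := (Nat.mem_divisors.mp hd).1
  by_cases hdt : d ∈ (n / p).divisors
  · rw [if_pos hdt, ← mul_sub]
    exact claim2 n p d hn hp hpn (Nat.mem_divisors.mp hdt).1 (x d)
  · rw [if_neg hdt, sub_zero]
    have hnd : ¬ d ∣ n / p := fun h => hdt (Nat.mem_divisors.mpr ⟨h, hnp0⟩)
    have := claim1 n p d hn hp hpn hdn hnd
    exact dvd_mul_of_dvd_left (by exact_mod_cast Int.natCast_dvd_natCast.mpr this) _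

-- integer divisibility from prime-power divisibility
lemma int_dvd_of_prime_pow (n : ℕ) (z : ℤ) (hn : n ≠ 0)
    (h : ∀ p : ℕ, p.Prime → p ∣ n → (p : ℤ) ^ n.factorization p ∣ z) : (n : ℤ) ∣ z := by
  have : n ∣ z.natAbs := by
    rw [Nat.dvd_iff_prime_pow_dvd_dvd]
    intro p k hp hpk
    rcases Nat.eq_zero_or_pos k with rfl | hk
    · simp
    have hpn : p ∣ n := (dvd_pow_self p hk.ne').trans hpk
    have hle : k ≤ n.factorization p := (hp.pow_dvd_iff_le_factorization hn).mp hpk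
    have h2 : (p : ℤ) ^ n.factorization p ∣ z := h p hp hpn
    have h3 : ((p ^ n.factorization p : ℕ) : ℤ) ∣ z := by push_cast; exact h2
    have h4 : (p ^ n.factorization p : ℕ) ∣ z.natAbs :=
      Int.natCast_dvd_natCast.mp (Int.dvd_natAbs.mpr h3)
    exact (pow_dvd_pow p hle).trans h4
  exact Int.dvd_natAbs.mp (Int.natCast_dvd_natCast.mpr this)

noncomputable def wittX (b : ℕ → ℤ) : ℕ → ℤ
  | n => (b n - ∑ d ∈ (n.divisors.erase n).attach,
      ((d : ℕ) : ℤ) * wittX b d ^ (n / (d : ℕ))) / n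
  termination_by n => n
  decreasing_by
    rename_i hd
    have h1 := Finset.mem_erase.mp d.2
    have h2 := Nat.mem_divisors.mp h1.2
    exact lt_of_le_of_ne (Nat.le_of_dvd (Nat.pos_of_ne_zero h2.2) h2.1) h1.1

lemma wittX_eq (b : ℕ → ℤ) (n : ℕ) :
    wittX b n = (b n - ∑ d ∈ n.divisors.erase n, (d : ℤ) * wittX b d ^ (n / d)) / n := by
  rw [wittX,
    Finset.sum_attach (n.divisors.erase n) (fun d => (d : ℤ) * wittX b d ^ (n / d))]

lemma main_rec (b : ℕ → ℤ)
    (H : ∀ n : ℕ, 1 ≤ n → ∀ p : ℕ, p.Prime → p ∣ n →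
      b n ≡ b (n / p) [ZMOD (p : ℤ) ^ (n.factorization p)]) :
    ∀ n : ℕ, 1 ≤ n → b n = ∑ d ∈ n.divisors, (d : ℤ) * wittX b d ^ (n / d) := by
  intro n
  induction n using Nat.strong_induction_on with
  | _ n IH =>
  intro hn1
  have hn0 : n ≠ 0 := by omega
  set S := ∑ d ∈ n.divisors.erase n, (d : ℤ) * wittX b d ^ (n / d) with hS
  have hmem : n ∈ n.divisors := Nat.mem_divisors_self n hn0
  have hsum : ∑ d ∈ n.divisors, (d : ℤ) * wittX b d ^ (n / d)
      = S + (n : ℤ) * wittX b n ^ 1 := by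
    rw [← Finset.sum_erase_add _ _ hmem, Nat.div_self (Nat.pos_of_ne_zero hn0)]
  have hdvd : (n : ℤ) ∣ b n - S := by
    apply int_dvd_of_prime_pow n _ hn0
    intro p hp hpn
    have hnp1 : 1 ≤ n / p := Nat.one_le_div_iff hp.pos |>.mpr (Nat.le_of_dvd (by omega) hpn)
    have hnplt : n / p < n := Nat.div_lt_self (by omega) hp.one_lt
    have h2 : b (n / p) = ∑ d ∈ (n / p).divisors, (d : ℤ) * wittX b d ^ (n / p / d) :=
      IH (n / p) hnplt hnp1
    have h1 : (p : ℤ) ^ n.factorization p ∣ b (n / p) - b n :=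
      Int.modEq_iff_dvd.mp (H n hn1 p hp hpn)
    have h3 := sum_congr_key (wittX b) n p hn0 hp hpn
    have h4 : (p : ℤ) ^ n.factorization p ∣ (n : ℤ) := by
      have := Nat.ordProj_dvd n p
      exact_mod_cast Int.natCast_dvd_natCast.mpr this
    have key : b n - S = -(b (n / p) - b n)
        - ((∑ d ∈ n.divisors, (d : ℤ) * wittX b d ^ (n / d))
            - ∑ d ∈ (n / p).divisors, (d : ℤ) * wittX b d ^ (n / p / d))
        + (n : ℤ) * wittX b n ^ 1 := by
      rw [← h2, hsum]; ring
    rw [key]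
    exact dvd_add (dvd_sub (dvd_neg.mpr h1) h3) (h4.mul_right _)
  rw [hsum, wittX_eq, ← hS, pow_one, Int.mul_ediv_cancel' hdvd]
  ring

theorem stmt_14 (b : ℕ → ℤ) :
    (∃ x : ℕ → ℤ, ∀ n : ℕ, 1 ≤ n → b n = ∑ d ∈ n.divisors, (d : ℤ) * x d ^ (n / d)) ↔
    (∀ n : ℕ, 1 ≤ n → ∀ p : ℕ, p.Prime → p ∣ n →
      b n ≡ b (n / p) [ZMOD (p : ℤ) ^ (n.factorization p)]) := by
  constructor
  · rintro ⟨x, hx⟩ n hn p hp hpn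
    have hn0 : n ≠ 0 := by omega
    have hnp1 : 1 ≤ n / p := Nat.one_le_div_iff hp.pos |>.mpr (Nat.le_of_dvd (by omega) hpn)
    rw [Int.modEq_iff_dvd, hx n hn, hx (n / p) hnp1]
    have h := sum_congr_key x n p hn0 hp hpn
    have : (∑ d ∈ (n / p).divisors, (d : ℤ) * x d ^ (n / p / d))
        - ∑ d ∈ n.divisors, (d : ℤ) * x d ^ (n / d)
        = -((∑ d ∈ n.divisors, (d : ℤ) * x d ^ (n / d))
            - ∑ d ∈ (n / p).divisors, (d : ℤ) * x d ^ (n / p / d)) := by ring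
    rw [this]
    exact dvd_neg.mpr h
  · intro H
    exact ⟨wittX b, main_rec b H⟩
end
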